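/- arXiv:2404.03530 — 4 statements merged into one kernel-verified Lean document; each statement's English description precedes it below -/
import Mathlib

section
/- Let H = {h_1,...,h_m} ⊂ R' = K[x_1,...,x_n,y] be homogeneous with R/⟨H^top⟩ Artinian and the sequence of top parts cryptographic semi-regular. Then for any homogenized graded monomial ordering ≺' on R', the maximal degree of the reduced Gröbner basis of ⟨H⟩ is at most max{d_reg(⟨H^top⟩), d̃_reg(⟨H⟩)}. -/
open MvPolynomial

namespace GBPaper

/-- The dimension of the degree-`d` homogeneous piece of `R/I`,
where `R = K[x_i : i ∈ σ]`. -/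
noncomputable def hilbertFn (K : Type*) [Field K] {σ : Type*}
    (I : Ideal (MvPolynomial σ K)) (d : ℕ) : ℕ :=
  Module.finrank K
    ((MvPolynomial.homogeneousSubmodule σ K d).map
      (Ideal.Quotient.mkₐ K I).toLinearMap)

/-- An ideal is homogeneous iff it contains all homogeneous components of its elements. -/
def IsHomogeneousIdeal {K : Type*} [Field K] {σ : Type*}
    (I : Ideal (MvPolynomial σ K)) : Prop :=
  ∀ f ∈ I, ∀ d : ℕ, MvPolynomial.homogeneousComponent d f ∈ I

/-- The degree of regularity: the least `d` with `R_d = I_d`. -/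
noncomputable def degReg (K : Type*) [Field K] {σ : Type*}
    (I : Ideal (MvPolynomial σ K)) : ℕ :=
  sInf {d : ℕ | ∀ f : MvPolynomial σ K, f.IsHomogeneous d → f ∈ I}

/-- The generalized degree of regularity: the least `d₀` from which on the Hilbert
function of `R/I` is constant. -/
noncomputable def gdegReg (K : Type*) [Field K] {σ : Type*}
    (I : Ideal (MvPolynomial σ K)) : ℕ :=
  sInf {d₀ : ℕ | ∀ d : ℕ, d₀ ≤ d → hilbertFn K I d = hilbertFn K I d₀}

/-- The leading monomial (leading exponent) of a polynomial with respect to a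
monomial order. -/
noncomputable def lm {K : Type*} [Field K] {σ : Type*} (m : MonomialOrder σ)
    (f : MvPolynomial σ K) : σ →₀ ℕ :=
  m.toSyn.symm (f.support.sup fun s => m.toSyn s)

/-- A monomial order is graded (degree-compatible) if it refines total degree. -/
def MonIsGraded {σ : Type*} (m : MonomialOrder σ) : Prop :=
  ∀ a b : σ →₀ ℕ, a.degree < b.degree → m.toSyn a < m.toSyn b

/-- `G` is the reduced Gröbner basis of `I` with respect to the monomial order `m`. -/
structure IsReducedGB {K : Type*} [Field K] {σ : Type*} (m : MonomialOrder σ)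
    (I : Ideal (MvPolynomial σ K)) (G : Finset (MvPolynomial σ K)) : Prop where
  subset : (G : Set (MvPolynomial σ K)) ⊆ I
  zero_not_mem : (0 : MvPolynomial σ K) ∉ G
  monic : ∀ g ∈ G, MvPolynomial.coeff (lm m g) g = 1
  isGB : ∀ f ∈ I, f ≠ 0 → ∃ g ∈ G, lm m g ≤ lm m f
  reduced : ∀ g ∈ G, ∀ g' ∈ G, g ≠ g' → ∀ s ∈ g.support, ¬ lm m g' ≤ s

/-- The degree reverse lexicographic order with `x_0 ≻ x_1 ≻ ⋯`. -/
def IsDegRevLex {n : ℕ} (m : MonomialOrder (Fin n)) : Prop :=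
  ∀ a b : Fin n →₀ ℕ, m.toSyn a < m.toSyn b ↔
    (a.degree < b.degree ∨
      (a.degree = b.degree ∧ ∃ i, b i < a i ∧ ∀ j, i < j → a j = b j))

/-- Restriction of an exponent vector on `n+1` variables to the first `n` variables. -/
noncomputable def restr {n : ℕ} (a : Fin (n + 1) →₀ ℕ) : Fin n →₀ ℕ :=
  Finsupp.equivFunOnFinite.symm fun i => a i.castSucc

/-- Extension of an exponent vector on `n` variables to `n+1` variables (with
`y`-exponent `0`). -/
noncomputable def extX {n : ℕ} (a : Fin n →₀ ℕ) : Fin (n + 1) →₀ ℕ :=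
  Finsupp.embDomain Fin.castSuccEmb a

/-- `m'` is the homogenization (w.r.t. the last variable `y`) of the graded
monomial order `m₀`: it compares first total degrees, then the `X`-parts using `m₀`. -/
def IsHomogenizationOrder {n : ℕ} (m' : MonomialOrder (Fin (n + 1)))
    (m₀ : MonomialOrder (Fin n)) : Prop :=
  ∀ a b : Fin (n + 1) →₀ ℕ, m'.toSyn a < m'.toSyn b ↔
    (a.degree < b.degree ∨
      (a.degree = b.degree ∧ m₀.toSyn (restr a) < m₀.toSyn (restr b)))

/-- The top part (maximal total degree part) of a polynomial. -/
noncomputable def topPart {K : Type*} [Field K] {σ : Type*}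
    (f : MvPolynomial σ K) : MvPolynomial σ K :=
  MvPolynomial.homogeneousComponent f.totalDegree f

/-- The homogenization of `f ∈ K[x_1,…,x_n]` by the extra (last) variable `y`. -/
noncomputable def homog {K : Type*} [Field K] {n : ℕ}
    (f : MvPolynomial (Fin n) K) : MvPolynomial (Fin (n + 1)) K :=
  ∑ s ∈ f.support,
    MvPolynomial.monomial
      (extX s + Finsupp.single (Fin.last n) (f.totalDegree - s.degree))
      (f.coeff s)

/-- The last variable `y` used for homogenization. -/
noncomputable def yvar (K : Type*) [Field K] (n : ℕ) : MvPolynomial (Fin (n + 1)) K :=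
  MvPolynomial.X (Fin.last n)

/-- Substituting `y = 0`, the "top part" of a homogeneous polynomial in `R[y]`. -/
noncomputable def setYZero {K : Type*} [Field K] {n : ℕ}
    (g : MvPolynomial (Fin (n + 1)) K) : MvPolynomial (Fin (n + 1)) K :=
  MvPolynomial.aeval
    (fun i => if i = Fin.last n then 0 else MvPolynomial.X i) g

/-- The ideal generated by the polynomials `f j` for `j < i`. -/
noncomputable def prevIdeal {K : Type*} [Field K] {σ : Type*} {M : ℕ}
    (f : Fin M → MvPolynomial σ K) (i : Fin M) : Ideal (MvPolynomial σ K) :=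
  Ideal.span (f '' {j | j < i})

/-- `d`-regularity of a sequence of homogeneous polynomials of degrees `dg`. -/
def IsDRegularSeq {K : Type*} [Field K] {σ : Type*} {M : ℕ}
    (f : Fin M → MvPolynomial σ K) (dg : Fin M → ℕ) (d : ℕ) : Prop :=
  ∀ i : Fin M, ∀ g : MvPolynomial σ K, ∀ e : ℕ,
    g.IsHomogeneous e → e + dg i < d →
    g * f i ∈ prevIdeal f i → g ∈ prevIdeal f i

/-- Semi-regularity (Pardue): each multiplication map on graded pieces of the
successive quotients is injective or surjective. -/
def IsSemiRegularSeq {K : Type*} [Field K] {σ : Type*} {M : ℕ}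
    (f : Fin M → MvPolynomial σ K) (dg : Fin M → ℕ) : Prop :=
  ∀ i : Fin M, ∀ t : ℕ, dg i ≤ t →
    (∀ g : MvPolynomial σ K, g.IsHomogeneous (t - dg i) →
        g * f i ∈ prevIdeal f i → g ∈ prevIdeal f i) ∨
    (∀ h : MvPolynomial σ K, h.IsHomogeneous t →
        ∃ g : MvPolynomial σ K, g.IsHomogeneous (t - dg i) ∧
          h - g * f i ∈ prevIdeal f i)

/-- The power series `∏ (1 - z^{d_i}) / (1-z)^n` over `ℤ`. -/
noncomputable def semiRegSeries (n : ℕ) {M : ℕ} (dg : Fin M → ℕ) : PowerSeries ℤ :=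
  (∏ i : Fin M, (1 - (PowerSeries.X : PowerSeries ℤ) ^ dg i)) *
    ((PowerSeries.invOneSubPow ℤ n : (PowerSeries ℤ)ˣ) : PowerSeries ℤ)

/-- The cutoff of the truncation `[·]`: the first index with a nonpositive coefficient. -/
noncomputable def truncCutoff (P : PowerSeries ℤ) : ℕ :=
  sInf {t : ℕ | PowerSeries.coeff t P ≤ 0}

/-- The coefficient of `z^t` in the series `[P]` obtained by truncating `P` after
the last consecutive positive coefficient. -/
noncomputable def truncCoeff (P : PowerSeries ℤ) (t : ℕ) : ℤ :=
  if t < truncCutoff P then PowerSeries.coeff t P else 0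

section Koszul

variable {K : Type*} [Field K] {σ : Type*} {M : ℕ}

/-- Index set of the degree-`i` part of the Koszul complex on `M` polynomials. -/
abbrev KIdx (M i : ℕ) := {s : Finset (Fin M) // s.card = i}

/-- The Koszul differential `K_{i+1} → K_i` of the Koszul complex on `f`. -/
noncomputable def koszulD (f : Fin M → MvPolynomial σ K) (i : ℕ)
    (v : KIdx M (i + 1) → MvPolynomial σ K) :
    KIdx M i → MvPolynomial σ K :=
  fun t => ∑ j : Fin M,
    if h : j ∈ t.val then 0
    else ((-1 : MvPolynomial σ K) ^ (t.val.filter (fun l => l < j)).card) * f j *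
      v ⟨insert j t.val, by rw [Finset.card_insert_of_notMem h, t.prop]⟩

/-- A Koszul `i`-chain is homogeneous of (internal) degree `d`: each component at a
subset `s` is homogeneous of degree `d - ∑_{j ∈ s} dg j` (and zero if `d` is smaller
than this shift). -/
def KChainHom (dg : Fin M → ℕ) (i : ℕ)
    (v : KIdx M i → MvPolynomial σ K) (d : ℕ) : Prop :=
  ∀ t : KIdx M i,
    (v t).IsHomogeneous (d - ∑ j ∈ t.val, dg j) ∧
    (d < ∑ j ∈ t.val, dg j → v t = 0)

/-- A Koszul `i`-cycle: an `i`-chain killed by the Koszul differential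
(every `0`-chain is a cycle). -/
def IsKCycle (f : Fin M → MvPolynomial σ K) :
    (i : ℕ) → (KIdx M i → MvPolynomial σ K) → Prop
  | 0, _ => True
  | (i + 1), v => koszulD f i v = 0

/-- The degree-`d` part of the `i`-th Koszul homology of `f` vanishes:
every homogeneous cycle of degree `d` is a boundary. -/
def KoszulHVanish (f : Fin M → MvPolynomial σ K) (dg : Fin M → ℕ)
    (i d : ℕ) : Prop :=
  ∀ v : KIdx M i → MvPolynomial σ K, KChainHom dg i v d → IsKCycle f i v →
    ∃ w : KIdx M (i + 1) → MvPolynomial σ K, koszulD f i w = v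

/-- The sum `∑ v_j f_j` of which syzygies are the kernel. -/
noncomputable def syzSum (f v : Fin M → MvPolynomial σ K) : MvPolynomial σ K :=
  ∑ j : Fin M, v j * f j

/-- The module of trivial (Koszul) syzygies of `f`. -/
noncomputable def trivSyz (f : Fin M → MvPolynomial σ K) :
    Submodule (MvPolynomial σ K) (Fin M → MvPolynomial σ K) :=
  Submodule.span (MvPolynomial σ K)
    {w | ∃ i j : Fin M, i < j ∧ w = Pi.single j (f i) - Pi.single i (f j)}

/-- A tuple `v` is homogeneous of degree `e` as an element of `⊕ R(-dg j)`. -/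
def TupleHom (dg : Fin M → ℕ) (v : Fin M → MvPolynomial σ K) (e : ℕ) : Prop :=
  ∀ j : Fin M, (v j).IsHomogeneous (e - dg j) ∧ (e < dg j → v j = 0)

end Koszul

end GBPaper

namespace GBPaper

/-- The top part `h|_{y=0}` of a homogeneous polynomial in `R' = R[y]`,
viewed as an element of `R = K[x_1,…,x_n]`. -/
noncomputable def topPartR {K : Type*} [Field K] {n : ℕ}
    (g : MvPolynomial (Fin (n + 1)) K) : MvPolynomial (Fin n) K :=
  MvPolynomial.aeval (Fin.lastCases 0 fun i => MvPolynomial.X i) g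

end GBPaper


section
open MvPolynomial GBPaper Finsupp

namespace GBAux

variable {K : Type*} [Field K] {σ : Type*} (m : MonomialOrder σ)

theorem toSyn_lm (f : MvPolynomial σ K) :
    m.toSyn (lm m f) = f.support.sup fun s => m.toSyn s := by
  simp [lm]

theorem lm_mem_support {f : MvPolynomial σ K} (hf : f ≠ 0) : lm m f ∈ f.support := by
  obtain ⟨b, hb, hb'⟩ := Finset.exists_mem_eq_sup f.support
    (MvPolynomial.support_nonempty.mpr hf) fun s => m.toSyn s
  have : lm m f = b := by rw [lm, hb']; exact m.toSyn.symm_apply_apply b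
  rwa [this]

theorem le_toSyn_lm {f : MvPolynomial σ K} {s : σ →₀ ℕ} (hs : s ∈ f.support) :
    m.toSyn s ≤ m.toSyn (lm m f) := by
  rw [toSyn_lm]; exact Finset.le_sup hs

theorem lt_toSyn_lm {f : MvPolynomial σ K} {s : σ →₀ ℕ} (hs : s ∈ f.support)
    (hne : s ≠ lm m f) : m.toSyn s < m.toSyn (lm m f) :=
  lt_of_le_of_ne (le_toSyn_lm m hs) (fun h => hne (m.toSyn.injective h))

theorem lm_eq_of {f : MvPolynomial σ K} {b : σ →₀ ℕ} (hb : b ∈ f.support)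
    (hmax : ∀ s ∈ f.support, m.toSyn s ≤ m.toSyn b) : lm m f = b := by
  apply m.toSyn.injective
  rw [toSyn_lm]
  exact le_antisymm (Finset.sup_le hmax) (Finset.le_sup hb)

theorem lm_monomial {b : σ →₀ ℕ} {c : K} (hc : c ≠ 0) : lm m (monomial b c) = b := by
  classical
  apply lm_eq_of
  · simp [MvPolynomial.mem_support_iff, MvPolynomial.coeff_monomial, hc]
  · intro s hs
    rw [support_monomial, if_neg hc, Finset.mem_singleton] at hs
    simp [hs]

theorem degree_le_of_le {a b : σ →₀ ℕ} (hab : a ≤ b) : a.degree ≤ b.degree := by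
  have hsub : a.support ⊆ b.support := fun i hi => by
    simp only [Finsupp.mem_support_iff] at hi ⊢
    intro h
    exact hi (Nat.le_zero.mp (h ▸ hab i))
  calc a.degree = ∑ i ∈ a.support, a i := rfl
    _ ≤ ∑ i ∈ b.support, a i := Finset.sum_le_sum_of_subset hsub
    _ ≤ ∑ i ∈ b.support, b i := Finset.sum_le_sum fun i _ => hab i
    _ = b.degree := rfl

theorem degree_add (a b : σ →₀ ℕ) : (a + b).degree = a.degree + b.degree := by
  simp [Finsupp.degree_eq_weight_one, map_add]

theorem mem_support_degree {f : MvPolynomial σ K} {d : ℕ} (hf : f.IsHomogeneous d)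
    {s : σ →₀ ℕ} (hs : s ∈ f.support) : s.degree = d := by
  by_contra hne
  exact (MvPolynomial.mem_support_iff.mp hs) (hf.coeff_eq_zero hne)

theorem isHomogeneous_of_degree {f : MvPolynomial σ K} {d : ℕ}
    (H : ∀ s ∈ f.support, Finsupp.degree s = d) : f.IsHomogeneous d := by
  intro s hs
  have := H s (MvPolynomial.mem_support_iff.mpr hs)
  rwa [Finsupp.degree_eq_weight_one] at this

theorem totalDegree_eq_degree_lm (hm : MonIsGraded m) {f : MvPolynomial σ K} (hf : f ≠ 0) :
    f.totalDegree = (lm m f).degree := by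
  apply le_antisymm
  · apply Finset.sup_le
    intro s hs
    show Finsupp.degree s ≤ _
    by_contra hlt
    push_neg at hlt
    exact absurd (le_toSyn_lm m hs) (not_le.mpr (hm _ _ hlt))
  · exact MvPolynomial.le_totalDegree (lm_mem_support m hf)

end GBAux

end

section
open MvPolynomial GBPaper Finsupp

namespace GBAux

variable {K : Type*} [Field K] {n : ℕ}

@[simp] theorem extX_castSucc (b : Fin n →₀ ℕ) (i : Fin n) :
    extX b i.castSucc = b i := by
  simpa [extX] using Finsupp.embDomain_apply_self Fin.castSuccEmb b i

@[simp] theorem extX_last (b : Fin n →₀ ℕ) : extX b (Fin.last n) = 0 := by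
  rw [extX]
  apply Finsupp.embDomain_notin_range
  rintro ⟨j, hj⟩
  exact (Fin.castSucc_lt_last j).ne hj

@[simp] theorem restr_apply (a : Fin (n+1) →₀ ℕ) (i : Fin n) :
    restr a i = a i.castSucc := by simp [restr]

@[simp] theorem restr_extX (b : Fin n →₀ ℕ) : restr (extX b) = b := by
  ext i; simp

theorem extX_restr {a : Fin (n+1) →₀ ℕ} (ha : a (Fin.last n) = 0) :
    extX (restr a) = a := by
  ext i
  induction i using Fin.lastCases with
  | last => simp [ha]
  | cast i => simp

theorem degree_eq_sum_univ {N : ℕ} (a : Fin N →₀ ℕ) : a.degree = ∑ i : Fin N, a i :=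
  Finset.sum_subset (Finset.subset_univ _) fun i _ hi => Finsupp.notMem_support_iff.mp hi

theorem degree_extX (b : Fin n →₀ ℕ) : (extX b).degree = b.degree := by
  rw [degree_eq_sum_univ, degree_eq_sum_univ, Fin.sum_univ_castSucc]
  simp

theorem degree_split (a : Fin (n+1) →₀ ℕ) :
    a.degree = (restr a).degree + a (Fin.last n) := by
  rw [degree_eq_sum_univ, degree_eq_sum_univ (restr a), Fin.sum_univ_castSucc]
  simp

theorem extX_mono {b b' : Fin n →₀ ℕ} (hb : b ≤ b') : extX b ≤ extX b' := by
  intro i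
  induction i using Fin.lastCases with
  | last => simp
  | cast i => simpa using hb i

theorem extX_add (b c : Fin n →₀ ℕ) : extX (b + c) = extX b + extX c := by
  ext i
  induction i using Fin.lastCases with
  | last => simp
  | cast i => simp

end GBAux

end

section
open MvPolynomial GBPaper Finsupp

namespace GBAux

variable {K : Type*} [Field K] {n : ℕ}

@[simp] theorem topPartR_zero : topPartR (0 : MvPolynomial (Fin (n+1)) K) = 0 :=
  map_zero (MvPolynomial.aeval _)

theorem topPartR_monomial (s : Fin (n+1) →₀ ℕ) (r : K) :
    topPartR (monomial s r) =
      if s (Fin.last n) = 0 then monomial (restr s) r else 0 := by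
  classical
  rw [topPartR, aeval_monomial]
  split_ifs with hy
  · rw [← extX_restr hy, monomial_eq, restr_extX]
    congr 1
    rw [extX, Finsupp.prod_embDomain (f := Fin.castSuccEmb)]
    apply Finsupp.prod_congr
    intro j _
    have hc : (Fin.castSuccEmb : Fin n ↪ Fin (n+1)) j = j.castSucc := rfl
    rw [hc, Fin.lastCases_castSucc]
  · have hlast : Fin.last n ∈ s.support := Finsupp.mem_support_iff.mpr hy
    rw [Finsupp.prod]
    rw [Finset.prod_eq_zero hlast]
    · ring
    · simp [zero_pow hy]

theorem coeff_topPartR (g : MvPolynomial (Fin (n+1)) K) (b : Fin n →₀ ℕ) :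
    coeff b (topPartR g) = coeff (extX b) g := by
  classical
  have hmap : topPartR (∑ v ∈ g.support, monomial v (coeff v g))
      = ∑ v ∈ g.support, topPartR (monomial v (coeff v g)) :=
    map_sum (MvPolynomial.aeval _) _ _
  conv_lhs => rw [g.as_sum]
  rw [hmap, coeff_sum]
  rw [Finset.sum_eq_single (extX b)]
  · simp [topPartR_monomial]
  · intro s hs hne
    rw [topPartR_monomial]
    split_ifs with hy
    · rw [coeff_monomial, if_neg]
      · intro hr
        exact hne (by rw [← extX_restr hy, hr])
    · simp
  · intro hmem
    simp [topPartR_monomial, MvPolynomial.notMem_support_iff.mp hmem, topPartR_zero]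

theorem topPartR_isHomogeneous {g : MvPolynomial (Fin (n+1)) K} {e : ℕ}
    (hg : g.IsHomogeneous e) : (topPartR g).IsHomogeneous e := by
  apply isHomogeneous_of_degree
  intro b hb
  rw [MvPolynomial.mem_support_iff, coeff_topPartR] at hb
  have := mem_support_degree hg (MvPolynomial.mem_support_iff.mpr hb)
  rwa [degree_extX] at this

theorem topPartR_rename (q : MvPolynomial (Fin n) K) :
    topPartR (rename Fin.castSucc q) = q := by
  rw [topPartR, aeval_rename]
  have : ((Fin.lastCases 0 fun i => (X i : MvPolynomial (Fin n) K)) ∘ Fin.castSucc) = X := by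
    funext j
    simp
  rw [this]
  exact aeval_X_left_apply q

end GBAux

end

section
open MvPolynomial GBPaper Finsupp

namespace GBAux

variable {K : Type*} [Field K] {σ : Type*}

theorem homogComponent_of_isHomogeneous {q : MvPolynomial σ K} {e d : ℕ}
    (hq : q.IsHomogeneous e) :
    homogeneousComponent d q = if e = d then q else 0 := by
  classical
  split_ifs with he
  · subst he
    ext s
    rw [coeff_homogeneousComponent]
    split_ifs with hs
    · rfl
    · exact (hq.coeff_eq_zero hs).symm
  · ext s
    rw [coeff_homogeneousComponent, MvPolynomial.coeff_zero]
    split_ifs with hs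
    · exact hq.coeff_eq_zero (by rw [hs]; exact fun h => he h.symm)
    · rfl

theorem homogComponent_mul_right {t : MvPolynomial σ K} {e : ℕ}
    (ht : t.IsHomogeneous e) (c : MvPolynomial σ K) (d : ℕ) :
    homogeneousComponent d (c * t) =
      if e ≤ d then homogeneousComponent (d - e) c * t else 0 := by
  classical
  conv_lhs => rw [← sum_homogeneousComponent c, Finset.sum_mul, map_sum]
  have hterm : ∀ k, homogeneousComponent d (homogeneousComponent k c * t)
      = if k + e = d then homogeneousComponent k c * t else 0 := fun k =>
    homogComponent_of_isHomogeneous ((homogeneousComponent_isHomogeneous k c).mul ht)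
  simp only [hterm]
  split_ifs with hle
  · have hiff : ∀ k, (k + e = d) = (k = d - e) := fun k => by
      apply propext; omega
    simp only [hiff]
    rw [Finset.sum_ite_eq' (Finset.range (c.totalDegree + 1)) (d - e)
      (fun k => homogeneousComponent k c * t)]
    split_ifs with hmem
    · rfl
    · rw [Finset.mem_range, not_lt] at hmem
      rw [homogeneousComponent_eq_zero _ c (by omega), zero_mul]
  · apply Finset.sum_eq_zero
    intro k _
    rw [if_neg (by omega)]

variable {M : ℕ}

theorem homog_decomp {h : Fin M → MvPolynomial σ K} {dg : Fin M → ℕ}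
    (hhom : ∀ i, (h i).IsHomogeneous (dg i)) {f : MvPolynomial σ K} {d : ℕ}
    (hf : f ∈ Ideal.span (Set.range h)) (hfh : f.IsHomogeneous d) :
    ∃ a : Fin M → MvPolynomial σ K,
      (∀ i, (a i).IsHomogeneous (d - dg i)) ∧ (∀ i, d < dg i → a i = 0) ∧
      f = ∑ i, a i * h i := by
  classical
  obtain ⟨c, hc⟩ := (Ideal.mem_span_range_iff_exists_fun).mp hf
  refine ⟨fun i => if dg i ≤ d then homogeneousComponent (d - dg i) (c i) else 0,
    ?_, ?_, ?_⟩
  · intro i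
    dsimp only
    split_ifs with hi
    · exact homogeneousComponent_isHomogeneous _ _
    · exact isHomogeneous_zero _ _ _
  · intro i hi
    dsimp only
    rw [if_neg (by omega)]
  · have hfc : homogeneousComponent d f = f := by
      rw [homogComponent_of_isHomogeneous hfh, if_pos rfl]
    conv_lhs => rw [← hfc, ← hc, map_sum]
    apply Finset.sum_congr rfl
    intro i _
    dsimp only
    rw [homogComponent_mul_right (hhom i)]
    by_cases hi : dg i ≤ d
    · rw [if_pos hi, if_pos hi]
    · rw [if_neg hi, if_neg hi, zero_mul]

theorem homogComponent_mem_span {h : Fin M → MvPolynomial σ K} {dg : Fin M → ℕ}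
    (hhom : ∀ i, (h i).IsHomogeneous (dg i)) {f : MvPolynomial σ K}
    (hf : f ∈ Ideal.span (Set.range h)) (d : ℕ) :
    homogeneousComponent d f ∈ Ideal.span (Set.range h) := by
  classical
  obtain ⟨c, hc⟩ := (Ideal.mem_span_range_iff_exists_fun).mp hf
  rw [← hc, map_sum]
  apply Ideal.sum_mem
  intro i _
  rw [homogComponent_mul_right (hhom i)]
  split_ifs with hi
  · exact Ideal.mul_mem_left _ _ (Ideal.subset_span ⟨i, rfl⟩)
  · exact Ideal.zero_mem _

end GBAux

end

section
open MvPolynomial GBPaper Finsupp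

namespace GBAux

variable {K : Type*} [Field K] {n M : ℕ}

theorem topPartR_mul (p q : MvPolynomial (Fin (n+1)) K) :
    topPartR (p * q) = topPartR p * topPartR q :=
  map_mul (MvPolynomial.aeval _) p q

theorem graded_of_homogenization {m' : MonomialOrder (Fin (n+1))} {m₀ : MonomialOrder (Fin n)}
    (hm' : IsHomogenizationOrder m' m₀) : MonIsGraded m' := by
  intro a b hab
  exact (hm' a b).mpr (Or.inl hab)

/-- Key lemma L1 : a nonzero homogeneous element of the top ideal lifts to an
element of the ideal whose leading monomial is the `extX` of its leading monomial. -/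
theorem lift_lm {h : Fin M → MvPolynomial (Fin (n+1)) K} {dg : Fin M → ℕ}
    (hhom : ∀ i, (h i).IsHomogeneous (dg i))
    {m' : MonomialOrder (Fin (n+1))} {m₀ : MonomialOrder (Fin n)}
    (hm₀ : MonIsGraded m₀) (hm' : IsHomogenizationOrder m' m₀)
    {p : MvPolynomial (Fin n) K} {d : ℕ} (hp : p.IsHomogeneous d) (hp0 : p ≠ 0)
    (hpI : p ∈ Ideal.span (Set.range fun i => topPartR (h i))) :
    ∃ f ∈ Ideal.span (Set.range h), f ≠ 0 ∧ lm m' f = extX (lm m₀ p) := by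
  classical
  have htop : ∀ i, (topPartR (h i)).IsHomogeneous (dg i) :=
    fun i => topPartR_isHomogeneous (hhom i)
  obtain ⟨a, hah, ha0, hrep⟩ := homog_decomp htop hpI hp
  set f : MvPolynomial (Fin (n+1)) K := ∑ i, rename Fin.castSucc (a i) * h i with hf
  have hfI : f ∈ Ideal.span (Set.range h) := by
    apply Ideal.sum_mem
    intro i _
    exact Ideal.mul_mem_left _ _ (Ideal.subset_span ⟨i, rfl⟩)
  have hftop : topPartR f = p := by
    rw [hf]
    rw [show topPartR (∑ i : Fin M, rename Fin.castSucc (a i) * h i)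
        = ∑ i : Fin M, topPartR (rename Fin.castSucc (a i) * h i) from
      map_sum (MvPolynomial.aeval _) _ _, hrep]
    apply Finset.sum_congr rfl
    intro i _
    rw [topPartR_mul, topPartR_rename]
  have hf0 : f ≠ 0 := fun hz => hp0 (by rw [← hftop, hz, topPartR_zero])
  have hfhom : f.IsHomogeneous d := by
    rw [hf]
    apply IsHomogeneous.sum
    intro i _
    by_cases hi : dg i ≤ d
    · have := ((hah i).rename_isHomogeneous (f := Fin.castSucc)).mul (hhom i)
      rwa [Nat.sub_add_cancel hi] at this
    · rw [ha0 i (by omega), map_zero, zero_mul]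
      exact isHomogeneous_zero _ _ _
  set L := lm m₀ p with hL
  have hLsup : L ∈ p.support := lm_mem_support m₀ hp0
  have hLdeg : L.degree = d := mem_support_degree hp hLsup
  have hcoeff : ∀ b : Fin n →₀ ℕ, coeff (extX b) f = coeff b p := by
    intro b
    rw [← coeff_topPartR, hftop]
  refine ⟨f, hfI, hf0, lm_eq_of m' ?_ ?_⟩
  · rw [MvPolynomial.mem_support_iff, hcoeff]
    exact MvPolynomial.mem_support_iff.mp hLsup
  · intro s hs
    by_cases hse : s = extX L
    · rw [hse]
    have hsd : s.degree = d := mem_support_degree hfhom hs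
    have hEd : (extX L).degree = d := by rw [degree_extX, hLdeg]
    apply le_of_lt
    rw [hm']
    right
    refine ⟨by rw [hsd, hEd], ?_⟩
    rw [restr_extX]
    by_cases hy : s (Fin.last n) = 0
    · have hrs : restr s ∈ p.support := by
        rw [MvPolynomial.mem_support_iff, ← hcoeff, extX_restr hy]
        exact MvPolynomial.mem_support_iff.mp hs
      apply lt_toSyn_lm m₀ hrs
      intro hcon
      exact hse (by rw [← extX_restr hy, hcon])
    · apply hm₀
      have := degree_split s
      rw [hLdeg, ← hsd]
      omega
  
end GBAux

end

section
open MvPolynomial GBPaper Finsupp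

namespace GBAux

variable {K : Type*} [Field K] {N : ℕ}

open Classical in
/-- The standard monomials of degree `d` (not divisible by any `lm` of `G`). -/
noncomputable def stdF (m : MonomialOrder (Fin N)) (G : Finset (MvPolynomial (Fin N) K))
    (d : ℕ) : Finset (Fin N →₀ ℕ) :=
  (Finset.Iic (Finsupp.equivFunOnFinite.symm fun _ => d)).filter
    (fun s => s.degree = d ∧ ∀ g ∈ G, ¬ lm m g ≤ s)

theorem mem_stdF {m : MonomialOrder (Fin N)} {G : Finset (MvPolynomial (Fin N) K)}
    {d : ℕ} {s : Fin N →₀ ℕ} :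
    s ∈ stdF m G d ↔ s.degree = d ∧ ∀ g ∈ G, ¬ lm m g ≤ s := by
  classical
  rw [stdF, Finset.mem_filter, Finset.mem_Iic]
  constructor
  · tauto
  · intro hs
    refine ⟨?_, by convert hs⟩
    intro i
    simp only [Finsupp.coe_equivFunOnFinite_symm]
    rw [← hs.1]
    exact Finsupp.le_degree i s

variable {I : Ideal (MvPolynomial (Fin N) K)} {m : MonomialOrder (Fin N)}
  {G : Finset (MvPolynomial (Fin N) K)}

set_option maxHeartbeats 1000000 in
theorem mk_mem_span_std (hsub : (G : Set (MvPolynomial (Fin N) K)) ⊆ I)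
    (h0 : (0 : MvPolynomial (Fin N) K) ∉ G)
    (hmonic : ∀ g ∈ G, MvPolynomial.coeff (lm m g) g = 1)
    (hGhom : ∀ g ∈ G, g.IsHomogeneous g.totalDegree)
    (mgr : MonIsGraded m) (d : ℕ) :
    ∀ f : MvPolynomial (Fin N) K, f.IsHomogeneous d →
      Ideal.Quotient.mkₐ K I f ∈ Submodule.span K
        ((fun s => Ideal.Quotient.mkₐ K I (monomial s (1:K))) '' (stdF m G d)) := by
  classical
  have hg0' : ∀ {g : MvPolynomial (Fin N) K}, g ∈ G → g ≠ 0 :=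
    fun {g} hg hz => h0 (hz ▸ hg)
  set Sp := Submodule.span K
    ((fun s => Ideal.Quotient.mkₐ K I (monomial s (1:K))) '' (stdF m G d)) with hSp
  set bad : (Fin N →₀ ℕ) → Prop := fun s => ∃ g ∈ G, lm m g ≤ s with hbaddef
  set μ : MvPolynomial (Fin N) K → WithBot m.syn :=
    fun f => (f.support.filter bad).sup (fun s => ((m.toSyn s : m.syn) : WithBot m.syn)) with hμdef
  have wf : WellFounded ((· < ·) : WithBot m.syn → WithBot m.syn → Prop) := wellFounded_lt
  intro f₀ hf₀
  refine wf.induction (C := fun b => ∀ f : MvPolynomial (Fin N) K, μ f = b →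
    f.IsHomogeneous d → Ideal.Quotient.mkₐ K I f ∈ Sp) (μ f₀) ?_ f₀ rfl hf₀
  intro b IH f hμf hf
  by_cases hbad : (f.support.filter bad).Nonempty
  · -- reduction step
    obtain ⟨s, hsmem, hsmax⟩ := Finset.exists_max_image _ (fun u => m.toSyn u) hbad
    rw [Finset.mem_filter] at hsmem
    have hsf : s ∈ f.support := hsmem.1
    obtain ⟨g, hgG, hgle⟩ := hsmem.2
    have hg0 : g ≠ 0 := hg0' hgG
    have hghom := hGhom g hgG
    have hlmgdeg : (lm m g).degree = g.totalDegree :=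
      (totalDegree_eq_degree_lm m mgr hg0).symm
    set c := s - lm m g with hcdef
    have hc : c + lm m g = s := by
      rw [hcdef, add_comm]
      exact add_tsub_cancel_of_le hgle
    set q : MvPolynomial (Fin N) K := (coeff s f) • (monomial c 1 * g) with hqdef
    set f' := f - q with hf'def
    have hqI : q ∈ I := by
      rw [hqdef, smul_eq_C_mul]
      exact Ideal.mul_mem_left _ _ (Ideal.mul_mem_left _ _ (hsub hgG))
    have hmk : Ideal.Quotient.mkₐ K I f' = Ideal.Quotient.mkₐ K I f := by
      rw [hf'def, map_sub, sub_eq_self, Ideal.Quotient.mkₐ_eq_mk,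
        Ideal.Quotient.eq_zero_iff_mem]
      exact hqI
    have hsdeg : s.degree = d := mem_support_degree hf hsf
    have hqhom : q.IsHomogeneous d := by
      have h1 : (monomial c (1:K) * g).IsHomogeneous (c.degree + g.totalDegree) :=
        (isHomogeneous_monomial 1 rfl).mul hghom
      have h2 : c.degree + g.totalDegree = d := by
        rw [← hlmgdeg, ← degree_add, hc, hsdeg]
      rw [← h2]
      have := (homogeneousSubmodule (Fin N) K (c.degree + g.totalDegree)).smul_mem
        (coeff s f) ((mem_homogeneousSubmodule _ _).mpr h1)
      exact (mem_homogeneousSubmodule _ _).mp this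
    have hf'hom : f'.IsHomogeneous d := hf.sub hqhom
    have hcoeffq : coeff s q = coeff s f := by
      rw [hqdef, coeff_smul, ← hc, coeff_monomial_mul, hmonic g hgG]
      simp
    have hcoeffs : coeff s f' = 0 := by
      rw [hf'def, MvPolynomial.coeff_sub, hcoeffq, sub_self]
    have hqsupp : ∀ u ∈ q.support, u = s ∨ m.toSyn u < m.toSyn s := by
      intro u hu
      rw [MvPolynomial.mem_support_iff, hqdef, coeff_smul, smul_eq_mul] at hu
      have hu' : coeff u (monomial c (1:K) * g) ≠ 0 := fun h => hu (by rw [h, mul_zero])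
      have hexp : monomial c (1:K) * g = ∑ t ∈ g.support, monomial (c + t) (coeff t g) := by
        conv_lhs => rw [g.as_sum, Finset.mul_sum]
        apply Finset.sum_congr rfl
        intro t _
        rw [monomial_mul, one_mul]
      rw [hexp, coeff_sum] at hu'
      obtain ⟨t, htg, htne⟩ := Finset.exists_ne_zero_of_sum_ne_zero hu'
      have huct : u = c + t := by
        by_contra hne
        exact htne (by rw [coeff_monomial, if_neg (fun hh => hne hh.symm)])
      by_cases hteq : t = lm m g
      · left; rw [huct, hteq, hc]
      · right
        rw [huct, ← hc, map_add, map_add]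
        exact add_lt_add_right (lt_toSyn_lm m htg hteq) _
    have hμs : μ f = ((m.toSyn s : m.syn) : WithBot m.syn) := by
      apply le_antisymm
      · apply Finset.sup_le
        intro u hu
        exact WithBot.coe_le_coe.mpr (hsmax u hu)
      · exact Finset.le_sup (f := fun u => ((m.toSyn u : m.syn) : WithBot m.syn)) (Finset.mem_filter.mpr hsmem)
    have hμlt : μ f' < b := by
      rw [← hμf, hμs]
      rw [Finset.sup_lt_iff (WithBot.bot_lt_coe _)]
      intro u hu
      rw [Finset.mem_filter] at hu
      have hune : u ≠ s := fun h => by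
        rw [h] at hu
        exact (MvPolynomial.mem_support_iff.mp hu.1) hcoeffs
      have husub : u ∈ f.support ∪ q.support := support_sub _ f q hu.1
      rw [WithBot.coe_lt_coe]
      rcases Finset.mem_union.mp husub with huf | huq
      · exact lt_of_le_of_ne (hsmax u (Finset.mem_filter.mpr ⟨huf, hu.2⟩))
          (fun h => hune (m.toSyn.injective h))
      · rcases hqsupp u huq with h | h
        · exact absurd h hune
        · exact h
    have := IH (μ f') hμlt f' rfl hf'hom
    rwa [hmk] at this
  · -- base case : all monomials of `f` are standard
    rw [Finset.not_nonempty_iff_eq_empty, Finset.filter_eq_empty_iff] at hbad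
    rw [f.as_sum, map_sum]
    apply Submodule.sum_mem
    intro s hs
    rw [show (monomial s (coeff s f) : MvPolynomial (Fin N) K)
        = (coeff s f) • monomial s 1 by rw [smul_monomial, smul_eq_mul, mul_one], map_smul]
    apply Submodule.smul_mem
    apply Submodule.subset_span
    refine ⟨s, ?_, rfl⟩
    rw [Finset.mem_coe, mem_stdF]
    refine ⟨mem_support_degree hf hs, ?_⟩
    intro g hgG hle
    exact hbad hs ⟨g, hgG, hle⟩

theorem linindep_std (hGB : IsReducedGB m I G) (d : ℕ) :
    LinearIndependent K (fun s : {x // x ∈ stdF m G (K := K) d} =>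
      Ideal.Quotient.mkₐ K I (monomial (s : Fin N →₀ ℕ) (1:K))) := by
  classical
  rw [Fintype.linearIndependent_iff]
  intro a ha
  set q : MvPolynomial (Fin N) K :=
    ∑ i : {x // x ∈ stdF m G (K := K) d}, a i • monomial (i : Fin N →₀ ℕ) (1:K) with hq
  have hcoeffq : ∀ j : {x // x ∈ stdF m G (K := K) d}, coeff (j : Fin N →₀ ℕ) q = a j := by
    intro j
    rw [hq, coeff_sum]
    rw [Finset.sum_eq_single j]
    · rw [coeff_smul, coeff_monomial, if_pos rfl, smul_eq_mul, mul_one]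
    · intro i _ hij
      rw [coeff_smul, coeff_monomial, if_neg (fun hh => hij (Subtype.coe_injective hh)),
        smul_eq_mul, mul_zero]
    · intro hj
      exact absurd (Finset.mem_univ j) hj
  have hqI : q ∈ I := by
    rw [← Ideal.Quotient.eq_zero_iff_mem, ← Ideal.Quotient.mkₐ_eq_mk K, ← ha, hq, map_sum]
    apply Finset.sum_congr rfl
    intro i _
    rw [map_smul]
  have hq0 : q = 0 := by
    by_contra hq0
    obtain ⟨g, hgG, hgle⟩ := hGB.isGB q hqI hq0
    have hlmsup : lm m q ∈ q.support := lm_mem_support m hq0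
    have : lm m q ∈ Finset.image (fun i : {x // x ∈ stdF m G (K := K) d} =>
        (i : Fin N →₀ ℕ)) Finset.univ := by
      by_contra hnot
      apply MvPolynomial.mem_support_iff.mp hlmsup
      rw [hq, coeff_sum]
      apply Finset.sum_eq_zero
      intro i _
      rw [coeff_smul, coeff_monomial, if_neg, smul_eq_mul, mul_zero]
      intro hh
      exact hnot (Finset.mem_image.mpr ⟨i, Finset.mem_univ i, hh⟩)
    obtain ⟨i, _, hi⟩ := Finset.mem_image.mp this
    have hstd := (mem_stdF.mp i.2).2
    exact hstd g hgG (hi ▸ hgle)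
  intro i
  rw [← hcoeffq i, hq0, MvPolynomial.coeff_zero]

theorem hilbertFn_eq_card_std (hGB : IsReducedGB m I G)
    (hGhom : ∀ g ∈ G, g.IsHomogeneous g.totalDegree)
    (mgr : MonIsGraded m) (d : ℕ) :
    hilbertFn K I d = (stdF m G (K := K) d).card := by
  classical
  set v : {x // x ∈ stdF m G (K := K) d} → (MvPolynomial (Fin N) K ⧸ I) :=
    fun s => Ideal.Quotient.mkₐ K I (monomial (s : Fin N →₀ ℕ) (1:K)) with hv
  have hrange : Set.range v =
      (fun s => Ideal.Quotient.mkₐ K I (monomial s (1:K))) '' (stdF m G (K := K) d) := by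
    rw [hv]
    ext x
    constructor
    · rintro ⟨i, rfl⟩
      exact ⟨i, i.2, rfl⟩
    · rintro ⟨s, hs, rfl⟩
      exact ⟨⟨s, hs⟩, rfl⟩
  have hmapeq : (MvPolynomial.homogeneousSubmodule (Fin N) K d).map
      (Ideal.Quotient.mkₐ K I).toLinearMap = Submodule.span K (Set.range v) := by
    apply le_antisymm
    · rintro x ⟨f, hf, rfl⟩
      rw [hrange]
      exact mk_mem_span_std hGB.subset hGB.zero_not_mem hGB.monic hGhom mgr d f
        ((mem_homogeneousSubmodule _ _).mp hf)
    · rw [Submodule.span_le]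
      rintro x ⟨i, rfl⟩
      refine ⟨monomial (i : Fin N →₀ ℕ) 1, ?_, rfl⟩
      rw [SetLike.mem_coe, mem_homogeneousSubmodule]
      exact isHomogeneous_monomial 1 (mem_stdF.mp i.2).1
  rw [hilbertFn, hmapeq, finrank_span_eq_card (linindep_std hGB d), Fintype.card_coe]

end GBAux

end

section
open MvPolynomial GBPaper Finsupp

namespace GBAux

variable {K : Type*} [Field K] {N : ℕ}

theorem degree_single_one (j : Fin N) : (Finsupp.single j 1 : Fin N →₀ ℕ).degree = 1 := by
  exact Finsupp.degree_single j 1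

theorem GB_homog {M : ℕ} {h : Fin M → MvPolynomial (Fin N) K} {dg : Fin M → ℕ}
    (hhom : ∀ i, (h i).IsHomogeneous (dg i)) {m : MonomialOrder (Fin N)}
    (mgr : MonIsGraded m) {G : Finset (MvPolynomial (Fin N) K)}
    (hGB : IsReducedGB m (Ideal.span (Set.range h)) G) :
    ∀ g ∈ G, g.IsHomogeneous g.totalDegree := by
  intro g hgG
  have hg0 : g ≠ 0 := fun hz => hGB.zero_not_mem (hz ▸ hgG)
  have hD : g.totalDegree = (lm m g).degree := totalDegree_eq_degree_lm m mgr hg0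
  apply isHomogeneous_of_degree
  intro s hs
  have hcs : coeff s (homogeneousComponent s.degree g) = coeff s g := by
    rw [coeff_homogeneousComponent, if_pos rfl]
  have hc0 : homogeneousComponent s.degree g ≠ 0 := fun hz =>
    (MvPolynomial.mem_support_iff.mp hs) (by rw [← hcs, hz, MvPolynomial.coeff_zero])
  have hcI : homogeneousComponent s.degree g ∈ Ideal.span (Set.range h) :=
    homogComponent_mem_span hhom (hGB.subset hgG) s.degree
  obtain ⟨g', hg'G, hle⟩ := hGB.isGB _ hcI hc0
  have hlmc : lm m (homogeneousComponent s.degree g) ∈ g.support := by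
    have hmem := lm_mem_support m hc0
    rw [MvPolynomial.mem_support_iff] at hmem ⊢
    intro hz
    apply hmem
    rw [coeff_homogeneousComponent]
    split_ifs
    · exact hz
    · rfl
  by_cases heq : g' = g
  · rw [heq] at hle
    have h1 : (lm m g).degree ≤ (lm m (homogeneousComponent s.degree g)).degree :=
      degree_le_of_le hle
    have h2 : (lm m (homogeneousComponent s.degree g)).degree = s.degree :=
      mem_support_degree (homogeneousComponent_isHomogeneous s.degree g)
        (lm_mem_support m hc0)
    have h3 : s.degree ≤ g.totalDegree := MvPolynomial.le_totalDegree hs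
    omega
  · exact absurd hle (hGB.reduced g hgG g' hg'G (fun hh => heq hh.symm) _ hlmc)

theorem antitone_eventually_const (u : ℕ → ℕ) (hu : ∀ k, u (k + 1) ≤ u k) :
    ∃ N₀, ∀ k, N₀ ≤ k → u k = u N₀ := by
  have hanti : Antitone u := antitone_nat_of_succ_le hu
  have hne : (Set.range u).Nonempty := Set.range_nonempty u
  obtain ⟨N₀, hN₀⟩ := Nat.sInf_mem hne
  refine ⟨N₀, fun k hk => le_antisymm (hanti hk) ?_⟩
  rw [hN₀]
  exact Nat.sInf_le ⟨k, rfl⟩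

end GBAux

end

open MvPolynomial GBPaper Finsupp
open GBAux

open GBPaper

/-- if `R/⟨H^top⟩` is Artinian and the sequence of top parts is
cryptographic semi-regular, then for any homogenized graded monomial ordering the
reduced Gröbner basis of `⟨H⟩` lives in degrees at most
`max{d_reg(⟨H^top⟩), d̃_reg(⟨H⟩)}`. -/
theorem stmt8 {K : Type*} [Field K] {n M : ℕ}
    (h : Fin M → MvPolynomial (Fin (n + 1)) K) (dg : Fin M → ℕ)
    (hhom : ∀ i, (h i).IsHomogeneous (dg i)) (hpos : ∀ i, 0 < dg i)
    (hArt : ∃ d : ℕ, ∀ g : MvPolynomial (Fin n) K, g.IsHomogeneous d →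
      g ∈ Ideal.span (Set.range fun i => topPartR (h i)))
    (hcsr : IsDRegularSeq (fun i => topPartR (h i)) dg
      (degReg K (Ideal.span (Set.range fun i => topPartR (h i)))))
    (m' : MonomialOrder (Fin (n + 1))) (m₀ : MonomialOrder (Fin n))
    (hm₀ : MonIsGraded m₀) (hm' : IsHomogenizationOrder m' m₀)
    (G : Finset (MvPolynomial (Fin (n + 1)) K))
    (hG : IsReducedGB m' (Ideal.span (Set.range h)) G) :
    ∀ g ∈ G, g.totalDegree ≤
      max (degReg K (Ideal.span (Set.range fun i => topPartR (h i))))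
        (gdegReg K (Ideal.span (Set.range h))) := by
  classical
  set I := Ideal.span (Set.range h) with hIdef
  set Itop := Ideal.span (Set.range fun i => topPartR (h i)) with hItopdef
  set d1 := degReg K Itop with hd1def
  set d2 := gdegReg K I with hd2def
  have mgr : MonIsGraded m' := graded_of_homogenization hm'
  have hGhom : ∀ g ∈ G, g.IsHomogeneous g.totalDegree := GB_homog hhom mgr hG
  -- facts about d1
  have hS1ne : {d : ℕ | ∀ f : MvPolynomial (Fin n) K, f.IsHomogeneous d → f ∈ Itop}.Nonempty :=
    hArt
  have hd1mem : ∀ f : MvPolynomial (Fin n) K, f.IsHomogeneous d1 → f ∈ Itop :=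
    Nat.sInf_mem hS1ne
  have hd1up : ∀ D, d1 ≤ D → ∀ f : MvPolynomial (Fin n) K, f.IsHomogeneous D → f ∈ Itop := by
    intro D hD
    induction D with
    | zero =>
      have : d1 = 0 := Nat.le_zero.mp hD
      exact this ▸ hd1mem
    | succ D IH =>
      rcases Nat.lt_or_ge d1 (D+1) with hlt | hge
      · have hIH := IH (by omega)
        intro f hf
        rw [f.as_sum]
        apply Ideal.sum_mem
        intro s hsf
        have hsd : s.degree = D + 1 := mem_support_degree hf hsf
        have hs0 : s ≠ 0 := fun hz => by rw [hz] at hsd; simp at hsd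
        obtain ⟨j, hj⟩ := Finsupp.support_nonempty_iff.mpr hs0
        have hj' : s j ≠ 0 := Finsupp.mem_support_iff.mp hj
        have hle : Finsupp.single j 1 ≤ s := Finsupp.single_le_iff.mpr (by omega)
        have hcan : (s - Finsupp.single j 1) + Finsupp.single j 1 = s :=
          tsub_add_cancel_of_le hle
        have hdeg' : (s - Finsupp.single j 1).degree = D := by
          have := degree_add (s - Finsupp.single j 1) (Finsupp.single j 1)
          rw [hcan, degree_single_one] at this
          omega
        have hmem : (monomial (s - Finsupp.single j 1) (coeff s f) : MvPolynomial (Fin n) K)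
            ∈ Itop := hIH _ (isHomogeneous_monomial _ hdeg')
        have heq : (monomial s (coeff s f) : MvPolynomial (Fin n) K) =
            monomial (Finsupp.single j 1) 1 * monomial (s - Finsupp.single j 1) (coeff s f) :=
          calc (monomial s (coeff s f) : MvPolynomial (Fin n) K)
              = monomial (Finsupp.single j 1 + (s - Finsupp.single j 1)) (coeff s f) := by
                rw [add_comm (Finsupp.single j 1), hcan]
            _ = monomial (Finsupp.single j 1) 1 * monomial (s - Finsupp.single j 1)
                  (coeff s f) := by rw [monomial_mul, one_mul]
        rw [heq]
        exact Ideal.mul_mem_left _ _ hmem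
      · have : d1 = D + 1 := by omega
        exact this ▸ hd1mem
  -- non-standardness of y-free monomials in high degree
  have hkey : ∀ D, d1 ≤ D → ∀ s : Fin (n+1) →₀ ℕ, s.degree = D → s (Fin.last n) = 0 →
      ∃ g' ∈ G, lm m' g' ≤ s := by
    intro D hD s hsd hy
    have hpd : (restr s).degree = D := by
      have := degree_split s
      omega
    have hp : (monomial (restr s) (1:K)).IsHomogeneous D := isHomogeneous_monomial _ hpd
    have hp0 : (monomial (restr s) (1:K)) ≠ 0 := by
      intro hz
      have := MvPolynomial.coeff_monomial (restr s) (restr s) (1:K)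
      rw [hz, if_pos rfl, MvPolynomial.coeff_zero] at this
      exact one_ne_zero this.symm
    obtain ⟨f, hfI, hf0, hflm⟩ := lift_lm hhom hm₀ hm' hp hp0 (hd1up D hD _ hp)
    obtain ⟨g', hg'G, hle⟩ := hG.isGB f hfI hf0
    refine ⟨g', hg'G, ?_⟩
    rwa [hflm, lm_monomial m₀ one_ne_zero, extX_restr hy] at hle
  -- the `y`-division step on standard monomials
  have hstep : ∀ D, d1 ≤ D → ∀ s ∈ stdF m' G (K := K) (D+1),
      (s - Finsupp.single (Fin.last n) 1 ∈ stdF m' G (K := K) D ∧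
        Finsupp.single (Fin.last n) 1 ≤ s) := by
    intro D hD s hs
    obtain ⟨hdeg, hstd⟩ := mem_stdF.mp hs
    have hylast : s (Fin.last n) ≠ 0 := by
      intro hy0
      obtain ⟨g', hg', hle⟩ := hkey (D+1) (by omega) s hdeg hy0
      exact hstd g' hg' hle
    have hle1 : Finsupp.single (Fin.last n) 1 ≤ s :=
      Finsupp.single_le_iff.mpr (by omega)
    have hcan : (s - Finsupp.single (Fin.last n) 1) + Finsupp.single (Fin.last n) 1 = s :=
      tsub_add_cancel_of_le hle1
    refine ⟨mem_stdF.mpr ⟨?_, ?_⟩, hle1⟩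
    · have := degree_add (s - Finsupp.single (Fin.last n) 1) (Finsupp.single (Fin.last n) 1)
      rw [hcan, degree_single_one] at this
      omega
    · intro g' hg' hle
      exact hstd g' hg' (hle.trans tsub_le_self)
  have hinj : ∀ D : ℕ, Set.InjOn (fun s => s - Finsupp.single (Fin.last n) 1)
      (stdF m' G (K := K) (D+1)) → True := fun _ _ => trivial
  have hinj' : ∀ D, d1 ≤ D → ∀ s ∈ stdF m' G (K := K) (D+1), ∀ t ∈ stdF m' G (K := K) (D+1),
      s - Finsupp.single (Fin.last n) 1 = t - Finsupp.single (Fin.last n) 1 → s = t := by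
    intro D hD s hs t ht hst
    have h1 := (hstep D hD s hs).2
    have h2 := (hstep D hD t ht).2
    rw [← tsub_add_cancel_of_le h1, ← tsub_add_cancel_of_le h2, hst]
  -- Hilbert function equals number of standard monomials
  have hHF : ∀ d, hilbertFn K I d = (stdF m' G (K := K) d).card :=
    fun d => hilbertFn_eq_card_std hG hGhom mgr d
  -- the Hilbert function is eventually constant
  have hanti : ∀ k, hilbertFn K I (d1 + (k+1)) ≤ hilbertFn K I (d1 + k) := by
    intro k
    rw [hHF, hHF]
    have : d1 + (k + 1) = (d1 + k) + 1 := by omega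
    rw [this]
    apply Finset.card_le_card_of_injOn (fun s => s - Finsupp.single (Fin.last n) 1)
    · intro s hs
      exact (hstep (d1 + k) (by omega) s hs).1
    · intro s hs t ht hst
      exact hinj' (d1 + k) (by omega) s hs t ht hst
  obtain ⟨N₀, hN₀⟩ := antitone_eventually_const (fun k => hilbertFn K I (d1 + k)) hanti
  have hgdne : {d₀ : ℕ | ∀ d : ℕ, d₀ ≤ d → hilbertFn K I d = hilbertFn K I d₀}.Nonempty := by
    refine ⟨d1 + N₀, fun d hd => ?_⟩
    have : d = d1 + (N₀ + (d - (d1 + N₀))) := by omega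
    rw [this, hN₀ (N₀ + (d - (d1 + N₀))) (by omega)]
  have hd2mem : ∀ d : ℕ, d2 ≤ d → hilbertFn K I d = hilbertFn K I d2 :=
    Nat.sInf_mem hgdne
  -- main argument
  intro g hgG
  by_contra hcon
  push_neg at hcon
  have hg0 : g ≠ 0 := fun hz => hG.zero_not_mem (hz ▸ hgG)
  have hDlm : (lm m' g).degree = g.totalDegree := (totalDegree_eq_degree_lm m' mgr hg0).symm
  set D := g.totalDegree with hDdef
  set a := lm m' g with hadef
  have haG : a ∈ g.support := lm_mem_support m' hg0
  have hd1D : d1 < D := lt_of_le_of_lt (le_max_left _ _) hcon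
  have hd2D : d2 < D := lt_of_le_of_lt (le_max_right _ _) hcon
  by_cases hy : a (Fin.last n) = 0
  · -- leading monomial is y-free
    have hbdeg : (restr a).degree = D := by
      have := degree_split a
      rw [hDlm] at this
      omega
    have hb0 : restr a ≠ 0 := fun hz => by
      rw [hz, map_zero] at hbdeg
      omega
    obtain ⟨j, hj⟩ := Finsupp.support_nonempty_iff.mpr hb0
    have hj' : restr a j ≠ 0 := Finsupp.mem_support_iff.mp hj
    have hble : Finsupp.single j 1 ≤ restr a := Finsupp.single_le_iff.mpr (by omega)
    have hcanb : (restr a - Finsupp.single j 1) + Finsupp.single j 1 = restr a :=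
      tsub_add_cancel_of_le hble
    have hb'deg : (restr a - Finsupp.single j 1).degree = D - 1 := by
      have := degree_add (restr a - Finsupp.single j 1) (Finsupp.single j 1)
      rw [hcanb, degree_single_one] at this
      omega
    obtain ⟨g', hg'G, hle'⟩ := hkey (D-1) (by omega) (extX (restr a - Finsupp.single j 1))
      (by rw [degree_extX]; exact hb'deg) (extX_last _)
    have hlea : lm m' g' ≤ a := by
      refine hle'.trans ?_
      conv_rhs => rw [← extX_restr hy]
      exact extX_mono tsub_le_self
    by_cases heq : g' = g
    · rw [heq] at hle'
      have h1 : (lm m' g).degree ≤ (extX (restr a - Finsupp.single j 1)).degree :=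
        degree_le_of_le hle'
      rw [degree_extX, hb'deg, hDlm] at h1
      omega
    · exact hG.reduced g hgG g' hg'G (fun hh => heq hh.symm) a haG hlea
  · -- leading monomial is divisible by y
    have hyle : Finsupp.single (Fin.last n) 1 ≤ a := Finsupp.single_le_iff.mpr (by omega)
    have hcana : (a - Finsupp.single (Fin.last n) 1) + Finsupp.single (Fin.last n) 1 = a :=
      tsub_add_cancel_of_le hyle
    have hdeg'' : (a - Finsupp.single (Fin.last n) 1).degree = D - 1 := by
      have := degree_add (a - Finsupp.single (Fin.last n) 1) (Finsupp.single (Fin.last n) 1)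
      rw [hcana, degree_single_one, hDlm] at this
      omega
    have ha''std : a - Finsupp.single (Fin.last n) 1 ∈ stdF m' G (K := K) (D-1) := by
      rw [mem_stdF]
      refine ⟨hdeg'', fun g' hg' hle => ?_⟩
      have hlea : lm m' g' ≤ a := hle.trans tsub_le_self
      by_cases heq : g' = g
      · rw [heq] at hle
        have h1 : (lm m' g).degree ≤ (a - Finsupp.single (Fin.last n) 1).degree :=
          degree_le_of_le hle
        rw [hdeg'', hDlm] at h1
        omega
      · exact hG.reduced g hgG g' hg' (fun hh => heq hh.symm) a haG hlea
    have hcards : (stdF m' G (K := K) D).card = (stdF m' G (K := K) (D-1)).card := by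
      rw [← hHF, ← hHF, hd2mem D (by omega), hd2mem (D-1) (by omega)]
    have hDsplit : D = (D - 1) + 1 := by omega
    have hmaps : ∀ s ∈ stdF m' G (K := K) D,
        s - Finsupp.single (Fin.last n) 1 ∈ (stdF m' G (K := K) (D-1)).erase
          (a - Finsupp.single (Fin.last n) 1) := by
      intro s hs
      have hs' : s ∈ stdF m' G (K := K) ((D-1)+1) := by rwa [← hDsplit]
      have hmem := (hstep (D-1) (by omega) s hs').1
      rw [Finset.mem_erase]
      refine ⟨?_, hmem⟩
      intro hcontra
      have hsa : s = a := by
        rw [← tsub_add_cancel_of_le (hstep (D-1) (by omega) s hs').2, hcontra, hcana]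
      have := (mem_stdF.mp hs).2 g hgG
      rw [hsa] at this
      exact this le_rfl
    have hcardle : (stdF m' G (K := K) D).card ≤
        ((stdF m' G (K := K) (D-1)).erase (a - Finsupp.single (Fin.last n) 1)).card := by
      apply Finset.card_le_card_of_injOn _ hmaps
      intro s hs t ht hst
      have hs' : s ∈ stdF m' G (K := K) ((D-1)+1) := by rwa [← hDsplit]
      have ht' : t ∈ stdF m' G (K := K) ((D-1)+1) := by rwa [← hDsplit]
      exact hinj' (D-1) (by omega) s hs' t ht' hst
    rw [Finset.card_erase_of_mem ha''std] at hcardle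
    have hpos : 0 < (stdF m' G (K := K) (D-1)).card := Finset.card_pos.mpr ⟨_, ha''std⟩
    omega
end

section
/- Let f_1,...,f_m be homogeneous polynomials of positive degrees in R = K[x_1,...,x_n], and suppose that for some natural numbers D and i, the degree-≤D part of the i-th Koszul homology H_i(K_•(f_1,...,f_m)) vanishes. Then for each j with 1 ≤ j < m, the degree-≤D part of H_i(K_•(f_1,...,f_j)) also vanishes. -/
open MvPolynomial

open MvPolynomial Finset
namespace GBPaperAux

variable {K : Type*} [Field K] {σ : Type*}

lemma hc_self {e : ℕ} {p : MvPolynomial σ K} (h : p.IsHomogeneous e) :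
    homogeneousComponent e p = p := by
  rw [homogeneousComponent_of_mem ((mem_homogeneousSubmodule _ _).2 h), if_pos rfl]

lemma hc_mul {f : MvPolynomial σ K} {a : ℕ} (hf : f.IsHomogeneous a)
    (g : MvPolynomial σ K) (e : ℕ) :
    homogeneousComponent e (f * g) =
      if a ≤ e then f * homogeneousComponent (e - a) g else 0 := by
  conv_lhs => rw [← sum_homogeneousComponent g, Finset.mul_sum, map_sum]
  rw [Finset.sum_congr rfl (fun j _ => homogeneousComponent_of_mem
    ((mem_homogeneousSubmodule _ _).2 (hf.mul (homogeneousComponent_isHomogeneous j g))))]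
  split_ifs with h
  · rw [Finset.sum_congr rfl (fun j _ => if_congr (show (e = a + j) ↔ (e - a = j) by omega) rfl rfl),
      Finset.sum_ite_eq (Finset.range (g.totalDegree + 1))]
    split_ifs with h2
    · rfl
    · rw [homogeneousComponent_eq_zero, mul_zero]
      simp only [Finset.mem_range] at h2; omega
  · exact Finset.sum_eq_zero fun j _ => if_neg (by omega)

lemma sgn_mul_hom {c a : ℕ} {f : MvPolynomial σ K} (hf : f.IsHomogeneous a) :
    ((-1 : MvPolynomial σ K) ^ c * f).IsHomogeneous a := by
  have h1 : ((-1 : MvPolynomial σ K) ^ c).IsHomogeneous 0 := by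
    have := isHomogeneous_C (σ := σ) ((-1 : K) ^ c)
    rwa [map_pow, map_neg, map_one] at this
  simpa using h1.mul hf

section Fins
variable {m : ℕ}

def upF (s : Finset (Fin m)) : Finset (Fin (m+1)) := s.map Fin.castSuccEmb

noncomputable def downF (s : Finset (Fin (m+1))) : Finset (Fin m) :=
  s.preimage Fin.castSucc (Fin.castSucc_injective m).injOn

@[simp] lemma mem_upF {k : Fin m} {s : Finset (Fin m)} :
    k.castSucc ∈ upF s ↔ k ∈ s := Finset.mem_map' _

@[simp] lemma last_not_mem_upF {s : Finset (Fin m)} : Fin.last m ∉ upF s := by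
  simp only [upF, Finset.mem_map]
  rintro ⟨k, -, hk⟩
  exact (Fin.castSucc_lt_last k).ne (by exact hk)

@[simp] lemma card_upF (s : Finset (Fin m)) : (upF s).card = s.card :=
  Finset.card_map _

@[simp] lemma mem_downF {k : Fin m} {s : Finset (Fin (m+1))} :
    k ∈ downF s ↔ k.castSucc ∈ s := Finset.mem_preimage

@[simp] lemma downF_upF (s : Finset (Fin m)) : downF (upF s) = s := by
  ext k; simp

lemma upF_downF {s : Finset (Fin (m+1))} (h : Fin.last m ∉ s) : upF (downF s) = s := by
  ext x
  refine Fin.lastCases ?_ (fun k => ?_) x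
  · simp only [last_not_mem_upF, false_iff]; exact h
  · simp

lemma card_downF {s : Finset (Fin (m+1))} (h : Fin.last m ∉ s) :
    (downF s).card = s.card := by
  rw [← card_upF (downF s), upF_downF h]

lemma upF_insert (k : Fin m) (s : Finset (Fin m)) :
    upF (insert k s) = insert k.castSucc (upF s) := Finset.map_insert _ _ _

lemma filter_upF_lt (s : Finset (Fin m)) (j : Fin m) :
    ((upF s).filter (fun l => l < j.castSucc)).card = (s.filter (fun l => l < j)).card := by
  rw [upF, Finset.filter_map, Finset.card_map]
  congr 1

lemma filter_upF_lt_last (s : Finset (Fin m)) :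
    ((upF s).filter (fun l => l < Fin.last m)).card = s.card := by
  rw [Finset.filter_true_of_mem, card_upF]
  intro x hx
  rcases Finset.mem_map.1 hx with ⟨k, -, rfl⟩
  exact Fin.castSucc_lt_last k

lemma filter_insert_last_lt (s : Finset (Fin (m+1))) (j : Fin m) :
    ((insert (Fin.last m) s).filter (fun l => l < j.castSucc)).card
      = (s.filter (fun l => l < j.castSucc)).card := by
  rw [Finset.filter_insert, if_neg]
  exact fun h => absurd h (not_lt.2 (Fin.castSucc_lt_last j).le)

lemma sum_upF (s : Finset (Fin m)) (dg : Fin (m+1) → ℕ) :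
    ∑ j ∈ upF s, dg j = ∑ k ∈ s, dg k.castSucc := by
  rw [upF, Finset.sum_map]; rfl

end Fins

open GBPaper

lemma koszulD_add_mul {M : ℕ} (f : Fin M → MvPolynomial σ K) (i : ℕ)
    (a c : KIdx M (i+1) → MvPolynomial σ K) (g : MvPolynomial σ K) :
    koszulD f i (fun t => a t + g * c t)
      = fun t => koszulD f i a t + g * koszulD f i c t := by
  funext t
  simp only [koszulD]
  rw [Finset.mul_sum, ← Finset.sum_add_distrib]
  refine Finset.sum_congr rfl fun j _ => ?_
  by_cases h : j ∈ t.val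
  · simp [h]
  · rw [dif_neg h, dif_neg h, dif_neg h]
    ring

/-- The projection of a Koszul chain onto its degree-`d` homogeneous part. -/
noncomputable def projD {M i : ℕ} (dg : Fin M → ℕ) (d : ℕ)
    (w : KIdx M i → MvPolynomial σ K) : KIdx M i → MvPolynomial σ K :=
  fun u => if (∑ j ∈ u.val, dg j) ≤ d
    then homogeneousComponent (d - ∑ j ∈ u.val, dg j) (w u) else 0

lemma projD_eq_zero {M i : ℕ} (dg : Fin M → ℕ) (d : ℕ)
    (w : KIdx M i → MvPolynomial σ K) (u : KIdx M i)
    (h : ¬ (∑ j ∈ u.val, dg j ≤ d)) : projD dg d w u = 0 := by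
  simp only [projD, if_neg h]

lemma koszulD_projD {M : ℕ} (f : Fin M → MvPolynomial σ K) (dg : Fin M → ℕ)
    (hhom : ∀ j, (f j).IsHomogeneous (dg j)) (i d : ℕ)
    (w : KIdx M (i+1) → MvPolynomial σ K) (v : KIdx M i → MvPolynomial σ K)
    (hvhom : KChainHom dg i v d) (hw : koszulD f i w = v) :
    koszulD f i (projD dg d w) = v := by
  funext s
  by_cases hds : (∑ j ∈ s.val, dg j) ≤ d
  · have step1 : koszulD f i (projD dg d w) s
        = homogeneousComponent (d - ∑ j ∈ s.val, dg j) (koszulD f i w s) := by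
      simp only [koszulD, map_sum]
      refine Finset.sum_congr rfl fun j _ => ?_
      by_cases hj : j ∈ s.val
      · rw [dif_pos hj, dif_pos hj, map_zero]
      · rw [dif_neg hj, dif_neg hj, hc_mul (sgn_mul_hom (hhom j))]
        simp only [projD]
        rw [Finset.sum_insert hj]
        split_ifs with h1 h2 h2
        · rw [show d - (dg j + ∑ j ∈ s.val, dg j)
            = d - (∑ j ∈ s.val, dg j) - dg j from by omega]
        · omega
        · omega
        · rw [mul_zero]
    rw [step1, hw, hc_self (hvhom s).1]
  · rw [(hvhom s).2 (by omega)]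
    simp only [koszulD]
    refine Finset.sum_eq_zero fun j _ => ?_
    by_cases hj : j ∈ s.val
    · rw [dif_pos hj]
    · rw [dif_neg hj, projD_eq_zero dg d w _ (by rw [Finset.sum_insert hj]; omega), mul_zero]

section Ext
variable {m : ℕ}

/-- Extension by zero of a Koszul chain from `m` to `m+1` polynomials. -/
noncomputable def vextD {i : ℕ} (v : KIdx m i → MvPolynomial σ K) :
    KIdx (m+1) i → MvPolynomial σ K :=
  fun s => if h : Fin.last m ∈ s.val then 0
    else v ⟨downF s.val, by rw [card_downF h, s.prop]⟩

lemma vextD_mem_last {i : ℕ} (v : KIdx m i → MvPolynomial σ K)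
    (s : KIdx (m+1) i) (h : Fin.last m ∈ s.val) : vextD v s = 0 := by
  simp only [vextD]; rw [dif_pos h]

lemma vextD_upF {i : ℕ} (v : KIdx m i → MvPolynomial σ K)
    (t : KIdx m i) (s : KIdx (m+1) i) (hs : s.val = upF t.val) : vextD v s = v t := by
  obtain ⟨sv, hcard⟩ := s
  simp only at hs
  subst hs
  simp only [vextD]
  rw [dif_neg last_not_mem_upF]
  exact congrArg v (Subtype.ext (downF_upF t.val))

/-- Restriction to subsets avoiding the last index. -/
noncomputable def aD {i : ℕ} (w : KIdx (m+1) i → MvPolynomial σ K) :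
    KIdx m i → MvPolynomial σ K :=
  fun t => w ⟨upF t.val, by rw [card_upF, t.prop]⟩

/-- Restriction to subsets containing the last index. -/
noncomputable def bD {i : ℕ} (w : KIdx (m+1) (i+1) → MvPolynomial σ K) :
    KIdx m i → MvPolynomial σ K :=
  fun t => w ⟨insert (Fin.last m) (upF t.val),
    by rw [Finset.card_insert_of_notMem last_not_mem_upF, card_upF, t.prop]⟩

lemma vextD_hom (dg : Fin (m+1) → ℕ) (d i : ℕ) (v : KIdx m i → MvPolynomial σ K)
    (hv : KChainHom (fun k => dg k.castSucc) i v d) :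
    KChainHom dg i (vextD v) d := by
  intro s
  by_cases h : Fin.last m ∈ s.val
  · rw [vextD_mem_last v s h]
    exact ⟨isHomogeneous_zero _ _ _, fun _ => rfl⟩
  · have hsum : ∑ k ∈ downF s.val, dg k.castSucc = ∑ j ∈ s.val, dg j := by
      rw [← sum_upF (downF s.val) dg, upF_downF h]
    simp only [vextD]
    rw [dif_neg h, ← hsum]
    exact hv _

lemma vextD_cyc (f : Fin (m+1) → MvPolynomial σ K) (i : ℕ)
    (v : KIdx m (i+1) → MvPolynomial σ K)
    (hv : koszulD (fun k => f k.castSucc) i v = 0) :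
    koszulD f i (vextD v) = 0 := by
  funext u
  rw [Pi.zero_apply]
  by_cases hu : Fin.last m ∈ u.val
  · simp only [koszulD]
    refine Finset.sum_eq_zero fun j _ => ?_
    by_cases hj : j ∈ u.val
    · rw [dif_pos hj]
    · rw [dif_neg hj, vextD_mem_last v _ (Finset.mem_insert_of_mem hu), mul_zero]
  · obtain ⟨uv, hcard⟩ := u
    simp only at hu
    obtain ⟨u₀, rfl⟩ : ∃ t, upF t = uv := ⟨downF uv, upF_downF hu⟩
    have hcard₀ : u₀.card = i := by rw [← card_upF u₀]; exact hcard
    have h0 := congrFun hv ⟨u₀, hcard₀⟩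
    rw [Pi.zero_apply] at h0
    rw [← h0]
    simp only [koszulD]
    rw [Fin.sum_univ_castSucc, dif_neg (by exact last_not_mem_upF),
      vextD_mem_last v _ (Finset.mem_insert_self _ _), mul_zero, add_zero]
    refine Finset.sum_congr rfl fun k _ => ?_
    by_cases hk : k ∈ u₀
    · rw [dif_pos (mem_upF.2 hk), dif_pos hk]
    · rw [dif_neg (fun hh => hk (mem_upF.1 hh)), dif_neg hk, filter_upF_lt]
      congr 1
      exact vextD_upF v _ _ (by rw [upF_insert])

lemma key1 (f : Fin (m+1) → MvPolynomial σ K) (i : ℕ)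
    (W : KIdx (m+1) (i+1) → MvPolynomial σ K) (v : KIdx m i → MvPolynomial σ K)
    (hW : koszulD f i W = vextD v) (t : KIdx m i) :
    koszulD (fun k => f k.castSucc) i (aD W) t
      + ((-1 : MvPolynomial σ K) ^ i * f (Fin.last m)) * bD W t = v t := by
  have h := congrFun hW ⟨upF t.val, by rw [card_upF, t.prop]⟩
  rw [vextD_upF v t _ rfl] at h
  rw [← h]
  simp only [koszulD]
  rw [Fin.sum_univ_castSucc]
  congr 1
  · refine Finset.sum_congr rfl fun k _ => ?_
    by_cases hk : k ∈ t.val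
    · rw [dif_pos hk, dif_pos (mem_upF.2 hk)]
    · rw [dif_neg hk, dif_neg (fun hh => hk (mem_upF.1 hh)), filter_upF_lt]
      congr 1
      simp only [aD]
      exact congrArg W (Subtype.ext (upF_insert k t.val))
  · rw [dif_neg (by exact last_not_mem_upF), filter_upF_lt_last]
    have hti : (#t.val) = i := t.prop
    simp only [bD, hti]

lemma key2 (f : Fin (m+1) → MvPolynomial σ K) (i : ℕ)
    (W : KIdx (m+1) (i+1+1) → MvPolynomial σ K) (v : KIdx m (i+1) → MvPolynomial σ K)
    (hW : koszulD f (i+1) W = vextD v) :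
    koszulD (fun k => f k.castSucc) i (bD W) = 0 := by
  funext t
  have h := congrFun hW ⟨insert (Fin.last m) (upF t.val),
    by rw [Finset.card_insert_of_notMem last_not_mem_upF, card_upF, t.prop]⟩
  rw [vextD_mem_last v _ (Finset.mem_insert_self _ _)] at h
  rw [Pi.zero_apply, ← h]
  simp only [koszulD]
  rw [Fin.sum_univ_castSucc, dif_pos (Finset.mem_insert_self _ _), add_zero]
  refine Finset.sum_congr rfl fun k _ => ?_
  by_cases hk : k ∈ t.val
  · rw [dif_pos hk, dif_pos (Finset.mem_insert_of_mem (mem_upF.2 hk))]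
  · have hk' : k.castSucc ∉ insert (Fin.last m) (upF t.val) := by
      simp only [Finset.mem_insert, not_or]
      exact ⟨(Fin.castSucc_lt_last k).ne, fun hh => hk (mem_upF.1 hh)⟩
    rw [dif_neg hk, dif_neg hk', filter_insert_last_lt, filter_upF_lt]
    congr 1
    simp only [bD]
    refine congrArg W (Subtype.ext ?_)
    show insert (Fin.last m) (upF (insert k t.val))
      = insert k.castSucc (insert (Fin.last m) (upF t.val))
    rw [upF_insert, Finset.insert_comm]

lemma bD_hom (dg : Fin (m+1) → ℕ) (d i : ℕ)
    (w : KIdx (m+1) (i+1) → MvPolynomial σ K) (hle : dg (Fin.last m) ≤ d) :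
    KChainHom (fun k => dg k.castSucc) i (bD (projD dg d w)) (d - dg (Fin.last m)) := by
  intro t
  simp only [bD, projD]
  rw [Finset.sum_insert last_not_mem_upF, sum_upF]
  constructor
  · split_ifs with h
    · rw [show d - (dg (Fin.last m) + ∑ k ∈ t.val, dg k.castSucc)
        = (d - dg (Fin.last m)) - ∑ k ∈ t.val, dg k.castSucc from by omega]
      exact homogeneousComponent_isHomogeneous _ _
    · exact isHomogeneous_zero _ _ _
  · intro hlt
    rw [if_neg (by omega)]

lemma bD_zero (dg : Fin (m+1) → ℕ) (d i : ℕ)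
    (w : KIdx (m+1) (i+1) → MvPolynomial σ K) (hlt : d < dg (Fin.last m))
    (t : KIdx m i) : bD (projD dg d w) t = 0 := by
  simp only [bD, projD]
  rw [Finset.sum_insert last_not_mem_upF, if_neg (by omega)]

end Ext

lemma contra0 {M : ℕ} (f : Fin M → MvPolynomial σ K) (dg : Fin M → ℕ)
    (hhom : ∀ j, (f j).IsHomogeneous (dg j)) (hpos : ∀ j, 0 < dg j)
    (h : KoszulHVanish f dg 0 0) : False := by
  have hhom1 : KChainHom dg 0 (fun _ => (1 : MvPolynomial σ K)) 0 := by
    intro t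
    have ht : t.val = ∅ := Finset.card_eq_zero.mp t.prop
    refine ⟨by rw [ht]; simpa using isHomogeneous_one σ K,
      fun hlt => absurd hlt (by rw [ht]; simp)⟩
  obtain ⟨w, hw⟩ := h (fun _ => 1) hhom1 trivial
  have h0 := congrFun hw ⟨∅, Finset.card_empty⟩
  have h1 := congrArg constantCoeff h0
  simp only [koszulD, map_sum, map_one] at h1
  have hterm : ∀ j ∈ (Finset.univ : Finset (Fin M)),
      constantCoeff (if hj : j ∈ ((⟨∅, Finset.card_empty⟩ : KIdx M 0) : KIdx M 0).val then 0
        else (-1 : MvPolynomial σ K) ^ (((⟨∅, Finset.card_empty⟩ : KIdx M 0) : KIdx M 0).val.filter (fun l => l < j)).card * f j *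
          w ⟨insert j ((⟨∅, Finset.card_empty⟩ : KIdx M 0) : KIdx M 0).val, by
            rw [Finset.card_insert_of_notMem hj, (⟨∅, Finset.card_empty⟩ : KIdx M 0).prop]⟩) = 0 := by
    intro j _
    rw [dif_neg (Finset.notMem_empty j), map_mul, map_mul]
    have : constantCoeff (f j) = 0 := by
      rw [constantCoeff_eq]
      exact (hhom j).coeff_eq_zero (by simpa using (hpos j).ne)
    simp [this]
  rw [Finset.sum_eq_zero hterm] at h1
  exact zero_ne_one h1

lemma step {m : ℕ} (f : Fin (m+1) → MvPolynomial σ K) (dg : Fin (m+1) → ℕ)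
    (hhom : ∀ j, (f j).IsHomogeneous (dg j)) (hpos : ∀ j, 0 < dg j) (D i : ℕ)
    (hvan : ∀ d ≤ D, KoszulHVanish f dg i d) :
    ∀ d ≤ D, KoszulHVanish (fun k : Fin m => f k.castSucc)
      (fun k => dg k.castSucc) i d := by
  cases i with
  | zero => exact absurd (hvan 0 (Nat.zero_le D)) (fun h => contra0 f dg hhom hpos h)
  | succ i =>
    intro d
    induction d using Nat.strong_induction_on with
    | _ d IH =>
      intro hd v hvhom hvcyc
      obtain ⟨w, hw⟩ := hvan d hd (vextD v) (vextD_hom dg d (i+1) v hvhom)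
        (vextD_cyc f i v hvcyc)
      have hW : koszulD f (i+1) (projD dg d w) = vextD v :=
        koszulD_projD f dg hhom (i+1) d w (vextD v) (vextD_hom dg d (i+1) v hvhom) hw
      by_cases hc : dg (Fin.last m) ≤ d
      · obtain ⟨c, hcD⟩ := IH (d - dg (Fin.last m))
          (by have := hpos (Fin.last m); omega) (by omega)
          (bD (projD dg d w)) (bD_hom dg d (i+1) w hc)
          (key2 f i (projD dg d w) v hW)
        refine ⟨fun t => aD (projD dg d w) t
          + ((-1 : MvPolynomial σ K) ^ (i+1) * f (Fin.last m)) * c t, ?_⟩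
        rw [koszulD_add_mul]
        funext t
        rw [hcD]
        exact key1 f (i+1) (projD dg d w) v hW t
      · refine ⟨aD (projD dg d w), ?_⟩
        funext t
        have hk := key1 f (i+1) (projD dg d w) v hW t
        rw [bD_zero dg d (i+1) w (by omega) t, mul_zero, add_zero] at hk
        exact hk

end GBPaperAux

open GBPaper

/-- if the degree-`≤ D` part of the `i`-th Koszul homology of
`(f_1,…,f_M)` vanishes, then so does that of `(f_1,…,f_j)` for every `1 ≤ j < M`. -/
theorem stmt9 {K : Type*} [Field K] {n M : ℕ}
    (f : Fin M → MvPolynomial (Fin n) K) (dg : Fin M → ℕ)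
    (hhom : ∀ i, (f i).IsHomogeneous (dg i)) (hpos : ∀ i, 0 < dg i)
    (D i : ℕ)
    (hvan : ∀ d : ℕ, d ≤ D → KoszulHVanish f dg i d) :
    ∀ j : ℕ, 1 ≤ j → (hj : j < M) → ∀ d : ℕ, d ≤ D →
      KoszulHVanish (fun k : Fin j => f (Fin.castLE hj.le k))
        (fun k : Fin j => dg (Fin.castLE hj.le k)) i d := by
  intro j hj1 hjM
  have main : ∀ c m : ℕ, ∀ _hm : m + c = M, ∀ d : ℕ, d ≤ D →
      KoszulHVanish (fun k : Fin m => f (Fin.castLE (by omega) k))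
        (fun k : Fin m => dg (Fin.castLE (by omega) k)) i d := by
    intro c
    induction c with
    | zero =>
      intro m hm
      have hmM : m = M := by omega
      subst hmM
      exact hvan
    | succ c ih =>
      intro m hm
      have h1 := ih (m+1) (by omega)
      exact GBPaperAux.step (fun k : Fin (m+1) => f (Fin.castLE (by omega) k))
        (fun k : Fin (m+1) => dg (Fin.castLE (by omega) k))
        (fun k => hhom _) (fun k => hpos _) D i h1
  intro d hd
  exact main (M - j) j (by omega) d hd
end

section
/- Let f_1,...,f_m be homogeneous polynomials of positive degrees d_1,...,d_m in R = K[x_1,...,x_n], with I = ⟨f_1,...,f_m⟩ and D = d_reg(I) finite. Then (f_1,...,f_m) is cryptographic semi-regular if and only if H_1(K_•(f_1,...,f_m))_d = 0 for all d ≤ D − 1, if and only if HS_{R/I}(z) = [∏_{j=1}^m (1-z^{d_j})/(1-z)^n], where [·] truncates the power series after the last consecutive positive coefficient. -/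
open MvPolynomial

open GBPaper



namespace Aux
open MvPolynomial

variable {K : Type*} [Field K]

theorem homogComp_mul {σ : Type*} {g c : MvPolynomial σ K} {e : ℕ}
    (hg : g.IsHomogeneous e) (t : ℕ) :
    homogeneousComponent t (c * g) =
      if e ≤ t then homogeneousComponent (t - e) c * g else 0 := by
  conv_lhs => rw [← sum_homogeneousComponent c, Finset.sum_mul, map_sum]
  have hterm : ∀ k, homogeneousComponent t ((homogeneousComponent k c) * g)
      = if t = k + e then (homogeneousComponent k c) * g else 0 := by
    intro k
    exact homogeneousComponent_of_mem
      (((homogeneousComponent_isHomogeneous k c).mul hg))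
  by_cases he : e ≤ t
  · rw [if_pos he]
    rw [Finset.sum_congr rfl fun k _ => hterm k]
    rw [Finset.sum_eq_single (t - e)]
    · rw [if_pos (by omega)]
    · intro b _ hb
      rw [if_neg (by omega)]
    · intro hmem
      rw [if_pos (by omega),
        homogeneousComponent_eq_zero _ c (by simp at hmem; omega), zero_mul]
  · rw [if_neg he]
    rw [Finset.sum_congr rfl fun k _ => hterm k]
    apply Finset.sum_eq_zero
    intro k _
    rw [if_neg (by omega)]

theorem mem_span_homog {σ : Type*} {M : ℕ} (f : Fin M → MvPolynomial σ K) (dg : Fin M → ℕ)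
    (hhom : ∀ i, (f i).IsHomogeneous (dg i)) (s : Set (Fin M)) {p : MvPolynomial σ K} {t : ℕ}
    (hp : p.IsHomogeneous t) (hmem : p ∈ Ideal.span (f '' s)) :
    ∃ c : Fin M → MvPolynomial σ K,
      (∀ j, (c j).IsHomogeneous (t - dg j)) ∧ (∀ j, j ∉ s → c j = 0) ∧
      (∀ j, t < dg j → c j = 0) ∧ p = ∑ j, c j * f j := by
  classical
  set g : Fin M → MvPolynomial σ K := fun j => if j ∈ s then f j else 0 with hg
  have hghom : ∀ j, (g j).IsHomogeneous (dg j) := by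
    intro j; rw [hg]; dsimp only
    split
    · exact hhom j
    · exact isHomogeneous_zero _ _ _
  have hspan : Ideal.span (f '' s) = Ideal.span (Set.range g) := by
    apply le_antisymm <;> rw [Ideal.span_le]
    · rintro x ⟨j, hj, rfl⟩
      have : f j = g j := by rw [hg]; simp [hj]
      rw [this]
      exact Ideal.subset_span ⟨j, rfl⟩
    · rintro x ⟨j, rfl⟩
      rw [hg]; dsimp only
      split
      · exact Ideal.subset_span ⟨j, by assumption, rfl⟩
      · exact Ideal.zero_mem _
  rw [hspan] at hmem
  rw [Ideal.span, Submodule.mem_span_range_iff_exists_fun] at hmem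
  obtain ⟨c, hc⟩ := hmem
  refine ⟨fun j => if j ∈ s ∧ dg j ≤ t then homogeneousComponent (t - dg j) (c j) else 0,
    ?_, ?_, ?_, ?_⟩
  · intro j
    dsimp only
    split
    · exact homogeneousComponent_isHomogeneous _ _
    · exact isHomogeneous_zero _ _ _
  · intro j hj; dsimp only; rw [if_neg (by tauto)]
  · intro j hj; dsimp only; rw [if_neg (by omega)]
  · have h1 : p = homogeneousComponent t p := by
      rw [homogeneousComponent_of_mem hp, if_pos rfl]
    conv_lhs => rw [h1, ← hc]
    have h2 : ∀ j : Fin M, c j • g j = c j * g j := fun j => by rw [smul_eq_mul]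
    rw [Finset.sum_congr rfl fun j _ => h2 j, map_sum]
    apply Finset.sum_congr rfl
    intro j _
    dsimp only
    rw [homogComp_mul (hghom j) t]
    by_cases hjs : j ∈ s
    · have : g j = f j := by rw [hg]; simp [hjs]
      rw [this]
      by_cases hd : dg j ≤ t
      · rw [if_pos hd, if_pos ⟨hjs, hd⟩]
      · rw [if_neg hd, if_neg (by tauto), zero_mul]
    · have hz : g j = 0 := by rw [hg]; simp [hjs]
      rw [hz, mul_zero, if_neg (show ¬(j ∈ s ∧ dg j ≤ t) by tauto), zero_mul]
      simp

end Aux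

namespace Aux
open MvPolynomial

variable {K : Type*} [Field K]

lemma fdegree_add {σ : Type*} (a b : σ →₀ ℕ) : (a + b).degree = a.degree + b.degree := by
  simp only [Finsupp.degree_eq_weight_one, map_add]

lemma fdegree_single {σ : Type*} (i : σ) : (Finsupp.single i 1 : σ →₀ ℕ).degree = 1 := by
  classical
  exact Finsupp.degree_single i 1

/-- the set of degrees `d` with `R_d ⊆ I` is upward closed -/
theorem Dset_up {σ : Type*} (I : Ideal (MvPolynomial σ K)) (d : ℕ)
    (h : ∀ g : MvPolynomial σ K, g.IsHomogeneous d → g ∈ I) :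
    ∀ g : MvPolynomial σ K, g.IsHomogeneous (d + 1) → g ∈ I := by
  intro g hg
  rw [as_sum g]
  apply Ideal.sum_mem
  intro m hm
  have hdeg : m.degree = d + 1 := by
    by_contra hne
    exact (mem_support_iff.mp hm) (hg.coeff_eq_zero hne)
  have hm0 : m ≠ 0 := by
    intro h0
    rw [h0, map_zero] at hdeg
    omega
  obtain ⟨i, hi⟩ : ∃ i, m i ≠ 0 := by
    by_contra hc
    push_neg at hc
    exact hm0 (Finsupp.ext hc)
  have hle : Finsupp.single i 1 ≤ m := Finsupp.single_le_iff.mpr (by omega)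
  have hsplit : Finsupp.single i 1 + (m - Finsupp.single i 1) = m := add_tsub_cancel_of_le hle
  have hdeg2 : (m - Finsupp.single i 1).degree = d := by
    have := fdegree_add (Finsupp.single i 1) (m - Finsupp.single i 1)
    rw [hsplit, hdeg, fdegree_single] at this
    omega
  have heq : (monomial m) (coeff m g) =
      X i * (monomial (m - Finsupp.single i 1)) (coeff m g) := by
    rw [X, monomial_mul, one_mul, hsplit]
  rw [heq]
  exact Ideal.mul_mem_left _ _ (h _ (isHomogeneous_monomial _ hdeg2))

section DegReg
variable {n M : ℕ} (f : Fin M → MvPolynomial (Fin n) K) (dg : Fin M → ℕ)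

theorem degReg_mem (hArt : ∃ d : ℕ, ∀ g : MvPolynomial (Fin n) K, g.IsHomogeneous d →
      g ∈ Ideal.span (Set.range f)) :
    ∀ g : MvPolynomial (Fin n) K, g.IsHomogeneous (GBPaper.degReg K (Ideal.span (Set.range f))) →
      g ∈ Ideal.span (Set.range f) :=
  Nat.sInf_mem hArt

theorem degReg_le_mem (hArt : ∃ d : ℕ, ∀ g : MvPolynomial (Fin n) K, g.IsHomogeneous d →
      g ∈ Ideal.span (Set.range f)) {t : ℕ}
    (ht : GBPaper.degReg K (Ideal.span (Set.range f)) ≤ t) :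
    ∀ g : MvPolynomial (Fin n) K, g.IsHomogeneous t → g ∈ Ideal.span (Set.range f) := by
  induction t, ht using Nat.le_induction with
  | base => exact degReg_mem f hArt
  | succ t ht ih => exact Dset_up _ t ih

theorem lt_degReg_exists {t : ℕ} (ht : t < GBPaper.degReg K (Ideal.span (Set.range f))) :
    ∃ g : MvPolynomial (Fin n) K, g.IsHomogeneous t ∧ g ∉ Ideal.span (Set.range f) := by
  have := Nat.notMem_of_lt_sInf ht
  simp only [Set.mem_setOf_eq, not_forall] at this
  obtain ⟨g, hg, hgI⟩ := this
  exact ⟨g, hg, hgI⟩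

theorem one_le_degReg (hhom : ∀ i, (f i).IsHomogeneous (dg i)) (hpos : ∀ i, 0 < dg i)
    (hArt : ∃ d : ℕ, ∀ g : MvPolynomial (Fin n) K, g.IsHomogeneous d →
      g ∈ Ideal.span (Set.range f)) :
    1 ≤ GBPaper.degReg K (Ideal.span (Set.range f)) := by
  by_contra hlt
  have h0 : GBPaper.degReg K (Ideal.span (Set.range f)) = 0 := by omega
  have h1 : (1 : MvPolynomial (Fin n) K) ∈ Ideal.span (Set.range f) := by
    apply degReg_mem f hArt
    rw [h0]
    exact isHomogeneous_one _ _
  have hker : Ideal.span (Set.range f) ≤ RingHom.ker (constantCoeff (σ := Fin n) (R := K)) := by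
    rw [Ideal.span_le]
    rintro x ⟨j, rfl⟩
    have : constantCoeff (f j) = 0 := by
      rw [show (constantCoeff (f j) : K) = coeff 0 (f j) from rfl]
      apply (hhom j).coeff_eq_zero
      rw [map_zero]
      exact fun h => by have := hpos j; omega
    exact this
  have := hker h1
  rw [RingHom.mem_ker, map_one] at this
  exact one_ne_zero this

end DegReg
end Aux


namespace Aux
open MvPolynomial PowerSeries

variable {K : Type*} [Field K]

/-- number of monomials in `n` variables of degree `t` -/
def cnt (n t : ℕ) : ℕ := (Finset.Nat.antidiagonalTuple n t).card

theorem cnt_succ (n t : ℕ) : cnt (n+1) t = ∑ i ∈ Finset.range (t+1), cnt n (t - i) := by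
  show (List.Nat.antidiagonalTuple (n+1) t).length = _
  have h2 : List.Nat.antidiagonalTuple (n+1) t
      = (List.Nat.antidiagonal t).flatMap fun ni =>
        List.map (fun x : Fin n → ℕ => (Fin.cons ni.1 x : Fin (n+1) → ℕ))
          (List.Nat.antidiagonalTuple n ni.2) := rfl
  rw [h2, List.length_flatMap]
  have h3 : List.Nat.antidiagonal t = (List.range (t+1)).map fun i => (i, t - i) := rfl
  rw [h3, List.map_map]
  have h4 : ((List.length ∘ fun ni : ℕ × ℕ =>
        List.map (fun x : Fin n → ℕ => (Fin.cons ni.1 x : Fin (n+1) → ℕ))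
          (List.Nat.antidiagonalTuple n ni.2)) ∘
        fun i => (i, t - i)) = fun i => cnt n (t - i) := by
    funext i
    simp only [Function.comp_apply, List.length_map]
    rfl
  simp only [Function.comp_def] at h4 ⊢
  rw [h4]
  rfl

theorem cnt_zero_zero : cnt 0 0 = 1 := by
  rw [cnt, Finset.Nat.antidiagonalTuple_zero_zero]
  rfl

theorem cnt_zero_succ (t : ℕ) : cnt 0 (t+1) = 0 := by
  rw [cnt, Finset.Nat.antidiagonalTuple_zero_succ]
  rfl

theorem cnt_succ_zero (n : ℕ) : cnt (n+1) 0 = cnt n 0 := by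
  rw [cnt_succ]
  simp

theorem cnt_succ' (n t : ℕ) : cnt (n+1) (t+1) = cnt n (t+1) + cnt (n+1) t := by
  rw [cnt_succ n (t+1), Finset.sum_range_succ' _ (t+1), cnt_succ n t]
  simp only [Nat.sub_zero, Nat.succ_sub_succ_eq_sub]
  omega

/-- the generating series of monomial counts is `1/(1-z)^n` -/
theorem cnt_series (n : ℕ) :
    (PowerSeries.mk fun t => (cnt n t : ℤ)) * (1 - PowerSeries.X) ^ n = 1 := by
  induction n with
  | zero =>
    rw [pow_zero, mul_one]
    ext t
    rw [PowerSeries.coeff_mk, PowerSeries.coeff_one]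
    cases t with
    | zero => simp [cnt_zero_zero]
    | succ t => simp [cnt_zero_succ]
  | succ n ih =>
    have key : (PowerSeries.mk fun t => (cnt (n+1) t : ℤ)) * (1 - PowerSeries.X)
        = PowerSeries.mk fun t => (cnt n t : ℤ) := by
      ext t
      rw [mul_one_sub, map_sub, PowerSeries.coeff_mk, ← pow_one (PowerSeries.X (R := ℤ)),
        PowerSeries.coeff_mul_X_pow', PowerSeries.coeff_mk]
      cases t with
      | zero => simp [cnt_succ_zero]
      | succ t =>
        rw [if_pos (by omega), PowerSeries.coeff_mk]
        simp only [Nat.add_sub_cancel]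
        rw [cnt_succ' n t]
        push_cast
        ring
    calc (PowerSeries.mk fun t => (cnt (n+1) t : ℤ)) * (1 - PowerSeries.X) ^ (n+1)
        = ((PowerSeries.mk fun t => (cnt (n+1) t : ℤ)) * (1 - PowerSeries.X))
          * (1 - PowerSeries.X) ^ n := by ring
      _ = 1 := by rw [key, ih]

theorem invOneSubPow_eq_cnt (n : ℕ) :
    ((PowerSeries.invOneSubPow ℤ n : (PowerSeries ℤ)ˣ) : PowerSeries ℤ)
      = PowerSeries.mk fun t => (cnt n t : ℤ) := by
  have h1 : ((PowerSeries.invOneSubPow ℤ n : (PowerSeries ℤ)ˣ) : PowerSeries ℤ)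
      = 1 * ((PowerSeries.invOneSubPow ℤ n : (PowerSeries ℤ)ˣ) : PowerSeries ℤ) := by ring
  rw [h1, ← cnt_series n, mul_assoc]
  have h2 : (1 - PowerSeries.X) ^ n
        * ((PowerSeries.invOneSubPow ℤ n : (PowerSeries ℤ)ˣ) : PowerSeries ℤ) = 1 := by
    rw [← PowerSeries.invOneSubPow_inv_eq_one_sub_pow]
    exact (PowerSeries.invOneSubPow ℤ n).inv_val
  rw [h2, mul_one]

/-- helper: degree as a sum over all of `Fin n` -/
theorem degree_eq_sum_univ {n : ℕ} (d : Fin n →₀ ℕ) : d.degree = ∑ i : Fin n, d i := by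
  rw [Finsupp.degree]
  apply Finset.sum_subset (Finset.subset_univ _)
  intro i _ hi
  exact Finsupp.notMem_support_iff.mp hi

noncomputable def degEquiv (n t : ℕ) :
    {d : Fin n →₀ ℕ // d.degree = t} ≃ {x : Fin n → ℕ // x ∈ Finset.Nat.antidiagonalTuple n t} :=
  Finsupp.equivFunOnFinite.subtypeEquiv fun d => by
    rw [Finset.Nat.mem_antidiagonalTuple, degree_eq_sum_univ d]
    exact Iff.rfl

noncomputable instance degFintype (n t : ℕ) : Fintype {d : Fin n →₀ ℕ // d.degree = t} :=
  Fintype.ofEquiv _ (degEquiv n t).symm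

theorem card_deg (n t : ℕ) : Fintype.card {d : Fin n →₀ ℕ // d.degree = t} = cnt n t := by
  rw [Fintype.card_congr (degEquiv n t), Fintype.card_coe]
  rfl

noncomputable instance degFintype' (n t : ℕ) : Fintype ↑{d : Fin n →₀ ℕ | d.degree = t} :=
  degFintype n t

noncomputable def homogEquiv (n t : ℕ) :
    (homogeneousSubmodule (Fin n) K t) ≃ₗ[K] ({d : Fin n →₀ ℕ // d.degree = t} → K) :=
  (LinearEquiv.ofEq _ _ (homogeneousSubmodule_eq_finsupp_supported (Fin n) K t)) ≪≫ₗ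
    (AddMonoidAlgebra.supportedEquivFinsupp _) ≪≫ₗ
    (Finsupp.linearEquivFunOnFinite K K _)

instance homogFD (n t : ℕ) : FiniteDimensional K (homogeneousSubmodule (Fin n) K t) :=
  Module.Finite.equiv (homogEquiv n t).symm

theorem finrank_homog (n t : ℕ) :
    Module.finrank K (homogeneousSubmodule (Fin n) K t) = cnt n t := by
  rw [LinearEquiv.finrank_eq (homogEquiv (K := K) n t),
    Module.finrank_fintype_fun_eq_card, card_deg]

end Aux


namespace Aux
open MvPolynomial

variable {K : Type*} [Field K] {n : ℕ}

instance (priority := 1000) noZeroSMul {V : Type*} [AddCommGroup V] [Module K V] :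
    NoZeroSMulDivisors K V := by
  constructor
  intro c x h
  by_cases hc : c = 0
  · exact Or.inl hc
  · right
    have h2 := congrArg (fun y => c⁻¹ • y) h
    simpa [smul_smul, inv_mul_cancel₀ hc] using h2

/-- the image of the degree-`t` piece in `R/J` -/
noncomputable def piece (J : Ideal (MvPolynomial (Fin n) K)) (t : ℕ) :
    Submodule K ((MvPolynomial (Fin n) K) ⧸ J) :=
  (homogeneousSubmodule (Fin n) K t).map (Ideal.Quotient.mkₐ K J).toLinearMap

theorem hilbertFn_eq (J : Ideal (MvPolynomial (Fin n) K)) (t : ℕ) :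
    GBPaper.hilbertFn K J t = Module.finrank K (piece J t) := rfl

instance pieceFD (J : Ideal (MvPolynomial (Fin n) K)) (t : ℕ) :
    FiniteDimensional K (piece J t) :=
  Module.Finite.iff_fg.mpr (Submodule.FG.map _ (Module.Finite.iff_fg.mp (homogFD n t)))

theorem mem_piece {J : Ideal (MvPolynomial (Fin n) K)} {t : ℕ}
    {x : (MvPolynomial (Fin n) K) ⧸ J} :
    x ∈ piece J t ↔ ∃ p : MvPolynomial (Fin n) K,
      p.IsHomogeneous t ∧ Ideal.Quotient.mk J p = x := by
  constructor
  · rintro ⟨p, hp, rfl⟩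
    exact ⟨p, (mem_homogeneousSubmodule _ _).mp hp, rfl⟩
  · rintro ⟨p, hp, rfl⟩
    exact ⟨p, (mem_homogeneousSubmodule _ _).mpr hp, rfl⟩

theorem hilbert_zero_iff (J : Ideal (MvPolynomial (Fin n) K)) (t : ℕ) :
    GBPaper.hilbertFn K J t = 0 ↔
      ∀ p : MvPolynomial (Fin n) K, p.IsHomogeneous t → p ∈ J := by
  rw [hilbertFn_eq, Submodule.finrank_eq_zero]
  constructor
  · intro hb p hp
    have : Ideal.Quotient.mk J p ∈ piece J t := mem_piece.mpr ⟨p, hp, rfl⟩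
    rw [hb] at this
    rw [← Ideal.Quotient.eq_zero_iff_mem]
    exact this
  · intro h
    rw [eq_bot_iff]
    intro x hx
    obtain ⟨p, hp, rfl⟩ := mem_piece.mp hx
    rw [Submodule.mem_bot]
    exact Ideal.Quotient.eq_zero_iff_mem.mpr (h p hp)

/-- multiplication by `a` restricted to the degree-`s` piece of `R/J` -/
noncomputable def mulMap (J : Ideal (MvPolynomial (Fin n) K)) (a : (MvPolynomial (Fin n) K) ⧸ J)
    (s : ℕ) : piece J s →ₗ[K] (MvPolynomial (Fin n) K) ⧸ J :=
  (LinearMap.mulLeft K a).domRestrict (piece J s)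

/-- the dimension of the degree-`s` part of `(J : f₀)/J` -/
noncomputable def kerDim (J : Ideal (MvPolynomial (Fin n) K)) (f₀ : MvPolynomial (Fin n) K)
    (s : ℕ) : ℕ :=
  Module.finrank K (LinearMap.ker (mulMap J (Ideal.Quotient.mk J f₀) s))

theorem kerDim_zero_iff (J : Ideal (MvPolynomial (Fin n) K)) (f₀ : MvPolynomial (Fin n) K)
    (s : ℕ) : kerDim J f₀ s = 0 ↔
      ∀ g : MvPolynomial (Fin n) K, g.IsHomogeneous s → g * f₀ ∈ J → g ∈ J := by
  rw [kerDim, Submodule.finrank_eq_zero]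
  constructor
  · intro hb g hg hgf
    have hx : Ideal.Quotient.mk J g ∈ piece J s := mem_piece.mpr ⟨g, hg, rfl⟩
    have : (⟨Ideal.Quotient.mk J g, hx⟩ : piece J s) ∈
        LinearMap.ker (mulMap J (Ideal.Quotient.mk J f₀) s) := by
      rw [LinearMap.mem_ker]
      show Ideal.Quotient.mk J f₀ * Ideal.Quotient.mk J g = 0
      rw [← map_mul, mul_comm, Ideal.Quotient.eq_zero_iff_mem]
      exact hgf
    rw [hb, Submodule.mem_bot] at this
    rw [← Ideal.Quotient.eq_zero_iff_mem]
    exact congrArg Subtype.val this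
  · intro h
    rw [eq_bot_iff]
    rintro ⟨x, hx⟩ hker
    obtain ⟨p, hp, rfl⟩ := mem_piece.mp hx
    rw [LinearMap.mem_ker] at hker
    have : Ideal.Quotient.mk J f₀ * Ideal.Quotient.mk J p = 0 := hker
    rw [← map_mul, Ideal.Quotient.eq_zero_iff_mem, mul_comm] at this
    have hpJ := h p hp this
    simp only [Submodule.mem_bot, Submodule.mk_eq_zero]
    rw [Ideal.Quotient.eq_zero_iff_mem]
    exact hpJ

end Aux


namespace Aux
open MvPolynomial

variable {K : Type*} [Field K] {n : ℕ}

section Step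
variable (J J' : Ideal (MvPolynomial (Fin n) K)) (f₀ : MvPolynomial (Fin n) K) {e t : ℕ}

/-- the quotient map `R/J → R/J'` as a `K`-linear map -/
noncomputable def qmap (hle : J ≤ J') :
    ((MvPolynomial (Fin n) K) ⧸ J) →ₗ[K] ((MvPolynomial (Fin n) K) ⧸ J') :=
  (Ideal.Quotient.liftₐ J (Ideal.Quotient.mkₐ K J')
    (fun a ha => by
      rw [Ideal.Quotient.mkₐ_eq_mk, Ideal.Quotient.eq_zero_iff_mem]
      exact hle ha)).toLinearMap

theorem qmap_mk (hle : J ≤ J') (p : MvPolynomial (Fin n) K) :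
    qmap J J' hle (Ideal.Quotient.mk J p) = Ideal.Quotient.mk J' p := by
  simp [qmap, Ideal.Quotient.liftₐ_apply]
  rfl

theorem mem_ker_qmap (hle : J ≤ J') (x : (MvPolynomial (Fin n) K) ⧸ J) :
    x ∈ LinearMap.ker (qmap J J' hle) ↔ ∃ u ∈ J', Ideal.Quotient.mk J u = x := by
  obtain ⟨p, rfl⟩ := Ideal.Quotient.mk_surjective x
  rw [LinearMap.mem_ker, qmap_mk, Ideal.Quotient.eq_zero_iff_mem]
  constructor
  · intro h; exact ⟨p, h, rfl⟩
  · rintro ⟨u, hu, huv⟩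
    have : p - u ∈ J := by
      rw [← Ideal.Quotient.mk_eq_mk_iff_sub_mem]
      exact huv.symm
    have := J'.add_mem (hle this) hu
    rwa [sub_add_cancel] at this

variable (hf₀ : f₀.IsHomogeneous e) (hle : J ≤ J') (hmem : f₀ ∈ J')
  (hdec : ∀ p : MvPolynomial (Fin n) K, p.IsHomogeneous t → p ∈ J' →
    ∃ c q : MvPolynomial (Fin n) K, c.IsHomogeneous (t - e) ∧ (t < e → c = 0) ∧
      q ∈ J ∧ p = c * f₀ + q)

include hf₀ hle hmem hdec

theorem inf_ker_eq (het : e ≤ t) :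
    piece J t ⊓ LinearMap.ker (qmap J J' hle)
      = LinearMap.range (mulMap J (Ideal.Quotient.mk J f₀) (t - e)) := by
  apply le_antisymm
  · rintro x ⟨hxB, hxK⟩
    obtain ⟨p, hp, rfl⟩ := mem_piece.mp hxB
    obtain ⟨u, huJ', hu⟩ := (mem_ker_qmap J J' hle _).mp hxK
    have hpu : p - u ∈ J := by
      rw [← Ideal.Quotient.mk_eq_mk_iff_sub_mem]
      exact hu.symm
    have hpJ' : p ∈ J' := by
      have := J'.add_mem (hle hpu) huJ'
      rwa [sub_add_cancel] at this
    obtain ⟨c, q, hc, _, hqJ, hpeq⟩ := hdec p hp hpJ'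
    refine ⟨⟨Ideal.Quotient.mk J c, mem_piece.mpr ⟨c, hc, rfl⟩⟩, ?_⟩
    show Ideal.Quotient.mk J f₀ * Ideal.Quotient.mk J c = Ideal.Quotient.mk J p
    rw [← map_mul, Ideal.Quotient.mk_eq_mk_iff_sub_mem, hpeq]
    have : f₀ * c - (c * f₀ + q) = -q := by ring
    rw [this]
    exact J.neg_mem hqJ
  · rintro x ⟨⟨y, hy⟩, rfl⟩
    obtain ⟨c, hc, rfl⟩ := mem_piece.mp hy
    have hval : mulMap J (Ideal.Quotient.mk J f₀) (t - e)
        ⟨Ideal.Quotient.mk J c, hy⟩ = Ideal.Quotient.mk J (f₀ * c) := by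
      show Ideal.Quotient.mk J f₀ * Ideal.Quotient.mk J c = _
      rw [map_mul]
    rw [hval]
    constructor
    · apply mem_piece.mpr
      refine ⟨f₀ * c, ?_, rfl⟩
      have := hf₀.mul hc
      rwa [Nat.add_sub_cancel' het] at this
    · exact (mem_ker_qmap J J' hle _).mpr ⟨f₀ * c, Ideal.mul_mem_right c J' hmem, rfl⟩

theorem inf_ker_bot (het : t < e) :
    piece J t ⊓ LinearMap.ker (qmap J J' hle) = ⊥ := by
  rw [eq_bot_iff]
  rintro x ⟨hxB, hxK⟩
  obtain ⟨p, hp, rfl⟩ := mem_piece.mp hxB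
  obtain ⟨u, huJ', hu⟩ := (mem_ker_qmap J J' hle _).mp hxK
  have hpu : p - u ∈ J := by
    rw [← Ideal.Quotient.mk_eq_mk_iff_sub_mem]
    exact hu.symm
  have hpJ' : p ∈ J' := by
    have := J'.add_mem (hle hpu) huJ'
    rwa [sub_add_cancel] at this
  obtain ⟨c, q, _, hc0, hqJ, hpeq⟩ := hdec p hp hpJ'
  rw [Submodule.mem_bot, Ideal.Quotient.eq_zero_iff_mem, hpeq, hc0 het, zero_mul, zero_add]
  exact hqJ

theorem finrank_inf_ker :
    Module.finrank K (LinearMap.ker ((qmap J J' hle).domRestrict (piece J t)))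
      = Module.finrank K ↥(piece J t ⊓ LinearMap.ker (qmap J J' hle)) := by
  have h3 : LinearMap.ker ((qmap J J' hle).domRestrict (piece J t))
      = Submodule.comap (piece J t).subtype
          (piece J t ⊓ LinearMap.ker (qmap J J' hle)) := by
    rw [LinearMap.ker_domRestrict]
    ext x
    simp only [Submodule.mem_comap, Submodule.mem_inf]
    exact ⟨fun h => ⟨x.2, h⟩, fun h => h.2⟩
  rw [h3]
  exact LinearEquiv.finrank_eq (Submodule.comapSubtypeEquivOfLe inf_le_left)

theorem range_qmap_eq :
    LinearMap.range ((qmap J J' hle).domRestrict (piece J t)) = piece J' t := by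
  rw [LinearMap.range_domRestrict]
  ext y
  constructor
  · rintro ⟨x, hx, rfl⟩
    obtain ⟨p, hp, rfl⟩ := mem_piece.mp hx
    rw [qmap_mk]
    exact mem_piece.mpr ⟨p, hp, rfl⟩
  · intro hy
    obtain ⟨p, hp, rfl⟩ := mem_piece.mp hy
    exact ⟨Ideal.Quotient.mk J p, mem_piece.mpr ⟨p, hp, rfl⟩, qmap_mk J J' hle p⟩

theorem finrank_piece_step (het : e ≤ t) :
    (GBPaper.hilbertFn K J' t : ℤ) = GBPaper.hilbertFn K J t
      - GBPaper.hilbertFn K J (t - e) + kerDim J f₀ (t - e) := by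
  have h2 := LinearMap.finrank_range_add_finrank_ker ((qmap J J' hle).domRestrict (piece J t))
  rw [range_qmap_eq J J' f₀ hf₀ hle hmem hdec,
    finrank_inf_ker J J' f₀ hf₀ hle hmem hdec,
    inf_ker_eq J J' f₀ hf₀ hle hmem hdec het] at h2
  have h6 := LinearMap.finrank_range_add_finrank_ker (mulMap J (Ideal.Quotient.mk J f₀) (t - e))
  rw [hilbertFn_eq, hilbertFn_eq, hilbertFn_eq]
  rw [show kerDim J f₀ (t - e)
    = Module.finrank K (LinearMap.ker (mulMap J (Ideal.Quotient.mk J f₀) (t - e))) from rfl]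
  omega

theorem finrank_piece_step_lt (het : t < e) :
    GBPaper.hilbertFn K J' t = GBPaper.hilbertFn K J t := by
  have h2 := LinearMap.finrank_range_add_finrank_ker ((qmap J J' hle).domRestrict (piece J t))
  rw [range_qmap_eq J J' f₀ hf₀ hle hmem hdec,
    finrank_inf_ker J J' f₀ hf₀ hle hmem hdec,
    inf_ker_bot J J' f₀ hf₀ hle hmem hdec het, finrank_bot] at h2
  rw [hilbertFn_eq, hilbertFn_eq]
  omega

end Step
end Aux


namespace Aux
open MvPolynomial

variable {K : Type*} [Field K] {n M : ℕ}

section Concrete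
variable (f : Fin M → MvPolynomial (Fin n) K) (dg : Fin M → ℕ)

/-- the ideal generated by the first `i` polynomials -/
noncomputable def Jdl (i : ℕ) : Ideal (MvPolynomial (Fin n) K) :=
  Ideal.span (f '' {j | (j : ℕ) < i})

theorem prevIdeal_eq (i : Fin M) : GBPaper.prevIdeal f i = Jdl f i.val := rfl

theorem Jdl_zero : Jdl f 0 = ⊥ := by
  have : {j : Fin M | (j : ℕ) < 0} = ∅ := by
    ext j; simp
  rw [Jdl, this, Set.image_empty, Ideal.span_empty]

theorem Jdl_top : Jdl f M = Ideal.span (Set.range f) := by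
  have : {j : Fin M | (j : ℕ) < M} = Set.univ := by
    ext j; simp [j.isLt]
  rw [Jdl, this, Set.image_univ]

theorem Jdl_le (i : ℕ) : Jdl f i ≤ Jdl f (i+1) :=
  Ideal.span_mono (Set.image_mono fun j hj => by
    simp only [Set.mem_setOf_eq] at *; omega)

theorem f_mem_Jdl (i : Fin M) : f i ∈ Jdl f (i.val + 1) :=
  Ideal.subset_span ⟨i, by simp, rfl⟩

theorem Jdl_dec (hhom : ∀ i, (f i).IsHomogeneous (dg i)) (i : Fin M) {p : MvPolynomial (Fin n) K}
    {t : ℕ} (hp : p.IsHomogeneous t) (hmem : p ∈ Jdl f (i.val + 1)) :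
    ∃ c q : MvPolynomial (Fin n) K, c.IsHomogeneous (t - dg i) ∧ (t < dg i → c = 0) ∧
      q ∈ Jdl f i.val ∧ p = c * f i + q := by
  obtain ⟨c, hchom, hcsupp, hc0, hpeq⟩ :=
    mem_span_homog f dg hhom {j | (j : ℕ) < i.val + 1} hp hmem
  refine ⟨c i, ∑ j ∈ Finset.univ.erase i, c j * f j, hchom i, hc0 i, ?_, ?_⟩
  · apply Ideal.sum_mem
    intro j hj
    by_cases hcj : c j = 0
    · rw [hcj, zero_mul]; exact Ideal.zero_mem _
    · have hjs : (j : ℕ) < i.val + 1 := by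
        by_contra h
        exact hcj (hcsupp j h)
      have hjne : j ≠ i := (Finset.mem_erase.mp hj).1
      have hvne : (j : ℕ) ≠ (i : ℕ) := fun h => hjne (Fin.ext h)
      exact Ideal.mul_mem_left _ _ (Ideal.subset_span ⟨j, by simp only [Set.mem_setOf_eq]; omega, rfl⟩)
  · rw [hpeq]
    exact (Finset.add_sum_erase _ _ (Finset.mem_univ i)).symm

/-- kernel dimension at level `i`, degree `t` (`0` below degree `dg i`) -/
noncomputable def kD (i : Fin M) (t : ℕ) : ℕ :=
  if dg i ≤ t then kerDim (Jdl f i.val) (f i) (t - dg i) else 0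

theorem hilbert_step (hhom : ∀ i, (f i).IsHomogeneous (dg i)) (i : Fin M) (t : ℕ)
    (het : dg i ≤ t) :
    (GBPaper.hilbertFn K (Jdl f (i.val + 1)) t : ℤ)
      = GBPaper.hilbertFn K (Jdl f i.val) t
        - GBPaper.hilbertFn K (Jdl f i.val) (t - dg i) + kD f dg i t := by
  rw [kD, if_pos het]
  exact finrank_piece_step (Jdl f i.val) (Jdl f (i.val+1)) (f i) (hhom i) (Jdl_le f i.val)
    (f_mem_Jdl f i) (fun p hp hm => Jdl_dec f dg hhom i hp hm) het

theorem hilbert_step_lt (hhom : ∀ i, (f i).IsHomogeneous (dg i)) (i : Fin M) (t : ℕ)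
    (het : t < dg i) :
    GBPaper.hilbertFn K (Jdl f (i.val + 1)) t = GBPaper.hilbertFn K (Jdl f i.val) t :=
  finrank_piece_step_lt (Jdl f i.val) (Jdl f (i.val+1)) (f i) (hhom i) (Jdl_le f i.val)
    (f_mem_Jdl f i) (fun p hp hm => Jdl_dec f dg hhom i hp hm) het

theorem hilbertFn_bot (t : ℕ) :
    GBPaper.hilbertFn K (⊥ : Ideal (MvPolynomial (Fin n) K)) t = cnt n t := by
  rw [hilbertFn_eq]
  have hinj : Function.Injective
      (Ideal.Quotient.mkₐ K (⊥ : Ideal (MvPolynomial (Fin n) K))).toLinearMap := by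
    intro a b h
    have h2 : Ideal.Quotient.mk (⊥ : Ideal (MvPolynomial (Fin n) K)) a
        = Ideal.Quotient.mk ⊥ b := h
    rw [Ideal.Quotient.mk_eq_mk_iff_sub_mem, Ideal.mem_bot, sub_eq_zero] at h2
    exact h2
  rw [piece, ← LinearEquiv.finrank_eq (Submodule.equivMapOfInjective _ hinj
    (homogeneousSubmodule (Fin n) K t))]
  exact finrank_homog n t

/-- the partial product power series -/
noncomputable def Sser (nv : ℕ) (dg : Fin M → ℕ) (i : ℕ) : PowerSeries ℤ :=
  (∏ j ∈ Finset.univ.filter (fun j : Fin M => (j : ℕ) < i),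
    (1 - (PowerSeries.X : PowerSeries ℤ) ^ dg j)) *
    ((PowerSeries.invOneSubPow ℤ nv : (PowerSeries ℤ)ˣ) : PowerSeries ℤ)

theorem Sser_zero : Sser n dg 0
    = ((PowerSeries.invOneSubPow ℤ n : (PowerSeries ℤ)ˣ) : PowerSeries ℤ) := by
  rw [Sser]
  have : Finset.univ.filter (fun j : Fin M => (j : ℕ) < 0) = ∅ := by
    ext j; simp
  rw [this, Finset.prod_empty, one_mul]

theorem Sser_succ (i : ℕ) (h : i < M) :
    Sser n dg (i + 1) = Sser n dg i
      * (1 - (PowerSeries.X : PowerSeries ℤ) ^ dg ⟨i, h⟩) := by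
  rw [Sser, Sser]
  have hins : Finset.univ.filter (fun j : Fin M => (j : ℕ) < i + 1)
      = insert ⟨i, h⟩ (Finset.univ.filter (fun j : Fin M => (j : ℕ) < i)) := by
    ext j
    simp only [Finset.mem_filter, Finset.mem_univ, true_and, Finset.mem_insert]
    constructor
    · intro hj
      by_cases hji : (j : ℕ) = i
      · exact Or.inl (Fin.ext hji)
      · exact Or.inr (by omega)
    · rintro (rfl | hj)
      · simp
      · omega
  rw [hins, Finset.prod_insert (by simp)]
  ring

theorem Sser_top : GBPaper.semiRegSeries n dg = Sser n dg M := by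
  rw [GBPaper.semiRegSeries, Sser]
  congr 1
  apply Finset.prod_congr _ (fun _ _ => rfl)
  ext j
  simp [j.isLt]

end Concrete
end Aux


namespace Aux
open MvPolynomial

variable {K : Type*} [Field K] {n M : ℕ}
variable (f : Fin M → MvPolynomial (Fin n) K) (dg : Fin M → ℕ)

theorem filter_lt_succ (i : ℕ) (h : i < M) :
    Finset.univ.filter (fun j : Fin M => (j : ℕ) < i + 1)
      = insert ⟨i, h⟩ (Finset.univ.filter (fun j : Fin M => (j : ℕ) < i)) := by
  ext j
  simp only [Finset.mem_filter, Finset.mem_univ, true_and, Finset.mem_insert]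
  constructor
  · intro hj
    by_cases hji : (j : ℕ) = i
    · exact Or.inl (Fin.ext hji)
    · exact Or.inr (by omega)
  · rintro (rfl | hj)
    · simp
    · omega

theorem filter_lt_M :
    Finset.univ.filter (fun j : Fin M => (j : ℕ) < M) = Finset.univ := by
  ext j; simp [j.isLt]

theorem series_coeff (hhom : ∀ i, (f i).IsHomogeneous (dg i)) (hpos : ∀ i, 0 < dg i) :
    ∀ t : ℕ, (∀ (j : Fin M) (s : ℕ), s < t → kD f dg j s = 0) →
    ∀ i, i ≤ M → (PowerSeries.coeff t) (Sser n dg i)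
      = (GBPaper.hilbertFn K (Jdl f i) t : ℤ)
        - ∑ j ∈ Finset.univ.filter (fun j : Fin M => (j : ℕ) < i), (kD f dg j t : ℤ) := by
  intro t
  induction t using Nat.strong_induction_on with
  | _ t IH =>
    intro hvan i hiM
    induction i with
    | zero =>
      rw [Sser_zero, invOneSubPow_eq_cnt, PowerSeries.coeff_mk, Jdl_zero, hilbertFn_bot]
      have hf0 : Finset.univ.filter (fun j : Fin M => (j : ℕ) < 0) = ∅ := by ext j; simp
      rw [hf0, Finset.sum_empty, sub_zero]
    | succ i ih =>
      have hiM' : i < M := by omega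
      set ι : Fin M := ⟨i, hiM'⟩ with hι
      rw [Sser_succ dg i hiM', mul_one_sub, map_sub, PowerSeries.coeff_mul_X_pow',
        ih (by omega)]
      have hsum : ∑ j ∈ Finset.univ.filter (fun j : Fin M => (j : ℕ) < i + 1),
            (kD f dg j t : ℤ)
          = (kD f dg ι t : ℤ) + ∑ j ∈ Finset.univ.filter (fun j : Fin M => (j : ℕ) < i),
            (kD f dg j t : ℤ) := by
        rw [filter_lt_succ i hiM', Finset.sum_insert (by simp)]
      by_cases het : dg ι ≤ t
      · rw [if_pos het]
        have ht' : t - dg ι < t := by have := hpos ι; omega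
        have hcoe : (PowerSeries.coeff (t - dg ι)) (Sser n dg i)
            = (GBPaper.hilbertFn K (Jdl f i) (t - dg ι) : ℤ) := by
          rw [IH _ ht' (fun j s hs => hvan j s (by omega)) i (by omega)]
          rw [Finset.sum_eq_zero (fun j _ => by rw [hvan j _ ht', Nat.cast_zero]), sub_zero]
        rw [hcoe, hsum]
        have hstep := hilbert_step f dg hhom ι t het
        have hval : ι.val = i := rfl
        rw [hval] at hstep
        linarith [hstep]
      · rw [if_neg het]
        have hkd0 : kD f dg ι t = 0 := by rw [kD, if_neg het]
        have hstep := hilbert_step_lt f dg hhom ι t (by omega)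
        have hval : ι.val = i := rfl
        rw [hval] at hstep
        have hstep' := congrArg (fun m : ℕ => (m : ℤ)) hstep
        rw [hsum, hkd0]
        push_cast
        linarith [hstep']

theorem hilbert_pos (hArt : ∃ d : ℕ, ∀ g : MvPolynomial (Fin n) K, g.IsHomogeneous d →
      g ∈ Ideal.span (Set.range f)) {t : ℕ}
    (ht : t < GBPaper.degReg K (Ideal.span (Set.range f))) :
    0 < GBPaper.hilbertFn K (Ideal.span (Set.range f)) t := by
  rcases Nat.eq_zero_or_pos (GBPaper.hilbertFn K (Ideal.span (Set.range f)) t) with h | h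
  · exfalso
    obtain ⟨g, hg, hgI⟩ := lt_degReg_exists f ht
    exact hgI ((hilbert_zero_iff _ t).mp h g hg)
  · exact h

theorem dreg_iff_kD :
    GBPaper.IsDRegularSeq f dg (GBPaper.degReg K (Ideal.span (Set.range f))) ↔
      ∀ (j : Fin M) (t : ℕ), t < GBPaper.degReg K (Ideal.span (Set.range f)) →
        kD f dg j t = 0 := by
  constructor
  · intro hreg j t ht
    rw [kD]
    split
    · next het =>
      rw [kerDim_zero_iff]
      intro g hg hgf
      have h := hreg j g (t - dg j) hg (by omega) (by rwa [prevIdeal_eq])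
      rwa [prevIdeal_eq] at h
    · rfl
  · intro hk i g e hg he hmem
    have h := hk i (e + dg i) he
    rw [kD, if_pos (by omega), kerDim_zero_iff] at h
    have h2 := h g (by rwa [Nat.add_sub_cancel]) (by rwa [← prevIdeal_eq])
    rwa [prevIdeal_eq]

theorem second_iff (hhom : ∀ i, (f i).IsHomogeneous (dg i)) (hpos : ∀ i, 0 < dg i)
    (hArt : ∃ d : ℕ, ∀ g : MvPolynomial (Fin n) K, g.IsHomogeneous d →
      g ∈ Ideal.span (Set.range f)) :
    GBPaper.IsDRegularSeq f dg (GBPaper.degReg K (Ideal.span (Set.range f))) ↔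
      ∀ t : ℕ, (GBPaper.hilbertFn K (Ideal.span (Set.range f)) t : ℤ) =
        GBPaper.truncCoeff (GBPaper.semiRegSeries n dg) t := by
  set D := GBPaper.degReg K (Ideal.span (Set.range f)) with hD
  have hD0 : GBPaper.hilbertFn K (Ideal.span (Set.range f)) D = 0 :=
    (hilbert_zero_iff _ D).mpr (degReg_mem f hArt)
  constructor
  · intro hreg
    have hkD := (dreg_iff_kD f dg).mp hreg
    have hcoeff : ∀ s, s ≤ D → (PowerSeries.coeff s) (GBPaper.semiRegSeries n dg)
        = (GBPaper.hilbertFn K (Ideal.span (Set.range f)) s : ℤ)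
          - ∑ j ∈ Finset.univ, (kD f dg j s : ℤ) := by
      intro s hs
      rw [Sser_top, series_coeff f dg hhom hpos s (fun j s' hs' => hkD j s' (by omega)) M
        le_rfl, Jdl_top, filter_lt_M]
    have hlt : ∀ s, s < D → (PowerSeries.coeff s) (GBPaper.semiRegSeries n dg)
        = (GBPaper.hilbertFn K (Ideal.span (Set.range f)) s : ℤ) := by
      intro s hs
      rw [hcoeff s (by omega), Finset.sum_eq_zero
        (fun j _ => by rw [hkD j s hs, Nat.cast_zero]), sub_zero]
    have hposc : ∀ s, s < D → 0 < (PowerSeries.coeff s) (GBPaper.semiRegSeries n dg) := by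
      intro s hs
      rw [hlt s hs]
      exact_mod_cast hilbert_pos f hArt hs
    have hDc : (PowerSeries.coeff D) (GBPaper.semiRegSeries n dg) ≤ 0 := by
      rw [hcoeff D le_rfl, hD0, Nat.cast_zero, zero_sub, neg_nonpos]
      exact Finset.sum_nonneg fun j _ => by positivity
    have hcut : GBPaper.truncCutoff (GBPaper.semiRegSeries n dg) = D := by
      rw [GBPaper.truncCutoff]
      apply le_antisymm
      · exact Nat.sInf_le hDc
      · apply le_csInf ⟨D, hDc⟩
        intro b hb
        by_contra hbD
        have := hposc b (by omega)
        simp only [Set.mem_setOf_eq] at hb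
        omega
    intro t
    rw [GBPaper.truncCoeff, hcut]
    by_cases htD : t < D
    · rw [if_pos htD, hlt t htD]
    · rw [if_neg htD]
      have : GBPaper.hilbertFn K (Ideal.span (Set.range f)) t = 0 :=
        (hilbert_zero_iff _ t).mpr (degReg_le_mem f hArt (by omega))
      rw [this, Nat.cast_zero]
  · intro hHS
    have hlt_cut : ∀ t, t < D → t < GBPaper.truncCutoff (GBPaper.semiRegSeries n dg) := by
      intro t ht
      by_contra hc
      have h1 := hHS t
      rw [GBPaper.truncCoeff, if_neg hc] at h1
      have := hilbert_pos f hArt ht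
      omega
    have hcoeq : ∀ t, t < D → (PowerSeries.coeff t) (GBPaper.semiRegSeries n dg)
        = (GBPaper.hilbertFn K (Ideal.span (Set.range f)) t : ℤ) := by
      intro t ht
      have h1 := hHS t
      rw [GBPaper.truncCoeff, if_pos (hlt_cut t ht)] at h1
      omega
    have hcut_le : GBPaper.truncCutoff (GBPaper.semiRegSeries n dg) ≤ D := by
      by_contra hc
      have h1 := hHS D
      rw [GBPaper.truncCoeff, if_pos (by omega)] at h1
      rw [hD0, Nat.cast_zero] at h1
      have hD_not : D ∉ {t : ℕ | (PowerSeries.coeff t) (GBPaper.semiRegSeries n dg) ≤ 0} :=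
        Nat.notMem_of_lt_sInf (by rw [GBPaper.truncCutoff] at hc; omega)
      simp only [Set.mem_setOf_eq, not_le] at hD_not
      omega
    have hkD : ∀ t, t < D → ∀ j : Fin M, kD f dg j t = 0 := by
      intro t
      induction t using Nat.strong_induction_on with
      | _ t IH =>
        intro ht j
        have hser := series_coeff f dg hhom hpos t
          (fun j' s hs => IH s hs (by omega) j') M le_rfl
        rw [Jdl_top, filter_lt_M, ← Sser_top, hcoeq t ht] at hser
        have hsum0 : ∑ j' ∈ Finset.univ, (kD f dg j' t : ℤ) = 0 := by omega
        have hall := (Finset.sum_eq_zero_iff_of_nonneg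
          (fun j' _ => by positivity)).mp hsum0 j (Finset.mem_univ j)
        exact_mod_cast hall
    exact (dreg_iff_kD f dg).mpr fun j t ht => hkD t ht j

end Aux


namespace Aux
open MvPolynomial

variable {K : Type*} [Field K] {n M : ℕ}

/-- singleton index -/
def sing (j : Fin M) : GBPaper.KIdx M 1 := ⟨{j}, Finset.card_singleton j⟩

theorem kidx_val_congr {α : Type*} {i : ℕ} (w : GBPaper.KIdx M i → α)
    {t t' : GBPaper.KIdx M i} (h : t.val = t'.val) : w t = w t' :=
  congrArg w (Subtype.ext h)

theorem kidx_app {α : Type*} {i : ℕ} (w : GBPaper.KIdx M i → α) (s : Finset (Fin M))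
    (hs : s.card = i) (t' : GBPaper.KIdx M i) (h : s = t'.val) : w ⟨s, hs⟩ = w t' := by
  cases t'
  subst h
  rfl

theorem sing_val (j : Fin M) : (sing j).val = {j} := rfl

theorem kidx1_eq (t : GBPaper.KIdx M 1) : ∃ j, t = sing j := by
  obtain ⟨j, hj⟩ := Finset.card_eq_one.mp t.prop
  exact ⟨j, Subtype.ext hj⟩

/-- 1-chain from a vector -/
noncomputable def chain1 (V : Fin M → MvPolynomial (Fin n) K) : GBPaper.KIdx M 1 →
    MvPolynomial (Fin n) K := fun t => ∑ j ∈ t.val, V j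

theorem chain1_sing (V : Fin M → MvPolynomial (Fin n) K) (j : Fin M) :
    chain1 V (sing j) = V j := Finset.sum_singleton _ _

theorem pair_card {j k : Fin M} (h : j ≠ k) : ({j, k} : Finset (Fin M)).card = 2 := by
  rw [Finset.card_insert_of_notMem (by simp [h]), Finset.card_singleton]

/-- 2-subset from an ordered pair -/
def pairIdx {j k : Fin M} (h : j ≠ k) : GBPaper.KIdx M 2 := ⟨{j, k}, pair_card h⟩

theorem kidx2_nonempty (t : GBPaper.KIdx M 2) : t.val.Nonempty :=
  Finset.card_pos.mp (by rw [t.prop]; omega)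

/-- 2-chain from an antisymmetric matrix -/
noncomputable def chain2 (W : Fin M → Fin M → MvPolynomial (Fin n) K) :
    GBPaper.KIdx M 2 → MvPolynomial (Fin n) K := fun t =>
  W (t.val.min' (kidx2_nonempty t)) (t.val.max' (kidx2_nonempty t))

theorem min'_pair {a b : Fin M} (h : a < b) :
    ({a, b} : Finset (Fin M)).min' (Finset.insert_nonempty _ _) = a := by
  apply le_antisymm (Finset.min'_le _ a (by simp))
  apply Finset.le_min'
  intro y hy
  simp only [Finset.mem_insert, Finset.mem_singleton] at hy
  rcases hy with rfl | rfl
  · exact le_refl _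
  · exact le_of_lt h

theorem max'_pair {a b : Fin M} (h : a < b) :
    ({a, b} : Finset (Fin M)).max' (Finset.insert_nonempty _ _) = b := by
  apply le_antisymm
  · apply Finset.max'_le
    intro y hy
    simp only [Finset.mem_insert, Finset.mem_singleton] at hy
    rcases hy with rfl | rfl
    · exact le_of_lt h
    · exact le_refl _
  · exact Finset.le_max' _ b (by simp)

theorem pair_repr (t : GBPaper.KIdx M 2) :
    t.val = {t.val.min' (kidx2_nonempty t), t.val.max' (kidx2_nonempty t)} := by
  have hlt : t.val.min' (kidx2_nonempty t) < t.val.max' (kidx2_nonempty t) :=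
    Finset.min'_lt_max'_of_card _ (by rw [t.prop]; omega)
  symm
  apply Finset.eq_of_subset_of_card_le
  · intro x hx
    simp only [Finset.mem_insert, Finset.mem_singleton] at hx
    rcases hx with rfl | rfl
    · exact Finset.min'_mem _ _
    · exact Finset.max'_mem _ _
  · rw [t.prop, pair_card (ne_of_lt hlt)]

theorem chain2_pair (W : Fin M → Fin M → MvPolynomial (Fin n) K) {a b : Fin M} (h : a < b) :
    chain2 W (pairIdx (ne_of_lt h)) = W a b := by
  rw [chain2]
  congr 1
  · exact min'_pair h
  · exact max'_pair h

/-- matrix from a 2-chain -/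
noncomputable def Wof (w : GBPaper.KIdx M 2 → MvPolynomial (Fin n) K)
    (j k : Fin M) : MvPolynomial (Fin n) K :=
  if h : j < k then w (pairIdx (ne_of_lt h))
  else if h' : k < j then - w (pairIdx (ne_of_lt h'))
  else 0

theorem Wof_antisym (w : GBPaper.KIdx M 2 → MvPolynomial (Fin n) K) (j k : Fin M) :
    Wof w j k = - Wof w k j := by
  rw [Wof, Wof]
  rcases lt_trichotomy j k with h | h | h
  · rw [dif_pos h, dif_neg (by omega), dif_pos h, neg_neg]
  · rw [dif_neg (by omega), dif_neg (by omega), dif_neg (by omega), dif_neg (by omega), neg_zero]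
  · rw [dif_neg (by omega), dif_pos h, dif_pos h]

theorem Wof_diag (w : GBPaper.KIdx M 2 → MvPolynomial (Fin n) K) (j : Fin M) :
    Wof w j j = 0 := by
  rw [Wof, dif_neg (by omega), dif_neg (by omega)]

theorem chain2_Wof (w : GBPaper.KIdx M 2 → MvPolynomial (Fin n) K) :
    chain2 (Wof w) = w := by
  funext t
  have hlt : t.val.min' (kidx2_nonempty t) < t.val.max' (kidx2_nonempty t) :=
    Finset.min'_lt_max'_of_card _ (by rw [t.prop]; omega)
  rw [chain2, Wof, dif_pos hlt]
  exact kidx_val_congr w (pair_repr t).symm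

/-- the Koszul differential on 0-chains -/
theorem koszulD0_eq (f : Fin M → MvPolynomial (Fin n) K)
    (v : GBPaper.KIdx M 1 → MvPolynomial (Fin n) K) (t : GBPaper.KIdx M 0) :
    GBPaper.koszulD f 0 v t = ∑ j, f j * v (sing j) := by
  have ht : t.val = ∅ := Finset.card_eq_zero.mp t.prop
  simp only [GBPaper.koszulD]
  apply Finset.sum_congr rfl
  intro j _
  rw [dif_neg (by rw [ht]; exact Finset.notMem_empty j)]
  have h1 : t.val.filter (fun l => l < j) = ∅ := by rw [ht]; rfl
  rw [h1, Finset.card_empty, pow_zero, one_mul]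
  congr 1
  apply kidx_app v _ _ (sing j)
  show insert j t.val = {j}
  rw [ht]
  simp

theorem cycle_iff (f : Fin M → MvPolynomial (Fin n) K)
    (v : GBPaper.KIdx M 1 → MvPolynomial (Fin n) K) :
    GBPaper.IsKCycle f 1 v ↔ ∑ j, f j * v (sing j) = 0 := by
  show GBPaper.koszulD f 0 v = 0 ↔ _
  constructor
  · intro h
    rw [← koszulD0_eq f v ⟨∅, rfl⟩, h]
    rfl
  · intro h
    funext t
    show GBPaper.koszulD f 0 v t = 0
    rw [koszulD0_eq f v t, h]

/-- the Koszul differential of an antisymmetric matrix chain -/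
theorem koszulD1_chain2 (f : Fin M → MvPolynomial (Fin n) K)
    (W : Fin M → Fin M → MvPolynomial (Fin n) K)
    (hA : ∀ j k, W j k = - W k j) (hd : ∀ j, W j j = 0) (j : Fin M) :
    GBPaper.koszulD f 1 (chain2 W) (sing j) = ∑ k, f k * W k j := by
  simp only [GBPaper.koszulD]
  apply Finset.sum_congr rfl
  intro k _
  rcases lt_trichotomy j k with h | h | h
  · rw [dif_neg (by rw [sing_val, Finset.mem_singleton]; exact ne_of_gt h)]
    have hfil : (sing j).val.filter (fun l => l < k) = {j} := by
      rw [sing_val, Finset.filter_singleton, if_pos h]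
    rw [hfil, Finset.card_singleton, pow_one]
    have hv := (kidx_app (chain2 W) (insert k (sing j).val)
      (by rw [Finset.card_insert_of_notMem
          (by rw [sing_val, Finset.mem_singleton]; exact ne_of_gt h), (sing j).prop])
      (pairIdx (ne_of_lt h))
      (by show insert k (sing j).val = {j, k}
          rw [sing_val]
          exact Finset.pair_comm k j)).trans (chain2_pair W h)
    rw [hv, hA j k]
    ring
  · subst h
    rw [dif_pos (by rw [sing_val]; exact Finset.mem_singleton_self j), hd, mul_zero]
  · rw [dif_neg (by rw [sing_val, Finset.mem_singleton]; exact ne_of_lt h)]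
    have hfil : (sing j).val.filter (fun l => l < k) = ∅ := by
      rw [sing_val, Finset.filter_singleton, if_neg (by omega)]
    rw [hfil, Finset.card_empty, pow_zero, one_mul]
    have hv := (kidx_app (chain2 W) (insert k (sing j).val)
      (by rw [Finset.card_insert_of_notMem
          (by rw [sing_val, Finset.mem_singleton]; exact ne_of_lt h), (sing j).prop])
      (pairIdx (ne_of_lt h))
      (by show insert k (sing j).val = {k, j}
          rw [sing_val])).trans (chain2_pair W h)
    rw [hv]

theorem kchain1_iff (dg : Fin M → ℕ) (v : GBPaper.KIdx M 1 → MvPolynomial (Fin n) K) (d : ℕ) :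
    GBPaper.KChainHom dg 1 v d ↔
      ∀ j, (v (sing j)).IsHomogeneous (d - dg j) ∧ (d < dg j → v (sing j) = 0) := by
  constructor
  · intro h j
    have := h (sing j)
    rwa [show ∑ l ∈ (sing j).val, dg l = dg j from Finset.sum_singleton _ _] at this
  · intro h t
    obtain ⟨j, rfl⟩ := kidx1_eq t
    rw [show ∑ l ∈ (sing j).val, dg l = dg j from Finset.sum_singleton _ _]
    exact h j

end Aux


namespace Aux
open MvPolynomial

variable {K : Type*} [Field K] {n M : ℕ}
variable (f : Fin M → MvPolynomial (Fin n) K) (dg : Fin M → ℕ)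

/-- homogeneous extraction for boundary matrices -/
theorem extract (hhom : ∀ i, (f i).IsHomogeneous (dg i)) (d : ℕ)
    (V : Fin M → MvPolynomial (Fin n) K)
    (hVh : ∀ j, (V j).IsHomogeneous (d - dg j)) (hV0 : ∀ j, d < dg j → V j = 0)
    (W₀ : Fin M → Fin M → MvPolynomial (Fin n) K)
    (hb : ∀ j, V j = ∑ k, f k * W₀ k j) :
    ∃ W : Fin M → Fin M → MvPolynomial (Fin n) K,
      (∀ j k, (W j k).IsHomogeneous (d - (dg j + dg k))) ∧
      (∀ j k, d < dg j + dg k → W j k = 0) ∧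
      (∀ j, V j = ∑ k, f k * W k j) ∧
      (∀ j k, W₀ j k = 0 → W j k = 0) ∧
      (∀ j k, W₀ j k = - W₀ k j → W j k = - W k j) := by
  classical
  refine ⟨fun j k => if dg j + dg k ≤ d
    then homogeneousComponent (d - (dg j + dg k)) (W₀ j k) else 0, ?_, ?_, ?_, ?_, ?_⟩
  · intro j k
    dsimp only
    split
    · exact homogeneousComponent_isHomogeneous _ _
    · exact isHomogeneous_zero _ _ _
  · intro j k hjk
    dsimp only
    rw [if_neg (by omega)]
  · intro j
    dsimp only
    by_cases hdj : dg j ≤ d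
    · have h1 := congrArg (homogeneousComponent (d - dg j)) (hb j)
      rw [homogeneousComponent_of_mem ((mem_homogeneousSubmodule _ _).mpr (hVh j)),
        if_pos rfl, map_sum] at h1
      rw [h1]
      apply Finset.sum_congr rfl
      intro k _
      rw [mul_comm (f k) (W₀ k j), homogComp_mul (hhom k) (d - dg j)]
      by_cases hck : dg k ≤ d - dg j
      · rw [if_pos hck, if_pos (by omega),
          show d - dg j - dg k = d - (dg k + dg j) from by omega, mul_comm]
      · rw [if_neg hck, if_neg (by omega), mul_zero]
    · rw [hV0 j (by omega)]
      symm
      apply Finset.sum_eq_zero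
      intro k _
      rw [if_neg (by omega), mul_zero]
  · intro j k h0
    dsimp only
    rw [h0, map_zero]
    split <;> rfl
  · intro j k hjk
    dsimp only
    by_cases hc : dg j + dg k ≤ d
    · rw [if_pos hc, if_pos (by omega), hjk, map_neg,
        show d - (dg k + dg j) = d - (dg j + dg k) from by omega]
    · rw [if_neg hc, if_neg (by omega), neg_zero]

theorem reg_syz_trivial (hhom : ∀ i, (f i).IsHomogeneous (dg i))
    (hreg : GBPaper.IsDRegularSeq f dg (GBPaper.degReg K (Ideal.span (Set.range f)))) :
    ∀ (i : ℕ) (d : ℕ), d < GBPaper.degReg K (Ideal.span (Set.range f)) →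
      ∀ V : Fin M → MvPolynomial (Fin n) K,
      (∀ j, (V j).IsHomogeneous (d - dg j)) → (∀ j, d < dg j → V j = 0) →
      (∑ j, f j * V j = 0) → (∀ j : Fin M, i ≤ (j : ℕ) → V j = 0) →
      ∃ W : Fin M → Fin M → MvPolynomial (Fin n) K,
        (∀ j k, W j k = - W k j) ∧ (∀ j, W j j = 0) ∧ (∀ j, V j = ∑ k, f k * W k j) := by
  classical
  intro i
  induction i with
  | zero =>
    intro d hd V hVh hV0 hcyc hsupp
    refine ⟨0, by simp, by simp, ?_⟩
    intro j
    rw [hsupp j (by omega)]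
    simp
  | succ i ih =>
    intro d hd V hVh hV0 hcyc hsupp
    by_cases hiM : i < M
    · set ι : Fin M := ⟨i, hiM⟩ with hι
      by_cases hdι : d < dg ι
      · apply ih d hd V hVh hV0 hcyc
        intro j hj
        by_cases hji : (j : ℕ) = i
        · rw [show j = ι from Fin.ext hji]
          exact hV0 ι hdι
        · exact hsupp j (by omega)
      · push_neg at hdι
        have hsplit0 := Finset.add_sum_erase Finset.univ (fun j => f j * V j) (Finset.mem_univ ι)
        rw [hcyc] at hsplit0
        have hmem : V ι * f ι ∈ GBPaper.prevIdeal f ι := by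
          rw [prevIdeal_eq, mul_comm,
            show f ι * V ι = - ∑ j ∈ Finset.univ.erase ι, f j * V j from
              eq_neg_of_add_eq_zero_left hsplit0]
          refine neg_mem (Ideal.sum_mem _ ?_)
          intro j hj
          by_cases hji : (j : ℕ) < i
          · exact Ideal.mul_mem_right _ _ (Ideal.subset_span ⟨j, hji, rfl⟩)
          · have hjne : j ≠ ι := (Finset.mem_erase.mp hj).1
            have : (j : ℕ) ≠ i := fun h => hjne (Fin.ext h)
            rw [hsupp j (by omega), mul_zero]
            exact Ideal.zero_mem _
        have hg := hreg ι (V ι) (d - dg ι) (hVh ι) (by omega) hmem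
        rw [prevIdeal_eq] at hg
        obtain ⟨c, hch, hcs, hc0, hceq⟩ :=
          mem_span_homog f dg hhom {j | (j : ℕ) < (ι : ℕ)} (hVh ι) hg
        set V' : Fin M → MvPolynomial (Fin n) K :=
          fun j => if j = ι then 0 else V j + f ι * c j with hV'
        have hV'h : ∀ j, (V' j).IsHomogeneous (d - dg j) := by
          intro j
          rw [hV']
          dsimp only
          by_cases hj : j = ι
          · rw [if_pos hj]; exact isHomogeneous_zero _ _ _
          · rw [if_neg hj]
            apply (hVh j).add
            by_cases hjd : dg ι + dg j ≤ d
            · have := (hhom ι).mul (hch j)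
              rwa [show dg ι + (d - dg ι - dg j) = d - dg j from by omega] at this
            · rw [hc0 j (by omega), mul_zero]
              exact isHomogeneous_zero _ _ _
        have hV'0 : ∀ j, d < dg j → V' j = 0 := by
          intro j hjd
          rw [hV']
          dsimp only
          by_cases hj : j = ι
          · rw [if_pos hj]
          · rw [if_neg hj, hV0 j hjd, hc0 j (by omega), mul_zero, add_zero]
        have hcyc' : ∑ j, f j * V' j = 0 := by
          have h1 := Finset.add_sum_erase Finset.univ (fun j => f j * V' j) (Finset.mem_univ ι)
          rw [← h1, show V' ι = 0 from if_pos rfl, mul_zero, zero_add]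
          have h2 : ∀ j ∈ Finset.univ.erase ι, f j * V' j = f j * V j + f ι * (f j * c j) := by
            intro j hj
            rw [show V' j = V j + f ι * c j from if_neg (Finset.mem_erase.mp hj).1]
            ring
          rw [Finset.sum_congr rfl h2, Finset.sum_add_distrib, ← Finset.mul_sum]
          have h3 : ∑ j ∈ Finset.univ.erase ι, f j * V j = - (f ι * V ι) :=
            eq_neg_of_add_eq_zero_right hsplit0
          have h5 := Finset.add_sum_erase Finset.univ (fun j => f j * c j) (Finset.mem_univ ι)
          rw [show c ι = 0 from hcs ι (by simp only [Set.mem_setOf_eq]; omega), mul_zero,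
            zero_add] at h5
          have h4 : ∑ j ∈ Finset.univ.erase ι, f j * c j = V ι := by
            rw [h5, hceq]
            exact Finset.sum_congr rfl fun j _ => mul_comm _ _
          rw [h3, h4]
          ring
        have hsupp' : ∀ j : Fin M, i ≤ (j : ℕ) → V' j = 0 := by
          intro j hj
          rw [hV']
          dsimp only
          by_cases hjι : j = ι
          · rw [if_pos hjι]
          · have : (j : ℕ) ≠ i := fun h => hjι (Fin.ext h)
            rw [if_neg hjι, hsupp j (by omega), hcs j (by simp only [Set.mem_setOf_eq, hι]; omega), mul_zero, add_zero]
        obtain ⟨W', hW'a, hW'd, hW'b⟩ := ih d hd V' hV'h hV'0 hcyc' hsupp'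
        set C : Fin M → Fin M → MvPolynomial (Fin n) K :=
          fun a b => if b = ι ∧ a ≠ ι then c a else if a = ι ∧ b ≠ ι then - c b else 0 with hC
        refine ⟨fun a b => W' a b + C a b, ?_, ?_, ?_⟩
        · intro a b
          dsimp only
          rw [hW'a a b]
          have : C a b = - C b a := by
            rw [hC]
            dsimp only
            by_cases ha : a = ι <;> by_cases hb : b = ι <;>
              simp [ha, hb] <;> tauto
          rw [this]
          ring
        · intro a
          dsimp only
          rw [hW'd a, show C a a = 0 from by rw [hC]; dsimp only; split <;> tauto, add_zero]
        · intro j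
          dsimp only
          have hsplit : ∑ k, f k * (W' k j + C k j)
              = (∑ k, f k * W' k j) + ∑ k, f k * C k j := by
            rw [← Finset.sum_add_distrib]
            exact Finset.sum_congr rfl fun k _ => by ring
          rw [hsplit, ← hW'b j]
          by_cases hj : j = ι
          · subst hj
            have hCv : ∀ k, f k * C k ι = if k = ι then 0 else f k * c k := by
              intro k
              by_cases hk : k = ι
              · rw [if_pos hk, hk, show C ι ι = 0 from by rw [hC]; dsimp only; split <;> tauto,
                  mul_zero]
              · rw [if_neg hk, show C k ι = c k from by rw [hC]; dsimp only; rw [if_pos ⟨rfl, hk⟩]]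
            rw [Finset.sum_congr rfl fun k _ => hCv k]
            have : ∑ k, (if k = ι then 0 else f k * c k) = ∑ k, f k * c k := by
              apply Finset.sum_congr rfl
              intro k _
              by_cases hk : k = ι
              · rw [if_pos hk, hk, show c ι = 0 from hcs ι (by simp only [Set.mem_setOf_eq]; omega),
                  mul_zero]
              · rw [if_neg hk]
            rw [this, show V' ι = 0 from if_pos rfl, zero_add, hceq]
            exact Finset.sum_congr rfl fun k _ => mul_comm _ _
          · have hCv : ∀ k, f k * C k j = if k = ι then - (f ι * c j) else 0 := by
              intro k
              by_cases hk : k = ι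
              · rw [if_pos hk, hk, show C ι j = - c j from by
                  rw [hC]; dsimp only; rw [if_neg (by tauto), if_pos ⟨rfl, hj⟩]]
                ring
              · rw [if_neg hk, show C k j = 0 from by
                  rw [hC]; dsimp only; rw [if_neg (by tauto), if_neg (by tauto)], mul_zero]
            rw [Finset.sum_congr rfl fun k _ => hCv k, Finset.sum_ite_eq' Finset.univ ι
              (fun _ => - (f ι * c j))]
            rw [if_pos (Finset.mem_univ ι), show V' j = V j + f ι * c j from if_neg hj]
            ring
    · apply ih d hd V hVh hV0 hcyc
      intro j hj
      exact absurd (j.isLt) (by omega)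

theorem dreg_koszul (hhom : ∀ i, (f i).IsHomogeneous (dg i))
    (hreg : GBPaper.IsDRegularSeq f dg (GBPaper.degReg K (Ideal.span (Set.range f))))
    (d : ℕ) (hd : d < GBPaper.degReg K (Ideal.span (Set.range f))) :
    GBPaper.KoszulHVanish f dg 1 d := by
  intro v hch hcyc
  have h1 := (kchain1_iff dg v d).mp hch
  have h2 := (cycle_iff f v).mp hcyc
  obtain ⟨W, hWa, hWd, hWb⟩ := reg_syz_trivial f dg hhom hreg M d hd (fun j => v (sing j))
    (fun j => (h1 j).1) (fun j hj => (h1 j).2 hj) h2 (fun j hj => absurd j.isLt (by omega))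
  refine ⟨chain2 W, ?_⟩
  funext t
  obtain ⟨j, rfl⟩ := kidx1_eq t
  rw [koszulD1_chain2 f W hWa hWd j, ← hWb j]

end Aux


namespace Aux
open MvPolynomial

variable {K : Type*} [Field K] {n M : ℕ}
variable (f : Fin M → MvPolynomial (Fin n) K) (dg : Fin M → ℕ)

theorem vanish_syz (hhom : ∀ i, (f i).IsHomogeneous (dg i)) (hpos : ∀ i, 0 < dg i)
    (hvan : ∀ d, d < GBPaper.degReg K (Ideal.span (Set.range f)) →
      GBPaper.KoszulHVanish f dg 1 d) :
    ∀ (p : ℕ) (d : ℕ), d < GBPaper.degReg K (Ideal.span (Set.range f)) →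
      ∀ V : Fin M → MvPolynomial (Fin n) K,
      (∀ j, (V j).IsHomogeneous (d - dg j)) → (∀ j, d < dg j → V j = 0) →
      (∑ j, f j * V j = 0) → (∀ j : Fin M, M - p ≤ (j : ℕ) → V j = 0) →
      ∃ W : Fin M → Fin M → MvPolynomial (Fin n) K,
        (∀ j k, W j k = - W k j) ∧ (∀ j, W j j = 0) ∧
        (∀ j k, (W j k).IsHomogeneous (d - (dg j + dg k))) ∧
        (∀ j k, d < dg j + dg k → W j k = 0) ∧
        (∀ j, V j = ∑ k, f k * W k j) ∧
        (∀ a b : Fin M, M - p ≤ (a : ℕ) ∨ M - p ≤ (b : ℕ) → W a b = 0) := by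
  classical
  intro p
  induction p with
  | zero =>
    intro d hd V hVh hV0 hcyc hsupp
    obtain ⟨w, hw⟩ := hvan d hd (chain1 V)
      ((kchain1_iff dg _ d).mpr (fun j => by rw [chain1_sing]; exact ⟨hVh j, hV0 j⟩))
      ((cycle_iff f _).mpr (by
        rw [Finset.sum_congr rfl fun j _ => by rw [chain1_sing]]
        exact hcyc))
    have hb0 : ∀ j, V j = ∑ k, f k * Wof w k j := by
      intro j
      have hj := congrFun hw (sing j)
      rw [chain1_sing] at hj
      rw [show w = chain2 (Wof w) from (chain2_Wof w).symm,
        koszulD1_chain2 f (Wof w) (Wof_antisym w) (Wof_diag w) j] at hj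
      exact hj.symm
    obtain ⟨W, hWh, hW0, hWb, hWz, hWa⟩ := extract f dg hhom d V hVh hV0 (Wof w) hb0
    refine ⟨W, fun j k => hWa j k (Wof_antisym w j k), fun j => hWz j j (Wof_diag w j),
      hWh, hW0, hWb, ?_⟩
    intro a b hab
    rcases hab with h | h
    · exact absurd a.isLt (by omega)
    · exact absurd b.isLt (by omega)
  | succ p ih =>
    intro d
    induction d using Nat.strong_induction_on with
    | _ d IHd =>
      intro hd V hVh hV0 hcyc hsupp
      by_cases hMp : M ≤ p
      · obtain ⟨W, hWa, hWd, hWh, hW0, hWb, hWs⟩ :=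
          ih d hd V hVh hV0 hcyc (fun j hj => hsupp j (by omega))
        exact ⟨W, hWa, hWd, hWh, hW0, hWb, fun a b hab => hWs a b (by omega)⟩
      · push_neg at hMp
        set i := M - (p + 1) with hi
        have hiM : i < M := by omega
        set ι : Fin M := ⟨i, hiM⟩ with hι
        have hιv : (ι : ℕ) = i := rfl
        obtain ⟨W, hWa, hWd, hWh, hW0, hWb, hWs⟩ :=
          ih d hd V hVh hV0 hcyc (fun j hj => hsupp j (by omega))
        set U : Fin M → MvPolynomial (Fin n) K := fun k => W k ι with hU
        have hUc : ∑ k, f k * U k = 0 := by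
          rw [show (∑ k, f k * U k) = ∑ k, f k * W k ι from rfl, ← hWb ι]
          exact hsupp ι (by omega)
        have hUh : ∀ k, (U k).IsHomogeneous (d - dg ι - dg k) := by
          intro k
          rw [show d - dg ι - dg k = d - (dg k + dg ι) from by omega]
          exact hWh k ι
        have hU0 : ∀ k, d - dg ι < dg k → U k = 0 := by
          intro k hk
          by_cases hdι : dg ι ≤ d
          · exact hW0 k ι (by omega)
          · exact hW0 k ι (by omega)
        have hUs : ∀ k : Fin M, i ≤ (k : ℕ) → U k = 0 := by
          intro k hk
          by_cases hki : (k : ℕ) = i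
          · rw [hU]
            dsimp only
            rw [show k = ι from Fin.ext hki]
            exact hWd ι
          · exact hWs k ι (Or.inl (by omega))
        obtain ⟨Z, hZa, hZd, hZh, hZ0, hZb, hZs⟩ :
            ∃ Z : Fin M → Fin M → MvPolynomial (Fin n) K,
              (∀ j k, Z j k = - Z k j) ∧ (∀ j, Z j j = 0) ∧
              (∀ j k, (Z j k).IsHomogeneous (d - dg ι - (dg j + dg k))) ∧
              (∀ j k, d - dg ι < dg j + dg k → Z j k = 0) ∧
              (∀ j, U j = ∑ k, f k * Z k j) ∧
              (∀ a b : Fin M, i ≤ (a : ℕ) ∨ i ≤ (b : ℕ) → Z a b = 0) := by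
          by_cases hdι : d < dg ι
          · refine ⟨0, by simp, by simp, by simp [isHomogeneous_zero], by simp, ?_, by simp⟩
            intro j
            have hUj : U j = 0 := hW0 j ι (by omega)
            rw [hUj]
            symm
            apply Finset.sum_eq_zero
            intro k _
            rw [Pi.zero_apply, Pi.zero_apply, mul_zero]
          · push_neg at hdι
            have hd' : d - dg ι < d := by have := hpos ι; omega
            exact IHd (d - dg ι) hd' (by omega) U hUh hU0 hUc
              (fun k hk => hUs k (by omega))
        set Wt : Fin M → Fin M → MvPolynomial (Fin n) K :=
          fun a b => if (a : ℕ) < i ∧ (b : ℕ) < i then W a b - f ι * Z a b else 0 with hWt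
        refine ⟨Wt, ?_, ?_, ?_, ?_, ?_, ?_⟩
        · intro a b
          rw [hWt]
          dsimp only
          by_cases h : (a : ℕ) < i ∧ (b : ℕ) < i
          · rw [if_pos h, if_pos ⟨h.2, h.1⟩, hWa a b, hZa a b]
            ring
          · rw [if_neg h, if_neg (by tauto), neg_zero]
        · intro a
          rw [hWt]
          dsimp only
          split
          · rw [hWd a, hZd a, mul_zero, sub_zero]
          · rfl
        · intro a b
          rw [hWt]
          dsimp only
          split
          · apply (hWh a b).sub
            by_cases hab : dg a + dg b ≤ d - dg ι
            · have hpa := hpos a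
              have hpb := hpos b
              have := (hhom ι).mul (hZh a b)
              rwa [show dg ι + (d - dg ι - (dg a + dg b)) = d - (dg a + dg b) from by omega]
                at this
            · rw [hZ0 a b (by omega), mul_zero]
              exact isHomogeneous_zero _ _ _
          · exact isHomogeneous_zero _ _ _
        · intro a b hab
          rw [hWt]
          dsimp only
          split
          · rw [hW0 a b hab, hZ0 a b (by omega), mul_zero, sub_zero]
          · rfl
        · intro j
          by_cases hj : (j : ℕ) < i
          · have h1 : ∀ k, f k * Wt k j
                = (f k * W k j - f ι * (f k * Z k j))
                  - (if k = ι then f ι * W ι j - f ι * (f ι * Z ι j) else 0) := by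
              intro k
              rw [hWt]
              dsimp only
              by_cases hk : (k : ℕ) < i
              · have hkι : k ≠ ι := fun h => by rw [h] at hk; omega
                rw [if_pos ⟨hk, hj⟩, if_neg hkι]
                ring
              · by_cases hkι : k = ι
                · subst hkι
                  rw [if_neg (by omega), if_pos rfl]
                  ring
                · have hki : (k : ℕ) ≠ i := fun h => hkι (Fin.ext h)
                  rw [if_neg (by omega), if_neg hkι,
                    hWs k j (Or.inl (by omega)), hZs k j (Or.inl (by omega))]
                  ring
            rw [Finset.sum_congr rfl fun k _ => h1 k, Finset.sum_sub_distrib,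
              Finset.sum_sub_distrib, ← Finset.mul_sum,
              Finset.sum_ite_eq' Finset.univ ι
                (fun _ => f ι * W ι j - f ι * (f ι * Z ι j)),
              if_pos (Finset.mem_univ ι), ← hWb j,
              show (∑ k, f k * Z k j) = U j from (hZb j).symm,
              show W ι j = - U j from by rw [hWa ι j],
              show Z ι j = 0 from hZs ι j (Or.inl (by omega))]
            ring
          · rw [hsupp j (by omega)]
            symm
            apply Finset.sum_eq_zero
            intro k _
            rw [hWt]
            dsimp only
            rw [if_neg (by tauto), mul_zero]
        · intro a b hab
          rw [hWt]
          dsimp only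
          rw [if_neg (by omega)]

theorem koszul_dreg (hhom : ∀ i, (f i).IsHomogeneous (dg i)) (hpos : ∀ i, 0 < dg i)
    (hvan : ∀ d, d < GBPaper.degReg K (Ideal.span (Set.range f)) →
      GBPaper.KoszulHVanish f dg 1 d) :
    GBPaper.IsDRegularSeq f dg (GBPaper.degReg K (Ideal.span (Set.range f))) := by
  classical
  intro i g e hg he hmem
  rw [prevIdeal_eq] at hmem ⊢
  have hgf : (g * f i).IsHomogeneous (e + dg i) := hg.mul (hhom i)
  obtain ⟨c, hch, hcs, hc0, hceq⟩ :=
    mem_span_homog f dg hhom {j | (j : ℕ) < (i : ℕ)} hgf hmem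
  set V : Fin M → MvPolynomial (Fin n) K := fun j => if j = i then g else - c j with hV
  have hVh : ∀ j, (V j).IsHomogeneous (e + dg i - dg j) := by
    intro j
    rw [hV]
    dsimp only
    by_cases hj : j = i
    · rw [if_pos hj, hj]
      rw [show e + dg i - dg i = e from by omega]
      exact hg
    · rw [if_neg hj]
      exact (hch j).neg
  have hV0 : ∀ j, e + dg i < dg j → V j = 0 := by
    intro j hjd
    rw [hV]
    dsimp only
    by_cases hj : j = i
    · exfalso
      rw [hj] at hjd
      omega
    · rw [if_neg hj, hc0 j (by omega), neg_zero]
  have hcyc : ∑ j, f j * V j = 0 := by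
    have h1 := Finset.add_sum_erase Finset.univ (fun j => f j * V j) (Finset.mem_univ i)
    rw [← h1, show V i = g from if_pos rfl]
    have h2 : ∀ j ∈ Finset.univ.erase i, f j * V j = - (c j * f j) := by
      intro j hj
      rw [show V j = - c j from if_neg (Finset.mem_erase.mp hj).1]
      ring
    rw [Finset.sum_congr rfl h2, Finset.sum_neg_distrib]
    have h5 := Finset.add_sum_erase Finset.univ (fun j => c j * f j) (Finset.mem_univ i)
    rw [show c i = 0 from hcs i (by simp only [Set.mem_setOf_eq]; omega), zero_mul,
      zero_add] at h5
    rw [h5, ← hceq]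
    ring
  have hsupp : ∀ j : Fin M, M - (M - ((i : ℕ) + 1)) ≤ (j : ℕ) → V j = 0 := by
    intro j hj
    have hiv : (i : ℕ) + 1 ≤ M := i.isLt
    have hj' : (i : ℕ) + 1 ≤ (j : ℕ) := by omega
    rw [hV]
    dsimp only
    rw [if_neg (fun h => by rw [h] at hj'; omega),
      hcs j (by simp only [Set.mem_setOf_eq]; omega), neg_zero]
  obtain ⟨W, hWa, hWd, hWh, hW0, hWb, hWs⟩ := vanish_syz f dg hhom hpos hvan
    (M - ((i : ℕ) + 1)) (e + dg i) he V hVh hV0 hcyc hsupp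
  have hMi : M - (M - ((i : ℕ) + 1)) = (i : ℕ) + 1 := by
    have := i.isLt
    omega
  have hgb : g = ∑ k, f k * W k i := by
    rw [← hWb i, show V i = g from if_pos rfl]
  rw [hgb]
  apply Ideal.sum_mem
  intro k _
  rcases lt_trichotomy ((k : ℕ)) ((i : ℕ)) with hk | hk | hk
  · exact Ideal.mul_mem_right _ _ (Ideal.subset_span ⟨k, hk, rfl⟩)
  · rw [show k = i from Fin.ext hk, hWd i, mul_zero]
    exact Ideal.zero_mem _
  · rw [hWs k i (Or.inl (by omega)), mul_zero]
    exact Ideal.zero_mem _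

end Aux


/-- for homogeneous `f_1,…,f_M` of positive degrees with
`D = d_reg(I) < ∞`, cryptographic semi-regularity is equivalent to vanishing of
the first Koszul homology in all degrees `≤ D - 1`, and also to the Hilbert
series of `R/I` being the truncation `[∏ (1-z^{d_j})/(1-z)^n]`. -/
theorem stmt10 {K : Type*} [Field K] {n M : ℕ}
    (f : Fin M → MvPolynomial (Fin n) K) (dg : Fin M → ℕ)
    (hhom : ∀ i, (f i).IsHomogeneous (dg i)) (hpos : ∀ i, 0 < dg i)
    (hArt : ∃ d : ℕ, ∀ g : MvPolynomial (Fin n) K, g.IsHomogeneous d →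
      g ∈ Ideal.span (Set.range f)) :
    (IsDRegularSeq f dg (degReg K (Ideal.span (Set.range f))) ↔
      ∀ d : ℕ, d ≤ degReg K (Ideal.span (Set.range f)) - 1 →
        KoszulHVanish f dg 1 d) ∧
    (IsDRegularSeq f dg (degReg K (Ideal.span (Set.range f))) ↔
      ∀ t : ℕ, (hilbertFn K (Ideal.span (Set.range f)) t : ℤ) =
        truncCoeff (semiRegSeries n dg) t) := by
  have hD1 : 1 ≤ GBPaper.degReg K (Ideal.span (Set.range f)) :=
    Aux.one_le_degReg f dg hhom hpos hArt
  constructor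
  · constructor
    · intro hreg d hd
      exact Aux.dreg_koszul f dg hhom hreg d (by omega)
    · intro hvan
      exact Aux.koszul_dreg f dg hhom hpos (fun d hd => hvan d (by omega))
  · exact Aux.second_iff f dg hhom hpos hArt
end

section
/- Let F = {f_1,...,f_m} ⊂ R = K[x_1,...,x_n] with F^top generating an ideal of finite degree of regularity D, let F^h ⊂ R' = R[y] be the homogenization, and let S_0 be the saturation exponent of ⟨F^h⟩ with respect to y, i.e., the minimal s with (⟨F^h⟩ : y^s) = (⟨F^h⟩ : y^∞). Assume F^top is cryptographic semi-regular. Then the generalized degree of regularity of ⟨F^h⟩ is at most D + S_0. -/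
set_option maxHeartbeats 1000000
set_option synthInstance.maxHeartbeats 1000000


open MvPolynomial

namespace GBPaper

open MvPolynomial Finsupp

section Aux

variable {K : Type*} [Field K] {n : ℕ}

/-! ### Basic `Finsupp` degree facts -/

lemma aux_degree_single {σ : Type*} (i : σ) (k : ℕ) :
    (Finsupp.single i k).degree = k := by
  classical
  rcases eq_or_ne k 0 with rfl | hk
  · simp [Finsupp.degree]
  · simp [Finsupp.degree_apply, Finsupp.support_single_ne_zero _ hk]

lemma aux_degree_add {σ : Type*} (a b : σ →₀ ℕ) :
    (a + b).degree = a.degree + b.degree := by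
  simp only [Finsupp.degree_eq_weight_one, map_add]

lemma aux_isHom_iff {σ : Type*} (p : MvPolynomial σ K) (e : ℕ) :
    p.IsHomogeneous e ↔ ∀ d, MvPolynomial.coeff d p ≠ 0 → d.degree = e := by
  simp only [MvPolynomial.IsHomogeneous, MvPolynomial.IsWeightedHomogeneous,
    Finsupp.degree_eq_weight_one]
  exact Iff.rfl

/-! ### `extX`, `restr`, `topPartR` -/

lemma aux_extX_castSucc (a : Fin n →₀ ℕ) (j : Fin n) :
    extX a j.castSucc = a j := by
  simpa [extX] using Finsupp.embDomain_apply_self Fin.castSuccEmb a j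

lemma aux_extX_last (a : Fin n →₀ ℕ) : extX a (Fin.last n) = 0 := by
  refine Finsupp.embDomain_notin_range _ _ _ ?_
  simp only [Set.mem_range, not_exists]
  intro j h
  exact (Fin.castSucc_lt_last j).ne h

lemma aux_restr_extX (a : Fin n →₀ ℕ) : restr (extX a) = a := by
  ext j
  simp [restr, aux_extX_castSucc]

lemma aux_extX_restr {u : Fin (n + 1) →₀ ℕ} (hu : u (Fin.last n) = 0) :
    extX (restr u) = u := by
  ext i
  induction i using Fin.lastCases with
  | last => rw [aux_extX_last, hu]
  | cast j => rw [aux_extX_castSucc]; simp [restr]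

lemma aux_extX_degree (a : Fin n →₀ ℕ) : (extX a).degree = a.degree := by
  classical
  simp only [Finsupp.degree_apply, extX, Finsupp.support_embDomain, Finset.sum_map]
  refine Finset.sum_congr rfl fun j _ => ?_
  exact Finsupp.embDomain_apply_self _ _ _

lemma aux_monomial_extX (a : Fin n →₀ ℕ) (c : K) :
    (MvPolynomial.monomial (extX a) c : MvPolynomial (Fin (n + 1)) K) =
      MvPolynomial.rename Fin.castSucc (MvPolynomial.monomial a c) := by
  rw [MvPolynomial.rename_monomial, extX, Finsupp.embDomain_eq_mapDomain]
  rfl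

lemma aux_topPartR_sum {ι : Type*} (t : Finset ι) (g : ι → MvPolynomial (Fin (n + 1)) K) :
    topPartR (∑ i ∈ t, g i) = ∑ i ∈ t, topPartR (g i) :=
  map_sum (MvPolynomial.aeval _) g t

lemma aux_topPartR_mul (a b : MvPolynomial (Fin (n + 1)) K) :
    topPartR (a * b) = topPartR a * topPartR b :=
  map_mul (MvPolynomial.aeval _) a b

lemma aux_topPartR_add (a b : MvPolynomial (Fin (n + 1)) K) :
    topPartR (a + b) = topPartR a + topPartR b :=
  map_add (MvPolynomial.aeval _) a b

lemma aux_topPartR_sub (a b : MvPolynomial (Fin (n + 1)) K) :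
    topPartR (a - b) = topPartR a - topPartR b :=
  map_sub (MvPolynomial.aeval _) a b

lemma aux_topPartR_rename (p : MvPolynomial (Fin n) K) :
    topPartR (MvPolynomial.rename Fin.castSucc p) = p := by
  rw [topPartR, MvPolynomial.aeval_rename]
  have : (Fin.lastCases 0 (fun i => (MvPolynomial.X i : MvPolynomial (Fin n) K))) ∘
      Fin.castSucc = fun j => (MvPolynomial.X j : MvPolynomial (Fin n) K) := by
    funext j
    simp [Function.comp]
  rw [this, MvPolynomial.aeval_X_left_apply]

lemma aux_topPartR_monomial (u : Fin (n + 1) →₀ ℕ) (c : K) :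
    topPartR (MvPolynomial.monomial u c) =
      if u (Fin.last n) = 0 then MvPolynomial.monomial (restr u) c else 0 := by
  classical
  by_cases hu : u (Fin.last n) = 0
  · rw [if_pos hu, ← aux_extX_restr hu, aux_monomial_extX, aux_topPartR_rename,
      aux_restr_extX]
  · rw [if_neg hu, topPartR, MvPolynomial.aeval_monomial]
    have hmem : Fin.last n ∈ u.support := Finsupp.mem_support_iff.mpr hu
    rw [Finsupp.prod, Finset.prod_eq_zero hmem (by simp [zero_pow hu]), mul_zero]

lemma aux_coeff_topPartR (w : MvPolynomial (Fin (n + 1)) K) (s : Fin n →₀ ℕ) :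
    MvPolynomial.coeff s (topPartR w) = MvPolynomial.coeff (extX s) w := by
  classical
  induction w using MvPolynomial.induction_on' with
  | add p q hp hq => rw [aux_topPartR_add, MvPolynomial.coeff_add, MvPolynomial.coeff_add, hp, hq]
  | monomial u c =>
    rw [aux_topPartR_monomial]
    by_cases hu : u (Fin.last n) = 0
    · rw [if_pos hu, MvPolynomial.coeff_monomial, MvPolynomial.coeff_monomial]
      by_cases h : restr u = s
      · rw [if_pos h, if_pos (by rw [← h, aux_extX_restr hu])]
      · rw [if_neg h, if_neg (fun hc => h (by rw [hc, aux_restr_extX]))]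
    · rw [if_neg hu, MvPolynomial.coeff_zero, MvPolynomial.coeff_monomial,
        if_neg (fun hc => hu (by rw [hc, aux_extX_last]))]

lemma aux_topPartR_isHomogeneous {w : MvPolynomial (Fin (n + 1)) K} {e : ℕ}
    (hw : w.IsHomogeneous e) : (topPartR w).IsHomogeneous e := by
  have := hw.aeval (Fin.lastCases 0 fun i => (MvPolynomial.X i : MvPolynomial (Fin n) K))
    (n := 1) ?_
  · simpa [topPartR] using this
  · intro i
    induction i using Fin.lastCases with
    | last => simpa using (MvPolynomial.isHomogeneous_zero (Fin n) K 1)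
    | cast j => simpa using MvPolynomial.isHomogeneous_X K (σ := Fin n) j

/-! ### `homog` -/

lemma aux_homog_isHomogeneous (p : MvPolynomial (Fin n) K) :
    (homog p).IsHomogeneous p.totalDegree := by
  refine MvPolynomial.IsHomogeneous.sum _ _ _ fun s hs => ?_
  refine MvPolynomial.isHomogeneous_monomial _ ?_
  rw [aux_degree_add, aux_extX_degree, aux_degree_single]
  have hle : s.degree ≤ p.totalDegree := by
    simpa [Finsupp.degree_apply, Finsupp.sum] using MvPolynomial.le_totalDegree hs
  omega

lemma aux_topPartR_homog (p : MvPolynomial (Fin n) K) :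
    topPartR (homog p) = topPart p := by
  classical
  rw [homog, aux_topPartR_sum, topPart, MvPolynomial.homogeneousComponent_apply,
    Finset.sum_filter]
  refine Finset.sum_congr rfl fun s hs => ?_
  have hle : s.degree ≤ p.totalDegree := by
    simpa [Finsupp.degree_apply, Finsupp.sum] using MvPolynomial.le_totalDegree hs
  have key : (MvPolynomial.monomial
      (extX s + Finsupp.single (Fin.last n) (p.totalDegree - s.degree))
      (MvPolynomial.coeff s p) : MvPolynomial (Fin (n+1)) K) =
      MvPolynomial.monomial (extX s) (MvPolynomial.coeff s p) *
        MvPolynomial.monomial (Finsupp.single (Fin.last n) (p.totalDegree - s.degree)) 1 := by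
    rw [MvPolynomial.monomial_mul, mul_one]
  rw [key, aux_topPartR_mul, aux_topPartR_monomial, aux_topPartR_monomial,
    if_pos (aux_extX_last s), aux_restr_extX]
  by_cases hd : s.degree = p.totalDegree
  · rw [if_pos hd]
    have h0 : p.totalDegree - s.degree = 0 := by omega
    rw [h0]
    have h1 : (Finsupp.single (Fin.last n) 0 : Fin (n + 1) →₀ ℕ) = 0 :=
      Finsupp.single_zero _
    have h2 : restr (0 : Fin (n + 1) →₀ ℕ) = 0 := by
      ext j; simp [restr]
    rw [h1]
    simp [h2]
  · rw [if_neg hd]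
    have h2 : (Finsupp.single (Fin.last n) (p.totalDegree - s.degree)) (Fin.last n) ≠ 0 := by
      simp only [Finsupp.single_eq_same]
      omega
    rw [if_neg h2, mul_zero]

lemma aux_homogeneousComponent_mul {σ : Type*} (a t : MvPolynomial σ K) {m : ℕ}
    (ht : t.IsHomogeneous m) (e : ℕ) :
    MvPolynomial.homogeneousComponent e (a * t) =
      if m ≤ e then MvPolynomial.homogeneousComponent (e - m) a * t else 0 := by
  classical
  conv_lhs => rw [← MvPolynomial.sum_homogeneousComponent a, Finset.sum_mul, map_sum]
  have hterm : ∀ k, MvPolynomial.homogeneousComponent e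
      (MvPolynomial.homogeneousComponent k a * t) =
      if k = e - m ∧ m ≤ e then MvPolynomial.homogeneousComponent k a * t else 0 := by
    intro k
    have hk : (MvPolynomial.homogeneousComponent k a * t).IsHomogeneous (k + m) :=
      (MvPolynomial.homogeneousComponent_isHomogeneous k a).mul ht
    rw [MvPolynomial.homogeneousComponent_of_mem
      ((MvPolynomial.mem_homogeneousSubmodule _ _).mpr hk)]
    by_cases hke : e = k + m
    · rw [if_pos hke, if_pos (by omega)]
    · rw [if_neg hke, if_neg (by omega)]
  simp_rw [hterm]
  by_cases hm : m ≤ e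
  · simp_rw [and_iff_left hm]
    rw [Finset.sum_ite_eq' (Finset.range (a.totalDegree + 1)) (e - m)
      (fun k => MvPolynomial.homogeneousComponent k a * t), if_pos hm]
    by_cases hin : e - m ∈ Finset.range (a.totalDegree + 1)
    · rw [if_pos hin]
    · rw [if_neg hin,
        MvPolynomial.homogeneousComponent_eq_zero _ _
          (by simp only [Finset.mem_range] at hin; omega),
        zero_mul]
  · rw [if_neg hm]
    exact Finset.sum_eq_zero fun k _ => if_neg (by omega)

lemma aux_mem_of_isHomogeneous_ge {J : Ideal (MvPolynomial (Fin n) K)} {D : ℕ}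
    (hD : ∀ p : MvPolynomial (Fin n) K, p.IsHomogeneous D → p ∈ J) :
    ∀ e, D ≤ e → ∀ p : MvPolynomial (Fin n) K, p.IsHomogeneous e → p ∈ J := by
  intro e he
  induction e, he using Nat.le_induction with
  | base => exact hD
  | succ e _ IH =>
    intro p hp
    rw [← p.support_sum_monomial_coeff]
    refine Ideal.sum_mem _ fun u hu => ?_
    have hne : MvPolynomial.coeff u p ≠ 0 := MvPolynomial.mem_support_iff.mp hu
    have hdeg : u.degree = e + 1 := (aux_isHom_iff p (e + 1)).mp hp u hne
    have hu0 : u ≠ 0 := by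
      intro h0
      rw [h0, map_zero] at hdeg
      omega
    obtain ⟨j, hj⟩ : ∃ j, u j ≠ 0 := by
      by_contra hall
      push_neg at hall
      exact hu0 (Finsupp.ext hall)
    have hle : Finsupp.single j 1 ≤ u := Finsupp.single_le_iff.mpr (by omega)
    have hsub : u - Finsupp.single j 1 + Finsupp.single j 1 = u := tsub_add_cancel_of_le hle
    have hdeg' : (u - Finsupp.single j 1).degree = e := by
      have h2 := aux_degree_add (u - Finsupp.single j 1) (Finsupp.single j 1)
      rw [hsub, aux_degree_single, hdeg] at h2
      omega
    have hmem : MvPolynomial.monomial (u - Finsupp.single j 1)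
        (MvPolynomial.coeff u p) ∈ J :=
      IH _ (MvPolynomial.isHomogeneous_monomial _ hdeg')
    have heq : (MvPolynomial.monomial u (MvPolynomial.coeff u p)) =
        MvPolynomial.monomial (u - Finsupp.single j 1) (MvPolynomial.coeff u p) *
          MvPolynomial.X j := by
      rw [MvPolynomial.X, MvPolynomial.monomial_mul, hsub, mul_one]
    rw [heq]
    exact Ideal.mul_mem_right _ _ hmem

lemma aux_stepA {M : ℕ} (f : Fin M → MvPolynomial (Fin n) K) (dg : Fin M → ℕ)
    (hdeg : ∀ i, (f i).totalDegree = dg i) {e : ℕ}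
    (h : MvPolynomial (Fin (n + 1)) K) (hh : h.IsHomogeneous e)
    (hmem : ∀ p : MvPolynomial (Fin n) K, p.IsHomogeneous e →
      p ∈ Ideal.span (Set.range fun i => topPart (f i))) :
    ∃ g : MvPolynomial (Fin (n + 1)) K, g.IsHomogeneous (e - 1) ∧
      h - yvar K n * g ∈ Ideal.span (Set.range fun i => homog (f i)) := by
  classical
  set I := Ideal.span (Set.range fun i => homog (f i)) with hI
  have ht : ∀ i, (topPart (f i)).IsHomogeneous (dg i) := fun i =>
    hdeg i ▸ MvPolynomial.homogeneousComponent_isHomogeneous _ _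
  have hhomog : ∀ i, (homog (f i)).IsHomogeneous (dg i) := fun i =>
    hdeg i ▸ aux_homog_isHomogeneous (f i)
  obtain ⟨a, ha⟩ := Ideal.mem_span_range_iff_exists_fun.mp
    (hmem (topPartR h) (aux_topPartR_isHomogeneous hh))
  set b : Fin M → MvPolynomial (Fin n) K := fun i =>
    if dg i ≤ e then MvPolynomial.homogeneousComponent (e - dg i) (a i) else 0 with hb
  have hbhom : ∀ i, (b i).IsHomogeneous (e - dg i) := fun i => by
    rw [hb]
    dsimp only
    split
    · exact MvPolynomial.homogeneousComponent_isHomogeneous _ _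
    · exact MvPolynomial.isHomogeneous_zero _ _ _
  have key : topPartR h = ∑ i, b i * topPart (f i) := by
    have h1 : MvPolynomial.homogeneousComponent e (topPartR h) = topPartR h := by
      rw [MvPolynomial.homogeneousComponent_of_mem
        ((MvPolynomial.mem_homogeneousSubmodule _ _).mpr (aux_topPartR_isHomogeneous hh)),
        if_pos rfl]
    calc topPartR h = MvPolynomial.homogeneousComponent e (∑ i, a i * topPart (f i)) := by
          rw [ha, h1]
      _ = ∑ i, MvPolynomial.homogeneousComponent e (a i * topPart (f i)) := map_sum _ _ _
      _ = ∑ i, b i * topPart (f i) := by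
          refine Finset.sum_congr rfl fun i _ => ?_
          rw [aux_homogeneousComponent_mul _ _ (ht i), hb]
          dsimp only
          split
          · rfl
          · rw [zero_mul]
  set w := h - ∑ i, MvPolynomial.rename Fin.castSucc (b i) * homog (f i) with hw
  have hwI : h - w ∈ I := by
    rw [hw, sub_sub_cancel]
    exact Ideal.sum_mem _ fun i _ => Ideal.mul_mem_left _ _ (Ideal.subset_span ⟨i, rfl⟩)
  have hwhom : w.IsHomogeneous e := by
    refine hh.sub (MvPolynomial.IsHomogeneous.sum _ _ _ fun i _ => ?_)
    by_cases hi : dg i ≤ e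
    · have h2 := ((hbhom i).rename_isHomogeneous (f := Fin.castSucc)).mul (hhomog i)
      rwa [Nat.sub_add_cancel hi] at h2
    · have hb0 : b i = 0 := by rw [hb]; simp [hi]
      rw [hb0, map_zero, zero_mul]
      exact MvPolynomial.isHomogeneous_zero _ _ _
  have hφw : topPartR w = 0 := by
    rw [hw, aux_topPartR_sub, aux_topPartR_sum,
      Finset.sum_congr rfl (fun i (_ : i ∈ Finset.univ) => by
        rw [aux_topPartR_mul, aux_topPartR_rename, aux_topPartR_homog]),
      ← key, sub_self]
  have hcoeff : ∀ u : Fin (n + 1) →₀ ℕ, u (Fin.last n) = 0 →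
      MvPolynomial.coeff u w = 0 := by
    intro u hu
    have h2 := aux_coeff_topPartR w (restr u)
    rw [aux_extX_restr hu, hφw, MvPolynomial.coeff_zero] at h2
    exact h2.symm
  set g := w.divMonomial (Finsupp.single (Fin.last n) 1) with hg
  have hmod : w.modMonomial (Finsupp.single (Fin.last n) 1) = 0 := by
    ext u
    rw [MvPolynomial.coeff_zero]
    by_cases hle : Finsupp.single (Fin.last n) 1 ≤ u
    · exact MvPolynomial.coeff_modMonomial_of_le _ hle
    · rw [MvPolynomial.coeff_modMonomial_of_not_le _ hle]
      refine hcoeff u ?_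
      by_contra h0
      exact hle (Finsupp.single_le_iff.mpr (by omega))
  have hwyg : w = yvar K n * g := by
    have h2 := MvPolynomial.divMonomial_add_modMonomial w (Finsupp.single (Fin.last n) 1)
    rw [hmod, add_zero] at h2
    rw [← h2, hg, yvar, MvPolynomial.X]
  have hghom : g.IsHomogeneous (e - 1) := by
    rw [aux_isHom_iff]
    intro u hu
    rw [hg, MvPolynomial.coeff_divMonomial] at hu
    have h3 := (aux_isHom_iff w e).mp hwhom _ hu
    rw [aux_degree_add, aux_degree_single] at h3
    omega
  exact ⟨g, hghom, by rw [← hwyg]; exact hwI⟩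

lemma aux_stepL {M : ℕ} (f : Fin M → MvPolynomial (Fin n) K) (dg : Fin M → ℕ)
    (hdeg : ∀ i, (f i).totalDegree = dg i) {D : ℕ}
    (hJ : ∀ e, D ≤ e → ∀ p : MvPolynomial (Fin n) K, p.IsHomogeneous e →
      p ∈ Ideal.span (Set.range fun i => topPart (f i))) :
    ∀ k e (h : MvPolynomial (Fin (n + 1)) K), h.IsHomogeneous e → D + k ≤ e →
      ∃ g : MvPolynomial (Fin (n + 1)) K, g.IsHomogeneous (e - k) ∧
        h - yvar K n ^ k * g ∈ Ideal.span (Set.range fun i => homog (f i)) := by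
  intro k
  induction k with
  | zero =>
    intro e h hh _
    exact ⟨h, by simpa using hh, by simp⟩
  | succ k IH =>
    intro e h hh hke
    obtain ⟨g', hg', hmem'⟩ := IH e h hh (by omega)
    obtain ⟨g'', hg'', hmem''⟩ := aux_stepA f dg hdeg g' hg' (hJ (e - k) (by omega))
    refine ⟨g'', by
      have : e - k - 1 = e - (k + 1) := by omega
      rwa [this] at hg'', ?_⟩
    have heq : h - yvar K n ^ (k + 1) * g'' =
        (h - yvar K n ^ k * g') + yvar K n ^ k * (g' - yvar K n * g'') := by
      ring
    rw [heq]
    exact Ideal.add_mem _ hmem' (Ideal.mul_mem_left _ _ hmem'')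

lemma aux_sat_exists {M : ℕ} (f : Fin M → MvPolynomial (Fin n) K) :
    ∃ s : ℕ, ∀ g : MvPolynomial (Fin (n + 1)) K,
      (∃ k : ℕ, yvar K n ^ k * g ∈ Ideal.span (Set.range fun i => homog (f i))) →
        yvar K n ^ s * g ∈ Ideal.span (Set.range fun i => homog (f i)) := by
  classical
  set I := Ideal.span (Set.range fun i => homog (f i)) with hI
  have hmemC : ∀ (k : ℕ) (g : MvPolynomial (Fin (n + 1)) K),
      g ∈ I.colon (Ideal.span {yvar K n ^ k}) ↔ yvar K n ^ k * g ∈ I := by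
    intro k g
    rw [Ideal.mem_colon_span_singleton, mul_comm]
  set C : ℕ →o Submodule (MvPolynomial (Fin (n + 1)) K) (MvPolynomial (Fin (n + 1)) K) :=
    ⟨fun k => I.colon (Ideal.span {yvar K n ^ k}),
      by
        intro k l hkl
        induction l, hkl using Nat.le_induction with
        | base => exact le_rfl
        | succ l _ IH =>
          refine le_trans IH fun x hx => ?_
          simp only [Set.mem_setOf_eq] at hx ⊢
          rw [hmemC] at hx ⊢
          rw [pow_succ, mul_comm (yvar K n ^ l) (yvar K n), mul_assoc]
          exact Ideal.mul_mem_left _ _ hx⟩ with hC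
  obtain ⟨s, hs⟩ := monotone_stabilizes_iff_noetherian.mpr inferInstance C
  refine ⟨s, fun g hg => ?_⟩
  obtain ⟨k, hk⟩ := hg
  have hgC : g ∈ C k := (hmemC k g).mpr hk
  have hgs : g ∈ C s := by
    rcases le_total k s with hks | hsk
    · exact C.monotone hks hgC
    · rw [hs k hsk]
      exact hgC
  exact (hmemC s g).mp hgs

lemma aux_hilbert_step (I : Ideal (MvPolynomial (Fin (n + 1)) K)) (e : ℕ)
    (hsurj : ∀ h : MvPolynomial (Fin (n + 1)) K, h.IsHomogeneous (e + 1) →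
      ∃ g : MvPolynomial (Fin (n + 1)) K, g.IsHomogeneous e ∧ h - yvar K n * g ∈ I)
    (hinj : ∀ g : MvPolynomial (Fin (n + 1)) K, g.IsHomogeneous e →
      yvar K n * g ∈ I → g ∈ I) :
    hilbertFn K I (e + 1) = hilbertFn K I e := by
  classical
  let q := (Ideal.Quotient.mkₐ K I).toLinearMap
  let μ := LinearMap.mulLeft K (Ideal.Quotient.mkₐ K I (yvar K n))
  have hcomm : ∀ p : MvPolynomial (Fin (n + 1)) K, q (yvar K n * p) = μ (q p) := by
    intro p
    show Ideal.Quotient.mkₐ K I (yvar K n * p) =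
      Ideal.Quotient.mkₐ K I (yvar K n) * Ideal.Quotient.mkₐ K I p
    rw [map_mul]
  have hmaps : ∀ x ∈ (MvPolynomial.homogeneousSubmodule (Fin (n + 1)) K e).map q,
      μ x ∈ (MvPolynomial.homogeneousSubmodule (Fin (n + 1)) K (e + 1)).map q := by
    rintro x hx
    obtain ⟨h, hh, rfl⟩ := Submodule.mem_map.mp hx
    refine Submodule.mem_map.mpr ⟨yvar K n * h, ?_, (hcomm h).symm⟩
    rw [MvPolynomial.mem_homogeneousSubmodule] at hh ⊢
    have h2 := (MvPolynomial.isHomogeneous_X K (Fin.last n)).mul hh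
    rwa [Nat.add_comm 1 e] at h2
  have hbij : Function.Bijective (μ.restrict hmaps) := by
    constructor
    · rw [injective_iff_map_eq_zero]
      intro x hx0
      obtain ⟨h, hh, hqh⟩ := Submodule.mem_map.mp x.2
      have hval : μ x.1 = 0 := congrArg Subtype.val hx0
      have hyh : yvar K n * h ∈ I := by
        rw [← Ideal.Quotient.eq_zero_iff_mem]
        have h3 : q (yvar K n * h) = 0 := by rw [hcomm, hqh, hval]
        exact h3
      have hhI : h ∈ I := hinj h ((MvPolynomial.mem_homogeneousSubmodule _ _).mp hh) hyh
      have hx1 : x.1 = 0 := by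
        rw [← hqh]
        exact Ideal.Quotient.eq_zero_iff_mem.mpr hhI
      exact Subtype.ext hx1
    · intro z
      obtain ⟨h, hh, hqh⟩ := Submodule.mem_map.mp z.2
      obtain ⟨g, hg, hsub⟩ := hsurj h ((MvPolynomial.mem_homogeneousSubmodule _ _).mp hh)
      refine ⟨⟨q g, Submodule.mem_map.mpr ⟨g, hg, rfl⟩⟩, ?_⟩
      apply Subtype.ext
      have hval : ((μ.restrict hmaps) ⟨q g, Submodule.mem_map.mpr ⟨g, hg, rfl⟩⟩ : _) =
        μ (q g) := rfl
      rw [hval, ← hcomm]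
      have h4 : q (yvar K n * g) = q h := by
        show Ideal.Quotient.mk I (yvar K n * g) = Ideal.Quotient.mk I h
        exact Ideal.Quotient.eq.mpr (by simpa using I.neg_mem hsub)
      rw [h4, hqh]
  rw [hilbertFn, hilbertFn]
  exact (LinearEquiv.finrank_eq (LinearEquiv.ofBijective (μ.restrict hmaps) hbij)).symm

end Aux

end GBPaper

open GBPaper

/-- if `F^top` is cryptographic semi-regular with
`D = d_reg(⟨F^top⟩) < ∞` and `S₀` is the saturation exponent of `⟨F^h⟩` with
respect to `y`, then the Hilbert function of `R'/⟨F^h⟩` is constant from degree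
`D + S₀` on (i.e. the generalized degree of regularity of `⟨F^h⟩` is `≤ D + S₀`). -/
theorem stmt13 {K : Type*} [Field K] {n M : ℕ}
    (f : Fin M → MvPolynomial (Fin n) K) (dg : Fin M → ℕ)
    (hdeg : ∀ i, (f i).totalDegree = dg i) (hpos : ∀ i, 0 < dg i)
    (hArt : ∃ d : ℕ, ∀ g : MvPolynomial (Fin n) K, g.IsHomogeneous d →
      g ∈ Ideal.span (Set.range fun i => topPart (f i)))
    (hcsr : IsDRegularSeq (fun i => topPart (f i)) dg
      (degReg K (Ideal.span (Set.range fun i => topPart (f i)))))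
    (S₀ : ℕ)
    (hS₀ : S₀ = sInf {s : ℕ | ∀ g : MvPolynomial (Fin (n + 1)) K,
      (∃ k : ℕ, yvar K n ^ k * g ∈ Ideal.span (Set.range fun i => homog (f i))) →
        yvar K n ^ s * g ∈ Ideal.span (Set.range fun i => homog (f i))}) :
    ∀ d : ℕ,
      degReg K (Ideal.span (Set.range fun i => topPart (f i))) + S₀ ≤ d →
      hilbertFn K (Ideal.span (Set.range fun i => homog (f i))) d =
        hilbertFn K (Ideal.span (Set.range fun i => homog (f i)))
          (degReg K (Ideal.span (Set.range fun i => topPart (f i))) + S₀) := by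
  classical
  intro d hd
  set J := Ideal.span (Set.range fun i => topPart (f i)) with hJdef
  set I := Ideal.span (Set.range fun i => homog (f i)) with hIdef
  set D := degReg K J with hDdef
  have hDmem : ∀ p : MvPolynomial (Fin n) K, p.IsHomogeneous D → p ∈ J := by
    rw [hDdef, degReg]
    exact Nat.sInf_mem hArt
  have hJall := aux_mem_of_isHomogeneous_ge hDmem
  have hS₀prop : ∀ g : MvPolynomial (Fin (n + 1)) K,
      (∃ k, yvar K n ^ k * g ∈ I) → yvar K n ^ S₀ * g ∈ I := by
    rw [hS₀]
    exact Nat.sInf_mem (aux_sat_exists f)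
  have hinj : ∀ e, D + S₀ ≤ e → ∀ g : MvPolynomial (Fin (n + 1)) K, g.IsHomogeneous e →
      yvar K n * g ∈ I → g ∈ I := by
    intro e he g hg hyg
    obtain ⟨g', hg', hmem'⟩ := aux_stepL f dg hdeg hJall S₀ e g hg (by omega)
    have h1 : yvar K n ^ (S₀ + 1) * g' ∈ I := by
      have heq : yvar K n ^ (S₀ + 1) * g' =
          yvar K n * g - yvar K n * (g - yvar K n ^ S₀ * g') := by ring
      rw [heq]
      exact Ideal.sub_mem _ hyg (Ideal.mul_mem_left _ _ hmem')
    have h2 : yvar K n ^ S₀ * g' ∈ I := hS₀prop g' ⟨S₀ + 1, h1⟩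
    have heq2 : g = (g - yvar K n ^ S₀ * g') + yvar K n ^ S₀ * g' := by ring
    rw [heq2]
    exact Ideal.add_mem _ hmem' h2
  have hstep : ∀ e, D + S₀ ≤ e → hilbertFn K I (e + 1) = hilbertFn K I e := by
    intro e he
    refine aux_hilbert_step I e ?_ ?_
    · intro h hh
      obtain ⟨g, hg, hsub⟩ := aux_stepA f dg hdeg h hh (hJall (e + 1) (by omega))
      rw [Nat.add_sub_cancel] at hg
      exact ⟨g, hg, hsub⟩
    · intro g hg hyg
      exact hinj e he g hg hyg
  induction d, hd using Nat.le_induction with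
  | base => rfl
  | succ d hd IH => rw [hstep d hd, IH]
end
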